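/- arXiv:2306.17731 — 3 statements merged into one kernel-verified Lean document; each statement's English description precedes it below -/
import Mathlib

section
/- Let M be either the closed interval [0,1] or the circle. If u is an absolutely continuous real-valued function on M and (φ_n) is a sequence of orientation-preserving C^1 diffeomorphisms of M converging to the identity in the C^1 topology, then the total variation var(u∘φ_n − u) converges to 0 as n → ∞. -/
open Set MeasureTheory Filter Topology

noncomputable section

/-- An orientation-preserving `C¹` diffeomorphism of the interval `[0,1]`, recorded together
with its derivative, and extended by the identity outside of `[0,1]`. -/
structure C1Diffeo : Type where
  toFun : ℝ → ℝ
  derivFun : ℝ → ℝ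
  map_zero : toFun 0 = 0
  map_one : toFun 1 = 1
  fixes_outside : ∀ x : ℝ, x ∉ Icc (0:ℝ) 1 → toFun x = x
  bijOn : BijOn toFun (Icc (0:ℝ) 1) (Icc (0:ℝ) 1)
  hasDeriv : ∀ x ∈ Icc (0:ℝ) 1, HasDerivWithinAt toFun (derivFun x) (Icc (0:ℝ) 1) x
  derivFun_cont : ContinuousOn derivFun (Icc (0:ℝ) 1)
  derivFun_pos : ∀ x ∈ Icc (0:ℝ) 1, 0 < derivFun x

/-- A lift of an orientation-preserving `C¹` diffeomorphism of the circle `ℝ/ℤ`,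
recorded together with its derivative. -/
structure CircC1 : Type where
  toFun : ℝ → ℝ
  derivFun : ℝ → ℝ
  commT : ∀ x : ℝ, toFun (x + 1) = toFun x + 1
  hasDeriv : ∀ x : ℝ, HasDerivAt toFun (derivFun x) x
  derivFun_cont : Continuous derivFun
  derivFun_pos : ∀ x : ℝ, 0 < derivFun x

/-- The uniform (`C⁰`) distance over `[0,1]`. -/
def supDist01 (f g : ℝ → ℝ) : ℝ := ⨆ x : Icc (0:ℝ) 1, |f (x : ℝ) - g (x : ℝ)|

/-- The uniform (`C⁰`) distance between two circle maps given by lifts. -/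
def supDistCirc (f g : ℝ → ℝ) : ℝ :=
  ⨅ k : ℤ, ⨆ x : Icc (0:ℝ) 1, |f (x : ℝ) - (g (x : ℝ) + (k : ℝ))|


lemma le_iSup_Icc {F : (Icc (0:ℝ) 1) → ℝ} (hF : Continuous F) (x : Icc (0:ℝ) 1) :
    F x ≤ ⨆ y, F y :=
  le_ciSup (isCompact_range hF).bddAbove x

lemma key_bound (Du g ψ ψ' : ℝ → ℝ) (C : ℝ)
    (hg : Continuous g)
    (hψd : ∀ x ∈ Icc (0:ℝ) 1, HasDerivWithinAt ψ (ψ' x) (Icc (0:ℝ) 1) x)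
    (hψ'c : ContinuousOn ψ' (Icc (0:ℝ) 1))
    (hψ'pos : ∀ x ∈ Icc (0:ℝ) 1, 0 < ψ' x)
    (hψc : ContinuousOn ψ (Icc (0:ℝ) 1))
    (hinj : InjOn ψ (Icc (0:ℝ) 1))
    (himg : ψ '' Icc (0:ℝ) 1 = Icc (ψ 0) (ψ 0 + 1))
    (hDuint : IntegrableOn Du (Icc (ψ 0) (ψ 0 + 1)))
    (hDuint0 : IntegrableOn Du (Icc (0:ℝ) 1))
    (hq : ∀ x ∈ Icc (0:ℝ) 1, |g (ψ x) * ψ' x - g x| ≤ C) :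
    ∫ x in Icc (0:ℝ) 1, |Du (ψ x) * ψ' x - Du x|
      ≤ (∫ x in Icc (ψ 0) (ψ 0 + 1), |Du x - g x|)
        + C + ∫ x in Icc (0:ℝ) 1, |Du x - g x| := by
  set H : ℝ → ℝ := fun x => |Du x - g x| with hH
  have hHint1 : IntegrableOn H (Icc (ψ 0) (ψ 0 + 1)) := (hDuint.sub hg.integrableOn_Icc).abs
  have hHint0 : IntegrableOn H (Icc (0:ℝ) 1) := (hDuint0.sub hg.integrableOn_Icc).abs
  have hHimg : IntegrableOn H (ψ '' Icc (0:ℝ) 1) := by rw [himg]; exact hHint1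
  have hDuimg : IntegrableOn Du (ψ '' Icc (0:ℝ) 1) := by rw [himg]; exact hDuint
  have int_p' : IntegrableOn (fun x => |ψ' x| • H (ψ x)) (Icc (0:ℝ) 1) :=
    (integrableOn_image_iff_integrableOn_abs_deriv_smul measurableSet_Icc hψd hinj H).1 hHimg
  have int_p : IntegrableOn (fun x => |ψ' x| * H (ψ x)) (Icc (0:ℝ) 1) := by
    simpa [smul_eq_mul] using int_p'
  have int_Du' : IntegrableOn (fun x => |ψ' x| • Du (ψ x)) (Icc (0:ℝ) 1) :=
    (integrableOn_image_iff_integrableOn_abs_deriv_smul measurableSet_Icc hψd hinj Du).1 hDuimg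
  have int_comp : IntegrableOn (fun x => Du (ψ x) * ψ' x) (Icc (0:ℝ) 1) :=
    int_Du'.congr_fun
      (fun x hx => by simp [smul_eq_mul, abs_of_pos (hψ'pos x hx), mul_comm]) measurableSet_Icc
  have int_F : IntegrableOn (fun x => |Du (ψ x) * ψ' x - Du x|) (Icc (0:ℝ) 1) :=
    (int_comp.sub hDuint0).abs
  have int_q : IntegrableOn (fun x => |g (ψ x) * ψ' x - g x|) (Icc (0:ℝ) 1) :=
    ((((hg.comp_continuousOn hψc).mul hψ'c).sub hg.continuousOn).abs).integrableOn_compact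
      isCompact_Icc
  have cov : ∫ x in Icc (ψ 0) (ψ 0 + 1), H x = ∫ x in Icc (0:ℝ) 1, |ψ' x| * H (ψ x) := by
    have h := integral_image_eq_integral_abs_deriv_smul measurableSet_Icc hψd hinj H
    rw [himg] at h
    simpa [smul_eq_mul] using h
  have hpt : ∀ x ∈ Icc (0:ℝ) 1, |Du (ψ x) * ψ' x - Du x|
      ≤ |ψ' x| * H (ψ x) + (|g (ψ x) * ψ' x - g x| + H x) := by
    intro x hx
    have h1 : |Du (ψ x) * ψ' x - Du x|
        ≤ |Du (ψ x) * ψ' x - g (ψ x) * ψ' x| + |g (ψ x) * ψ' x - g x| + |g x - Du x| := by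
      calc |Du (ψ x) * ψ' x - Du x|
          ≤ |Du (ψ x) * ψ' x - g x| + |g x - Du x| := abs_sub_le _ _ _
        _ ≤ (|Du (ψ x) * ψ' x - g (ψ x) * ψ' x| + |g (ψ x) * ψ' x - g x|) + |g x - Du x| := by
            gcongr
            exact abs_sub_le _ _ _
    have h2 : |Du (ψ x) * ψ' x - g (ψ x) * ψ' x| = |ψ' x| * H (ψ x) := by
      rw [show Du (ψ x) * ψ' x - g (ψ x) * ψ' x = (Du (ψ x) - g (ψ x)) * ψ' x by ring, abs_mul,
        mul_comm]
    have h3 : |g x - Du x| = H x := abs_sub_comm _ _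
    rw [h2, h3] at h1
    linarith
  have step1 : ∫ x in Icc (0:ℝ) 1, |Du (ψ x) * ψ' x - Du x|
      ≤ ∫ x in Icc (0:ℝ) 1, (|ψ' x| * H (ψ x) + (|g (ψ x) * ψ' x - g x| + H x)) :=
    setIntegral_mono_on int_F (int_p.add (int_q.add hHint0)) measurableSet_Icc hpt
  have step2 : ∫ x in Icc (0:ℝ) 1, (|ψ' x| * H (ψ x) + (|g (ψ x) * ψ' x - g x| + H x))
      = (∫ x in Icc (0:ℝ) 1, |ψ' x| * H (ψ x))
        + ((∫ x in Icc (0:ℝ) 1, |g (ψ x) * ψ' x - g x|) + ∫ x in Icc (0:ℝ) 1, H x) := by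
    have int_qr : IntegrableOn (fun x => |g (ψ x) * ψ' x - g x| + H x) (Icc (0:ℝ) 1) :=
      int_q.add hHint0
    rw [integral_add int_p int_qr, integral_add int_q hHint0]
  have hqint : ∫ x in Icc (0:ℝ) 1, |g (ψ x) * ψ' x - g x| ≤ C := by
    have h := setIntegral_mono_on int_q
      (integrableOn_const measure_Icc_lt_top.ne) measurableSet_Icc hq
    simpa [setIntegral_const, Real.volume_Icc] using h
  rw [step2] at step1
  rw [cov]
  linarith

/-- Let `M` be either `[0,1]` or the circle. If `u` is an absolutely continuous function on
`M` (with `L¹` "derivative" `Du`), and `(φₙ)` is a sequence of orientation-preserving `C¹`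
diffeomorphisms of `M` converging to the identity in the `C¹` topology, then
`var(u ∘ φₙ - u) = ‖Du ∘ φₙ · Dφₙ - Du‖_{L¹}` converges to `0`. -/
theorem var_comp_sub_tendsto_zero :
    -- the case of the interval
    (∀ u Du : ℝ → ℝ, IntegrableOn Du (Icc (0:ℝ) 1) →
      (∀ x ∈ Icc (0:ℝ) 1, u x = u 0 + ∫ t in (0:ℝ)..x, Du t) →
      ∀ φ : ℕ → C1Diffeo,
        Tendsto (fun n => supDist01 (φ n).toFun (fun x => x) +
          ⨆ x : Icc (0:ℝ) 1, |(φ n).derivFun (x : ℝ) - 1|) atTop (𝓝 0) →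
        Tendsto (fun n =>
          ∫ x in Icc (0:ℝ) 1, |Du ((φ n).toFun x) * (φ n).derivFun x - Du x|)
          atTop (𝓝 0)) ∧
    -- the case of the circle
    (∀ u Du : ℝ → ℝ, (∀ x : ℝ, u (x + 1) = u x) → (∀ x : ℝ, Du (x + 1) = Du x) →
      IntegrableOn Du (Icc (0:ℝ) 1) →
      (∀ x : ℝ, u x = u 0 + ∫ t in (0:ℝ)..x, Du t) →
      ∀ φ : ℕ → CircC1,
        Tendsto (fun n => supDistCirc (φ n).toFun (fun x => x) +
          ⨆ x : Icc (0:ℝ) 1, |(φ n).derivFun (x : ℝ) - 1|) atTop (𝓝 0) →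
        Tendsto (fun n =>
          ∫ x in Icc (0:ℝ) 1, |Du ((φ n).toFun x) * (φ n).derivFun x - Du x|)
          atTop (𝓝 0)) := by
  constructor
  · -- interval case
    intro u Du hDu hu φ hφ
    set s : ℕ → ℝ := fun n => supDist01 (φ n).toFun (fun x => x) with hs_def
    set t : ℕ → ℝ := fun n => ⨆ x : Icc (0:ℝ) 1, |(φ n).derivFun (x : ℝ) - 1| with ht_def
    have hs0 : ∀ n, 0 ≤ s n := fun n => Real.iSup_nonneg fun x => abs_nonneg _
    have ht0 : ∀ n, 0 ≤ t n := fun n => Real.iSup_nonneg fun x => abs_nonneg _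
    have hst : Tendsto (fun n => s n + t n) atTop (𝓝 0) := hφ
    have hs : Tendsto s atTop (𝓝 0) :=
      squeeze_zero hs0 (fun n => le_add_of_nonneg_right (ht0 n)) hst
    have ht : Tendsto t atTop (𝓝 0) :=
      squeeze_zero ht0 (fun n => le_add_of_nonneg_left (hs0 n)) hst
    have hI0 : ∀ n, 0 ≤ ∫ x in Icc (0:ℝ) 1,
        |Du ((φ n).toFun x) * (φ n).derivFun x - Du x| :=
      fun n => setIntegral_nonneg measurableSet_Icc fun x _ => abs_nonneg _
    refine tendsto_order.2 ⟨fun c hc => Eventually.of_forall fun n =>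
      lt_of_lt_of_le hc (hI0 n), fun ε hε => ?_⟩
    -- choose a continuous approximation g of Du
    have hfind : Integrable ((Icc (0:ℝ) 1).indicator Du) volume :=
      (integrable_indicator_iff measurableSet_Icc).2 hDu
    obtain ⟨g, hgsupp, hgapp, hgc, hgint⟩ :=
      hfind.exists_hasCompactSupport_integral_sub_le (show (0:ℝ) < ε/8 by linarith)
    have hbound : ∀ s' : Set ℝ, MeasurableSet s' → s' ⊆ Icc (0:ℝ) 1 →
        ∫ x in s', |Du x - g x| ≤ ε/8 := by
      intro s' hs' hsub
      have heq : ∫ x in s', |Du x - g x|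
          = ∫ x in s', ‖(Icc (0:ℝ) 1).indicator Du x - g x‖ :=
        setIntegral_congr_fun hs' (fun x hx => by
          rw [indicator_of_mem (hsub hx), Real.norm_eq_abs])
      rw [heq]
      calc ∫ x in s', ‖(Icc (0:ℝ) 1).indicator Du x - g x‖
          ≤ ∫ x, ‖(Icc (0:ℝ) 1).indicator Du x - g x‖ :=
            setIntegral_le_integral (hfind.sub hgint).norm
              (Eventually.of_forall fun x => norm_nonneg _)
        _ ≤ ε/8 := hgapp
    obtain ⟨Cg, hCg⟩ :=
      (isCompact_Icc : IsCompact (Icc (0:ℝ) 1)).exists_bound_of_continuousOn hgc.continuousOn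
    have hCg0 : 0 ≤ Cg := le_trans (norm_nonneg _) (hCg 0 (by norm_num))
    obtain ⟨δ1, hδ1pos, hδ1⟩ := Metric.uniformContinuous_iff.1
      (hgsupp.uniformContinuous_of_continuous hgc) (ε/8) (by linarith)
    have hev1 : ∀ᶠ n in atTop, s n < min δ1 1 :=
      hs.eventually (eventually_lt_nhds (lt_min hδ1pos one_pos))
    have hev2 : ∀ᶠ n in atTop, t n < ε/(8*(Cg+1)) :=
      ht.eventually (eventually_lt_nhds (by positivity))
    filter_upwards [hev1, hev2] with n hn1 hn2
    have hFc : ContinuousOn (φ n).toFun (Icc (0:ℝ) 1) :=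
      fun x hx => ((φ n).hasDeriv x hx).continuousWithinAt
    have hspt : ∀ x ∈ Icc (0:ℝ) 1, |(φ n).toFun x - x| < min δ1 1 := by
      intro x hx
      refine lt_of_le_of_lt ?_ hn1
      have hc : Continuous fun y : Icc (0:ℝ) 1 => |(φ n).toFun (y:ℝ) - (y:ℝ)| :=
        (hFc.restrict.sub continuous_subtype_val).abs
      exact le_iSup_Icc hc ⟨x, hx⟩
    have htpt : ∀ x ∈ Icc (0:ℝ) 1, |(φ n).derivFun x - 1| ≤ t n := by
      intro x hx
      have hc : Continuous fun y : Icc (0:ℝ) 1 => |(φ n).derivFun (y:ℝ) - 1| :=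
        ((φ n).derivFun_cont.restrict.sub continuous_const).abs
      exact le_iSup_Icc hc ⟨x, hx⟩
    have hqb : ∀ x ∈ Icc (0:ℝ) 1, |g ((φ n).toFun x) * (φ n).derivFun x - g x| ≤ ε/4 := by
      intro x hx
      have hmem : (φ n).toFun x ∈ Icc (0:ℝ) 1 := (φ n).bijOn.mapsTo hx
      have h1 : |g ((φ n).toFun x)| ≤ Cg := by
        simpa [Real.norm_eq_abs] using hCg _ hmem
      have h2 : |(φ n).derivFun x - 1| ≤ ε/(8*(Cg+1)) := (htpt x hx).trans hn2.le
      have h3 : |g ((φ n).toFun x) - g x| ≤ ε/8 := by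
        have hd : dist ((φ n).toFun x) x < δ1 := by
          rw [Real.dist_eq]
          exact lt_of_lt_of_le (hspt x hx) (min_le_left _ _)
        have := hδ1 hd
        rw [Real.dist_eq] at this
        linarith
      have key : g ((φ n).toFun x) * (φ n).derivFun x - g x
          = g ((φ n).toFun x) * ((φ n).derivFun x - 1) + (g ((φ n).toFun x) - g x) := by ring
      have h4 : |g ((φ n).toFun x) * (φ n).derivFun x - g x|
          ≤ |g ((φ n).toFun x)| * |(φ n).derivFun x - 1| + |g ((φ n).toFun x) - g x| := by
        rw [key]
        exact (abs_add_le _ _).trans (by rw [abs_mul])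
      have h5 : |g ((φ n).toFun x)| * |(φ n).derivFun x - 1| ≤ Cg * (ε/(8*(Cg+1))) := by
        exact mul_le_mul h1 h2 (abs_nonneg _) hCg0
      have h6 : Cg * (ε/(8*(Cg+1))) ≤ ε/8 := by
        have h7 : (0:ℝ) < Cg + 1 := by linarith
        have h8 : Cg / (Cg + 1) ≤ 1 := by rw [div_le_one h7]; linarith
        calc Cg * (ε/(8*(Cg+1))) = (Cg/(Cg+1)) * (ε/8) := by rw [mul_div_assoc', div_mul_div_comm, mul_comm (Cg+1) 8]
          _ ≤ 1 * (ε/8) := mul_le_mul_of_nonneg_right h8 (by positivity)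
          _ = ε/8 := one_mul _
      linarith
    have himg : (φ n).toFun '' Icc (0:ℝ) 1 = Icc ((φ n).toFun 0) ((φ n).toFun 0 + 1) := by
      rw [(φ n).map_zero, (φ n).bijOn.image_eq, zero_add]
    have hDuint' : IntegrableOn Du (Icc ((φ n).toFun 0) ((φ n).toFun 0 + 1)) := by
      rw [(φ n).map_zero, zero_add]; exact hDu
    have hb := key_bound Du g (φ n).toFun (φ n).derivFun (ε/4) hgc ((φ n).hasDeriv)
      ((φ n).derivFun_cont) ((φ n).derivFun_pos) hFc (φ n).bijOn.injOn himg hDuint' hDu hqb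
    rw [(φ n).map_zero, zero_add] at hb
    have hr := hbound (Icc (0:ℝ) 1) measurableSet_Icc subset_rfl
    linarith
  · -- circle case
    intro u Du hup hDup hDu hu φ hφ
    have hper : Function.Periodic Du 1 := hDup
    -- Du is integrable on [-1,2]
    have h01 : IntervalIntegrable Du volume 0 1 :=
      (intervalIntegrable_iff_integrableOn_Icc_of_le zero_le_one).2 hDu
    have hneg : IntervalIntegrable Du volume (-1) 0 := by
      have h := h01.comp_add_right 1
      have heq : (fun x => Du (x + 1)) = Du := funext hDup
      rw [heq] at h
      simpa using h
    have hpos1 : IntervalIntegrable Du volume 1 2 := by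
      have h := h01.comp_sub_right 1
      have heq : (fun x => Du (x - 1)) = Du := funext fun x => by
        have h2 := hDup (x - 1)
        rw [sub_add_cancel] at h2
        exact h2.symm
      rw [heq] at h
      norm_num at h
      exact h
    have hDuD : IntegrableOn Du (Icc (-1:ℝ) 2) :=
      (intervalIntegrable_iff_integrableOn_Icc_of_le (by norm_num)).1
        ((hneg.trans h01).trans hpos1)
    set s : ℕ → ℝ := fun n => supDistCirc (φ n).toFun (fun x => x) with hs_def
    set t : ℕ → ℝ := fun n => ⨆ x : Icc (0:ℝ) 1, |(φ n).derivFun (x : ℝ) - 1| with ht_def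
    have hs0 : ∀ n, 0 ≤ s n :=
      fun n => Real.iInf_nonneg fun k => Real.iSup_nonneg fun x => abs_nonneg _
    have ht0 : ∀ n, 0 ≤ t n := fun n => Real.iSup_nonneg fun x => abs_nonneg _
    have hst : Tendsto (fun n => s n + t n) atTop (𝓝 0) := hφ
    have hs : Tendsto s atTop (𝓝 0) :=
      squeeze_zero hs0 (fun n => le_add_of_nonneg_right (ht0 n)) hst
    have ht : Tendsto t atTop (𝓝 0) :=
      squeeze_zero ht0 (fun n => le_add_of_nonneg_left (hs0 n)) hst
    have hI0 : ∀ n, 0 ≤ ∫ x in Icc (0:ℝ) 1,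
        |Du ((φ n).toFun x) * (φ n).derivFun x - Du x| :=
      fun n => setIntegral_nonneg measurableSet_Icc fun x _ => abs_nonneg _
    refine tendsto_order.2 ⟨fun c hc => Eventually.of_forall fun n =>
      lt_of_lt_of_le hc (hI0 n), fun ε hε => ?_⟩
    have hfind : Integrable ((Icc (-1:ℝ) 2).indicator Du) volume :=
      (integrable_indicator_iff measurableSet_Icc).2 hDuD
    obtain ⟨g, hgsupp, hgapp, hgc, hgint⟩ :=
      hfind.exists_hasCompactSupport_integral_sub_le (show (0:ℝ) < ε/8 by linarith)
    have hbound : ∀ s' : Set ℝ, MeasurableSet s' → s' ⊆ Icc (-1:ℝ) 2 →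
        ∫ x in s', |Du x - g x| ≤ ε/8 := by
      intro s' hs' hsub
      have heq : ∫ x in s', |Du x - g x|
          = ∫ x in s', ‖(Icc (-1:ℝ) 2).indicator Du x - g x‖ :=
        setIntegral_congr_fun hs' (fun x hx => by
          rw [indicator_of_mem (hsub hx), Real.norm_eq_abs])
      rw [heq]
      calc ∫ x in s', ‖(Icc (-1:ℝ) 2).indicator Du x - g x‖
          ≤ ∫ x, ‖(Icc (-1:ℝ) 2).indicator Du x - g x‖ :=
            setIntegral_le_integral (hfind.sub hgint).norm
              (Eventually.of_forall fun x => norm_nonneg _)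
        _ ≤ ε/8 := hgapp
    obtain ⟨Cg, hCg⟩ :=
      (isCompact_Icc : IsCompact (Icc (-1:ℝ) 2)).exists_bound_of_continuousOn hgc.continuousOn
    have hCg0 : 0 ≤ Cg := le_trans (norm_nonneg _) (hCg 0 (by norm_num))
    obtain ⟨δ1, hδ1pos, hδ1⟩ := Metric.uniformContinuous_iff.1
      (hgsupp.uniformContinuous_of_continuous hgc) (ε/8) (by linarith)
    have hev1 : ∀ᶠ n in atTop, s n < min δ1 1 :=
      hs.eventually (eventually_lt_nhds (lt_min hδ1pos one_pos))
    have hev2 : ∀ᶠ n in atTop, t n < ε/(8*(Cg+1)) :=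
      ht.eventually (eventually_lt_nhds (by positivity))
    filter_upwards [hev1, hev2] with n hn1 hn2
    -- pick an integer translate bringing φ n close to the identity
    have hn1' : (⨅ k : ℤ, ⨆ x : Icc (0:ℝ) 1,
        |(φ n).toFun (x : ℝ) - ((x : ℝ) + (k : ℝ))|) < min δ1 1 := hn1
    obtain ⟨k, hk⟩ := exists_lt_of_ciInf_lt hn1'
    set ψ : ℝ → ℝ := fun x => (φ n).toFun x - (k : ℝ) with hψ_def
    have hφcont : Continuous (φ n).toFun :=
      continuous_iff_continuousAt.2 fun x => ((φ n).hasDeriv x).continuousAt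
    have hψcont : Continuous ψ := hφcont.sub continuous_const
    have hψpt : ∀ x ∈ Icc (0:ℝ) 1, |ψ x - x| < min δ1 1 := by
      intro x hx
      have hc : Continuous fun y : Icc (0:ℝ) 1 =>
          |(φ n).toFun (y:ℝ) - ((y : ℝ) + (k : ℝ))| :=
        ((hφcont.comp continuous_subtype_val).sub
          (continuous_subtype_val.add continuous_const)).abs
      have h1 : |(φ n).toFun x - ((x : ℝ) + (k : ℝ))| ≤ ⨆ y : Icc (0:ℝ) 1,
          |(φ n).toFun (y:ℝ) - ((y : ℝ) + (k : ℝ))| := le_iSup_Icc hc ⟨x, hx⟩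
      have h2 : ψ x - x = (φ n).toFun x - ((x : ℝ) + (k : ℝ)) := by
        simp only [hψ_def]; ring
      rw [h2]
      exact lt_of_le_of_lt h1 hk
    have hψd' : ∀ x : ℝ, HasDerivAt ψ ((φ n).derivFun x) x :=
      fun x => ((φ n).hasDeriv x).sub_const _
    have hψmono : StrictMono ψ := strictMono_of_deriv_pos fun x => by
      rw [(hψd' x).deriv]; exact (φ n).derivFun_pos x
    have hψ1 : ψ 1 = ψ 0 + 1 := by
      have h := (φ n).commT 0
      rw [zero_add] at h
      simp only [hψ_def, h]; ring
    have himg : ψ '' Icc (0:ℝ) 1 = Icc (ψ 0) (ψ 0 + 1) := by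
      rw [← hψ1]
      refine Subset.antisymm ?_ (intermediate_value_Icc zero_le_one hψcont.continuousOn)
      rintro y ⟨x, hx, rfl⟩
      exact ⟨hψmono.monotone hx.1, hψmono.monotone hx.2⟩
    have hψ0 : |ψ 0| < 1 := by
      have := hψpt 0 (by norm_num)
      simpa using lt_of_lt_of_le this (min_le_right _ _)
    have hψ0' := abs_lt.1 hψ0
    have hsubD : Icc (ψ 0) (ψ 0 + 1) ⊆ Icc (-1:ℝ) 2 :=
      Icc_subset_Icc (by linarith) (by linarith)
    have hDuint' : IntegrableOn Du (Icc (ψ 0) (ψ 0 + 1)) := hDuD.mono_set hsubD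
    -- replace Du ∘ φ by Du ∘ ψ using periodicity
    have hDuk : ∀ y : ℝ, Du ((φ n).toFun y) = Du (ψ y) := by
      intro y
      have h := hper.sub_int_mul_eq (x := (φ n).toFun y) k
      simp only [mul_one] at h
      exact h.symm
    have hrw : (fun x => |Du ((φ n).toFun x) * (φ n).derivFun x - Du x|)
        = fun x => |Du (ψ x) * (φ n).derivFun x - Du x| := by
      funext x; rw [hDuk x]
    -- uniform bound for the continuous part
    have htpt : ∀ x ∈ Icc (0:ℝ) 1, |(φ n).derivFun x - 1| ≤ t n := by
      intro x hx
      have hc : Continuous fun y : Icc (0:ℝ) 1 => |(φ n).derivFun (y:ℝ) - 1| :=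
        (((φ n).derivFun_cont.comp continuous_subtype_val).sub continuous_const).abs
      exact le_iSup_Icc hc ⟨x, hx⟩
    have hqb : ∀ x ∈ Icc (0:ℝ) 1, |g (ψ x) * (φ n).derivFun x - g x| ≤ ε/4 := by
      intro x hx
      have hxd := abs_lt.1 (lt_of_lt_of_le (hψpt x hx) (min_le_right _ _))
      have hmem : ψ x ∈ Icc (-1:ℝ) 2 :=
        ⟨by have := hx.1; linarith, by have := hx.2; linarith⟩
      have h1 : |g (ψ x)| ≤ Cg := by
        simpa [Real.norm_eq_abs] using hCg _ hmem
      have h2 : |(φ n).derivFun x - 1| ≤ ε/(8*(Cg+1)) := (htpt x hx).trans hn2.le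
      have h3 : |g (ψ x) - g x| ≤ ε/8 := by
        have hd : dist (ψ x) x < δ1 := by
          rw [Real.dist_eq]
          exact lt_of_lt_of_le (hψpt x hx) (min_le_left _ _)
        have := hδ1 hd
        rw [Real.dist_eq] at this
        linarith
      have key : g (ψ x) * (φ n).derivFun x - g x
          = g (ψ x) * ((φ n).derivFun x - 1) + (g (ψ x) - g x) := by ring
      have h4 : |g (ψ x) * (φ n).derivFun x - g x|
          ≤ |g (ψ x)| * |(φ n).derivFun x - 1| + |g (ψ x) - g x| := by
        rw [key]
        exact (abs_add_le _ _).trans (by rw [abs_mul])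
      have h5 : |g (ψ x)| * |(φ n).derivFun x - 1| ≤ Cg * (ε/(8*(Cg+1))) :=
        mul_le_mul h1 h2 (abs_nonneg _) hCg0
      have h6 : Cg * (ε/(8*(Cg+1))) ≤ ε/8 := by
        have h7 : (0:ℝ) < Cg + 1 := by linarith
        have h8 : Cg / (Cg + 1) ≤ 1 := by rw [div_le_one h7]; linarith
        calc Cg * (ε/(8*(Cg+1))) = (Cg/(Cg+1)) * (ε/8) := by
              rw [mul_div_assoc', div_mul_div_comm, mul_comm (Cg+1) 8]
          _ ≤ 1 * (ε/8) := mul_le_mul_of_nonneg_right h8 (by positivity)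
          _ = ε/8 := one_mul _
      linarith
    have hb := key_bound Du g ψ (φ n).derivFun (ε/4) hgc
      (fun x _ => (hψd' x).hasDerivWithinAt)
      ((φ n).derivFun_cont.continuousOn) (fun x _ => (φ n).derivFun_pos x)
      hψcont.continuousOn (hψmono.injective.injOn) himg hDuint' (hDuD.mono_set
        (Icc_subset_Icc (by norm_num) (by norm_num))) hqb
    have hr1 := hbound (Icc (ψ 0) (ψ 0 + 1)) measurableSet_Icc hsubD
    have hr2 := hbound (Icc (0:ℝ) 1) measurableSet_Icc
      (Icc_subset_Icc (by norm_num) (by norm_num))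
    rw [hrw]
    linarith
end
end

section
/- Consider a C^{1+bv} action of Z^d on [0,1], and suppose some element f of the image group has a fixed point a in the open interval (0,1) with Df(a) ≠ 1 (a hyperbolic fixed point). Then every element g of the image group that does not coincide with the identity on any neighborhood of a satisfies g(a) = a and Dg(a) ≠ 1. -/
open Set MeasureTheory Filter Topology

noncomputable section

/-- A `C^{1+bv}` diffeomorphism of `[0,1]`: a `C¹` diffeomorphism such that `log Df` has
finite total variation. -/
structure C1bvDiffeo extends C1Diffeo where
  logDeriv_bv : BoundedVariationOn (fun x => Real.log (derivFun x)) (Icc (0:ℝ) 1)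

/-- An action of `ℤᵈ` on `[0,1]` by orientation-preserving `C^{1+bv}` diffeomorphisms. -/
structure ZdAction1bv (d : ℕ) where
  elt : (Fin d → ℤ) → C1bvDiffeo
  elt_add : ∀ a b : Fin d → ℤ, ∀ x : ℝ,
    (elt (a + b)).toFun x = (elt a).toFun ((elt b).toFun x)
  elt_zero : ∀ x : ℝ, (elt 0).toFun x = x

/-- `Φ`, together with its spatial derivative `Φ'`, is a `C¹` flow on the one-dimensional
manifold-with-boundary `s ⊆ ℝ` (extended by the identity outside of `s`): a continuous group
homomorphism from `(ℝ,+)` to the orientation-preserving `C¹` diffeomorphisms of `s` endowed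
with the `C¹` topology. -/
def IsC1FlowOn (s : Set ℝ) (Φ Φ' : ℝ → ℝ → ℝ) : Prop :=
  (∀ x : ℝ, Φ 0 x = x) ∧
  (∀ t u : ℝ, ∀ x : ℝ, Φ (t + u) x = Φ t (Φ u x)) ∧
  (∀ t : ℝ, ∀ x ∉ s, Φ t x = x) ∧
  (∀ t : ℝ, BijOn (Φ t) s s) ∧
  (∀ t : ℝ, ∀ x ∈ s, HasDerivWithinAt (Φ t) (Φ' t x) s x) ∧
  (∀ t : ℝ, ContinuousOn (Φ' t) s) ∧
  (∀ t : ℝ, ∀ x ∈ s, 0 < Φ' t x) ∧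
  (∀ t₀ : ℝ, ∀ K : Set ℝ, IsCompact K → K ⊆ s → ∀ ε > (0:ℝ), ∃ δ > (0:ℝ), ∀ t : ℝ,
    |t - t₀| < δ → ∀ x ∈ K,
      |Φ t x - Φ t₀ x| + |Real.log (Φ' t x) - Real.log (Φ' t₀ x)| < ε)

namespace C1Diffeo

variable (F : C1Diffeo)

lemma contOn : ContinuousOn F.toFun (Icc 0 1) :=
  fun x hx => (F.hasDeriv x hx).continuousWithinAt

lemma mapsTo : MapsTo F.toFun (Icc 0 1) (Icc 0 1) := F.bijOn.mapsTo

lemma mono : StrictMonoOn F.toFun (Icc 0 1) :=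
  ContinuousOn.strictMonoOn_of_injOn_Icc (by norm_num)
    (by rw [F.map_zero, F.map_one]; norm_num) F.contOn F.bijOn.injOn

lemma hasDerivAt' {x : ℝ} (hx : x ∈ Ioo (0:ℝ) 1) : HasDerivAt F.toFun (F.derivFun x) x :=
  (F.hasDeriv x (Ioo_subset_Icc_self hx)).hasDerivAt (Icc_mem_nhds hx.1 hx.2)

lemma iter_mapsTo (n : ℕ) : MapsTo (F.toFun^[n]) (Icc 0 1) (Icc 0 1) := by
  induction n with
  | zero => simpa using mapsTo_id _
  | succ n ih =>
    rw [Function.iterate_succ]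
    exact ih.comp F.mapsTo

lemma iter_hasDeriv (n : ℕ) : ∀ x ∈ Icc (0:ℝ) 1, HasDerivWithinAt (F.toFun^[n])
      (∏ k ∈ Finset.range n, F.derivFun (F.toFun^[k] x)) (Icc 0 1) x := by
  induction n with
  | zero => intro x _; simpa using hasDerivWithinAt_id x (Icc 0 1)
  | succ n ih =>
    intro x hx
    have h1 : HasDerivWithinAt (F.toFun^[n] ∘ F.toFun)
        ((∏ k ∈ Finset.range n, F.derivFun (F.toFun^[k] (F.toFun x))) * F.derivFun x)
        (Icc 0 1) x :=
      HasDerivWithinAt.comp x (ih (F.toFun x) (F.mapsTo hx)) (F.hasDeriv x hx) F.mapsTo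
    rw [← Function.iterate_succ] at h1
    have heq : (∏ k ∈ Finset.range (n + 1), F.derivFun (F.toFun^[k] x))
        = (∏ k ∈ Finset.range n, F.derivFun (F.toFun^[k] (F.toFun x))) * F.derivFun x := by
      simp only [Finset.prod_range_succ', Function.iterate_succ_apply,
        Function.iterate_zero_apply]
    rw [heq]
    exact h1

lemma iter_contOn (n : ℕ) : ContinuousOn (F.toFun^[n]) (Icc 0 1) :=
  fun x hx => (F.iter_hasDeriv n x hx).continuousWithinAt

lemma iter_mono (n : ℕ) : StrictMonoOn (F.toFun^[n]) (Icc 0 1) := by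
  induction n with
  | zero => simpa using strictMonoOn_id
  | succ n ih =>
    intro x hx y hy hxy
    rw [Function.iterate_succ_apply, Function.iterate_succ_apply]
    exact ih (F.mapsTo hx) (F.mapsTo hy) (F.mono hx hy hxy)

end C1Diffeo

lemma hasDerivIcc_unique {φ : ℝ → ℝ} {d₁ d₂ x : ℝ} (hx : x ∈ Icc (0:ℝ) 1)
    (h₁ : HasDerivWithinAt φ d₁ (Icc 0 1) x) (h₂ : HasDerivWithinAt φ d₂ (Icc 0 1) x) :
    d₁ = d₂ := by
  have u := (uniqueDiffOn_Icc (by norm_num : (0:ℝ) < 1)) x hx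
  rw [← h₁.derivWithin u, ← h₂.derivWithin u]

lemma mvt_aux {φ φ' : ℝ → ℝ} (h : ∀ x ∈ Icc (0:ℝ) 1, HasDerivWithinAt φ (φ' x) (Icc 0 1) x)
    {a b : ℝ} (hab : a < b) (ha : a ∈ Icc (0:ℝ) 1) (hb : b ∈ Icc (0:ℝ) 1) :
    ∃ ξ ∈ Ioo a b, φ b - φ a = φ' ξ * (b - a) := by
  have hcont0 : ContinuousOn φ (Icc 0 1) := fun x hx => (h x hx).continuousWithinAt
  have hcont : ContinuousOn φ (Icc a b) := hcont0.mono (Icc_subset_Icc ha.1 hb.2)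
  have hderiv : ∀ x ∈ Ioo a b, HasDerivAt φ (φ' x) x := by
    intro x hx
    have hx' : x ∈ Ioo (0:ℝ) 1 := ⟨lt_of_le_of_lt ha.1 hx.1, lt_of_lt_of_le hx.2 hb.2⟩
    exact (h x (Ioo_subset_Icc_self hx')).hasDerivAt (Icc_mem_nhds hx'.1 hx'.2)
  obtain ⟨ξ, hξ, hslope⟩ := exists_hasDerivAt_eq_slope φ φ' hab hcont hderiv
  exact ⟨ξ, hξ, by rw [hslope]; field_simp [sub_ne_zero.mpr hab.ne']⟩

lemma variation_pairs (F : C1bvDiffeo) (c e : ℕ → ℝ)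
    (hc : ∀ k, c k ∈ Icc (0:ℝ) 1) (he : ∀ k, e k ∈ Icc (0:ℝ) 1)
    (hce : ∀ k, c k ≤ e k) (hec : ∀ k, e k ≤ c (k + 1)) (n : ℕ) :
    ∑ k ∈ Finset.range n, |Real.log (F.derivFun (e k)) - Real.log (F.derivFun (c k))|
      ≤ (eVariationOn (fun x => Real.log (F.derivFun x)) (Icc 0 1)).toReal := by
  set L : ℝ → ℝ := fun x => Real.log (F.derivFun x) with hL
  set u : ℕ → ℝ := fun j => if j % 2 = 0 then c (j / 2) else e (j / 2) with hu
  have hu2 : ∀ k, u (2 * k) = c k := by intro k; simp [hu, Nat.mul_div_cancel_left _ two_pos]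
  have hu2' : ∀ k, u (2 * k + 1) = e k := by
    intro k
    have h1 : (2 * k + 1) % 2 = 1 := by omega
    have h2 : (2 * k + 1) / 2 = k := by omega
    simp [hu, h1, h2]
  have humono : Monotone u := by
    apply monotone_nat_of_le_succ
    intro j
    rcases Nat.even_or_odd j with hj | hj
    · obtain ⟨k, rfl⟩ := hj
      have : k + k = 2 * k := by ring
      rw [this, hu2, hu2']
      exact hce k
    · obtain ⟨k, rfl⟩ := hj
      have h1 : 2 * k + 1 + 1 = 2 * (k + 1) := by ring
      rw [h1, hu2, hu2']
      exact hec k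
  have humem : ∀ j, u j ∈ Icc (0:ℝ) 1 := by
    intro j
    rcases Nat.even_or_odd j with hj | hj
    · obtain ⟨k, rfl⟩ := hj
      have : k + k = 2 * k := by ring
      rw [this, hu2]; exact hc k
    · obtain ⟨k, rfl⟩ := hj
      rw [hu2']; exact he k
  have key : (∑ k ∈ Finset.range n, edist (L (e k)) (L (c k)))
      ≤ eVariationOn L (Icc 0 1) := by
    have h1 : (∑ k ∈ Finset.range n, edist (L (e k)) (L (c k)))
        = ∑ k ∈ Finset.range n, edist (L (u (2 * k + 1))) (L (u (2 * k))) := by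
      apply Finset.sum_congr rfl
      intro k _
      rw [hu2, hu2']
    rw [h1]
    have h2 : (∑ k ∈ Finset.range n, edist (L (u (2 * k + 1))) (L (u (2 * k))))
        ≤ ∑ j ∈ Finset.range (2 * n), edist (L (u (j + 1))) (L (u j)) := by
      have h3 : (∑ k ∈ Finset.range n, edist (L (u (2 * k + 1))) (L (u (2 * k))))
          = ∑ j ∈ (Finset.range n).image (fun k => 2 * k),
              edist (L (u (j + 1))) (L (u j)) := by
        rw [Finset.sum_image]
        intro a _ b _ h
        simp only at h
        omega
      rw [h3]
      apply Finset.sum_le_sum_of_subset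
      intro j hj
      simp only [Finset.mem_image, Finset.mem_range] at hj ⊢
      omega
    exact h2.trans (eVariationOn.sum_le (f := L) (n := 2 * n) humono humem)
  have hne : eVariationOn L (Icc 0 1) ≠ ⊤ := F.logDeriv_bv
  have hS : (∑ k ∈ Finset.range n, edist (L (e k)) (L (c k))) ≠ ⊤ :=
    ne_top_of_le_ne_top hne key
  have := ENNReal.toReal_mono hne key
  rw [ENNReal.toReal_sum (fun a _ => edist_ne_top _ _)] at this
  have h4 : ∀ k, (edist (L (e k)) (L (c k))).toReal = |L (e k) - L (c k)| := fun k => by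
    rw [edist_dist, ENNReal.toReal_ofReal dist_nonneg, Real.dist_eq]
  calc ∑ k ∈ Finset.range n, |Real.log (F.derivFun (e k)) - Real.log (F.derivFun (c k))|
      = ∑ k ∈ Finset.range n, (edist (L (e k)) (L (c k))).toReal :=
        Finset.sum_congr rfl (fun k _ => (h4 k).symm)
    _ ≤ _ := this

namespace ZdAction1bv

variable {d : ℕ} (ρ : ZdAction1bv d)

lemma inv_left (b : Fin d → ℤ) (x : ℝ) :
    (ρ.elt (-b)).toFun ((ρ.elt b).toFun x) = x := by
  rw [← ρ.elt_add, neg_add_cancel, ρ.elt_zero]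

lemma inv_right (b : Fin d → ℤ) (x : ℝ) :
    (ρ.elt b).toFun ((ρ.elt (-b)).toFun x) = x := by
  rw [← ρ.elt_add, add_neg_cancel, ρ.elt_zero]

lemma comm (a b : Fin d → ℤ) (x : ℝ) :
    (ρ.elt a).toFun ((ρ.elt b).toFun x) = (ρ.elt b).toFun ((ρ.elt a).toFun x) := by
  rw [← ρ.elt_add, ← ρ.elt_add, add_comm]

lemma comm_iter (a b : Fin d → ℤ) (m : ℕ) (x : ℝ) :
    (ρ.elt a).toFun ((ρ.elt b).toFun^[m] x) = (ρ.elt b).toFun^[m] ((ρ.elt a).toFun x) := by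
  induction m generalizing x with
  | zero => simp
  | succ m ih =>
    rw [Function.iterate_succ_apply, Function.iterate_succ_apply, ih, ρ.comm]

lemma comm_iter_iter (a b : Fin d → ℤ) (n m : ℕ) (x : ℝ) :
    (ρ.elt a).toFun^[n] ((ρ.elt b).toFun^[m] x)
      = (ρ.elt b).toFun^[m] ((ρ.elt a).toFun^[n] x) := by
  induction n generalizing x with
  | zero => simp
  | succ n ih =>
    rw [Function.iterate_succ_apply, Function.iterate_succ_apply, ρ.comm_iter, ih]

/-- The fundamental commutation identity for derivatives of iterates. -/
lemma deriv_comm_iter (a b : Fin d → ℤ) (n m : ℕ) {x : ℝ} (hx : x ∈ Icc (0:ℝ) 1) :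
    (∏ k ∈ Finset.range m,
        (ρ.elt b).derivFun ((ρ.elt b).toFun^[k] ((ρ.elt a).toFun^[n] x)))
      * (∏ k ∈ Finset.range n, (ρ.elt a).derivFun ((ρ.elt a).toFun^[k] x))
    = (∏ k ∈ Finset.range n,
        (ρ.elt a).derivFun ((ρ.elt a).toFun^[k] ((ρ.elt b).toFun^[m] x)))
      * (∏ k ∈ Finset.range m, (ρ.elt b).derivFun ((ρ.elt b).toFun^[k] x)) := by
  set F := (ρ.elt a).toC1Diffeo
  set G := (ρ.elt b).toC1Diffeo
  have h₁ : HasDerivWithinAt (G.toFun^[m] ∘ F.toFun^[n])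
      ((∏ k ∈ Finset.range m, G.derivFun (G.toFun^[k] (F.toFun^[n] x)))
        * (∏ k ∈ Finset.range n, F.derivFun (F.toFun^[k] x))) (Icc 0 1) x :=
    HasDerivWithinAt.comp x (G.iter_hasDeriv m _ (F.iter_mapsTo n hx))
      (F.iter_hasDeriv n x hx) (F.iter_mapsTo n)
  have h₂ : HasDerivWithinAt (F.toFun^[n] ∘ G.toFun^[m])
      ((∏ k ∈ Finset.range n, F.derivFun (F.toFun^[k] (G.toFun^[m] x)))
        * (∏ k ∈ Finset.range m, G.derivFun (G.toFun^[k] x))) (Icc 0 1) x :=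
    HasDerivWithinAt.comp x (F.iter_hasDeriv n _ (G.iter_mapsTo m hx))
      (G.iter_hasDeriv m x hx) (G.iter_mapsTo m)
  have heq : (G.toFun^[m] ∘ F.toFun^[n]) = (F.toFun^[n] ∘ G.toFun^[m]) := by
    funext y
    exact (ρ.comm_iter_iter a b n m y).symm
  rw [heq] at h₁
  exact hasDerivIcc_unique hx h₁ h₂

/-- Derivative commutation for single maps. -/
lemma deriv_comm (a b : Fin d → ℤ) {x : ℝ} (hx : x ∈ Icc (0:ℝ) 1) :
    (ρ.elt b).derivFun ((ρ.elt a).toFun x) * (ρ.elt a).derivFun x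
      = (ρ.elt a).derivFun ((ρ.elt b).toFun x) * (ρ.elt b).derivFun x := by
  have := ρ.deriv_comm_iter a b 1 1 hx
  simpa using this

/-- Derivative of the inverse map. -/
lemma deriv_inv (b : Fin d → ℤ) {x : ℝ} (hx : x ∈ Icc (0:ℝ) 1) :
    (ρ.elt (-b)).derivFun ((ρ.elt b).toFun x) * (ρ.elt b).derivFun x = 1 := by
  set F := (ρ.elt (-b)).toC1Diffeo
  set G := (ρ.elt b).toC1Diffeo
  have h₁ : HasDerivWithinAt (F.toFun ∘ G.toFun)
      (F.derivFun (G.toFun x) * G.derivFun x) (Icc 0 1) x :=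
    HasDerivWithinAt.comp x (F.hasDeriv _ (G.mapsTo hx)) (G.hasDeriv x hx) G.mapsTo
  have heq : (F.toFun ∘ G.toFun) = id := by
    funext y
    exact ρ.inv_left b y
  rw [heq] at h₁
  exact hasDerivIcc_unique hx h₁ (hasDerivWithinAt_id x _)

end ZdAction1bv

namespace ZdAction1bv

variable {d : ℕ} (ρ : ZdAction1bv d)

lemma part1_aux (a b : Fin d → ℤ) {p : ℝ} (hp : p ∈ Ioo (0:ℝ) 1)
    (hfix : (ρ.elt a).toFun p = p) (hhyp : (ρ.elt a).derivFun p ≠ 1)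
    (hgt : p < (ρ.elt b).toFun p) : False := by
  set F := (ρ.elt a).toC1Diffeo with hF
  set G := (ρ.elt b).toC1Diffeo with hG
  have hpIcc : p ∈ Icc (0:ℝ) 1 := Ioo_subset_Icc_self hp
  set x : ℕ → ℝ := fun n => G.toFun^[n] p with hx
  have hmem : ∀ n, x n ∈ Icc (0:ℝ) 1 := fun n => G.iter_mapsTo n hpIcc
  have hsucc : ∀ n, x (n + 1) = G.toFun (x n) := fun n => Function.iterate_succ_apply' _ _ _
  have hinc : ∀ n, x n < x (n + 1) := by
    intro n
    induction n with
    | zero => simpa [hx] using hgt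
    | succ n ih =>
      have h := G.mono (hmem n) (hmem (n + 1)) ih
      rw [← hsucc n, ← hsucc (n + 1)] at h
      exact h
  have hfixn : ∀ n, F.toFun (x n) = x n := by
    intro n
    induction n with
    | zero => simpa [hx] using hfix
    | succ n ih =>
      rw [hsucc]
      show (ρ.elt a).toFun ((ρ.elt b).toFun (x n)) = (ρ.elt b).toFun (x n)
      rw [ρ.comm a b (x n)]
      show (ρ.elt b).toFun (F.toFun (x n)) = _
      rw [ih]
  have hderivn : ∀ n, F.derivFun (x n) = F.derivFun p := by
    intro n
    induction n with
    | zero => rfl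
    | succ n ih =>
      have h1 := ρ.deriv_comm a b (hmem n)
      have h2 : (ρ.elt a).toFun (x n) = x n := hfixn n
      rw [h2] at h1
      have h3 : (ρ.elt b).derivFun (x n) ≠ 0 :=
        ((ρ.elt b).derivFun_pos _ (hmem n)).ne'
      have h4 : (ρ.elt a).derivFun ((ρ.elt b).toFun (x n)) = (ρ.elt a).derivFun (x n) := by
        have := h1.symm
        rw [mul_comm ((ρ.elt b).derivFun (x n)) ((ρ.elt a).derivFun (x n))] at this
        exact mul_right_cancel₀ h3 this
      rw [hsucc]
      show (ρ.elt a).derivFun ((ρ.elt b).toFun (x n)) = _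
      rw [h4]
      exact ih
  have hmvt : ∀ n, ∃ ξ, ξ ∈ Ioo (x n) (x (n + 1)) ∧ F.derivFun ξ = 1 := by
    intro n
    obtain ⟨ξ, hξ, heq⟩ := mvt_aux F.hasDeriv (hinc n) (hmem n) (hmem (n + 1))
    refine ⟨ξ, hξ, ?_⟩
    rw [hfixn n, hfixn (n + 1)] at heq
    have hne : x (n + 1) - x n ≠ 0 := sub_ne_zero.mpr (hinc n).ne'
    have h0 : (F.derivFun ξ - 1) * (x (n + 1) - x n) = 0 := by linarith
    rcases mul_eq_zero.mp h0 with h | h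
    · linarith
    · exact absurd h hne
  choose ξ hξmem hξone using hmvt
  have hξIcc : ∀ n, ξ n ∈ Icc (0:ℝ) 1 := fun n =>
    ⟨le_trans (hmem n).1 (hξmem n).1.le, le_trans (hξmem n).2.le (hmem (n + 1)).2⟩
  have hVP := variation_pairs (ρ.elt a) x ξ hmem hξIcc
    (fun k => (hξmem k).1.le) (fun k => (hξmem k).2.le)
  set V := (eVariationOn (fun y => Real.log ((ρ.elt a).derivFun y)) (Icc 0 1)).toReal
  set lam := (ρ.elt a).derivFun p with hlam
  have hlampos : 0 < lam := (ρ.elt a).derivFun_pos p hpIcc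
  have hlog : Real.log lam ≠ 0 := by
    intro h
    rcases Real.log_eq_zero.mp h with h | h | h
    · exact absurd h hlampos.ne'
    · exact hhyp h
    · linarith
  have habs : 0 < |Real.log lam| := abs_pos.mpr hlog
  obtain ⟨n, hn⟩ := exists_nat_gt (V / |Real.log lam|)
  have hterm : ∀ k, |Real.log ((ρ.elt a).derivFun (ξ k)) - Real.log ((ρ.elt a).derivFun (x k))|
      = |Real.log lam| := by
    intro k
    have h1 : (ρ.elt a).derivFun (ξ k) = 1 := hξone k
    have h2 : (ρ.elt a).derivFun (x k) = lam := hderivn k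
    rw [h1, h2, Real.log_one, zero_sub, abs_neg]
  have hsum := hVP n
  rw [Finset.sum_congr rfl (fun k _ => hterm k)] at hsum
  rw [Finset.sum_const, Finset.card_range, nsmul_eq_mul] at hsum
  have : (n : ℝ) * |Real.log lam| > V := by
    rw [div_lt_iff₀ habs] at hn
    linarith
  linarith

lemma fixes_p (a b : Fin d → ℤ) {p : ℝ} (hp : p ∈ Ioo (0:ℝ) 1)
    (hfix : (ρ.elt a).toFun p = p) (hhyp : (ρ.elt a).derivFun p ≠ 1) :
    (ρ.elt b).toFun p = p := by
  by_contra hne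
  rcases lt_or_gt_of_ne hne with h | h
  · -- g p < p, use -b
    have hpIcc : p ∈ Icc (0:ℝ) 1 := Ioo_subset_Icc_self hp
    have hgIcc : (ρ.elt b).toFun p ∈ Icc (0:ℝ) 1 := (ρ.elt b).toC1Diffeo.mapsTo hpIcc
    have h2 : p < (ρ.elt (-b)).toFun p := by
      have := (ρ.elt (-b)).toC1Diffeo.mono hgIcc hpIcc h
      rwa [show (ρ.elt (-b)).toC1Diffeo.toFun ((ρ.elt b).toFun p) = p from ρ.inv_left b p]
        at this
    exact ρ.part1_aux a (-b) hp hfix hhyp h2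
  · exact ρ.part1_aux a b hp hfix hhyp h

end ZdAction1bv

namespace C1Diffeo

lemma iter_tendsto_down (F : C1Diffeo) {p y₀ : ℝ}
    (hpIcc : p ∈ Icc (0:ℝ) 1) (hy₀ : y₀ ∈ Icc (0:ℝ) 1) (hpy : p < y₀)
    (hfp : F.toFun p = p)
    (hdec : ∀ x, x ∈ Ioc p y₀ → F.toFun x < x) :
    (∀ n, F.toFun^[n] y₀ ∈ Ioc p y₀) ∧ (∀ n, F.toFun^[n + 1] y₀ < F.toFun^[n] y₀) ∧
    ∃ ℓ, ℓ ∈ Icc p y₀ ∧ F.toFun ℓ = ℓ ∧ Tendsto (fun n => F.toFun^[n] y₀) atTop (𝓝 ℓ) := by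
  have hIocIcc : Ioc p y₀ ⊆ Icc (0:ℝ) 1 := fun x hx =>
    ⟨le_trans hpIcc.1 hx.1.le, le_trans hx.2 hy₀.2⟩
  have hstep : ∀ x ∈ Ioc p y₀, F.toFun x ∈ Ioc p y₀ ∧ F.toFun x < x := by
    intro x hx
    have h1 : F.toFun x < x := hdec x hx
    have h2 : p < F.toFun x := by
      have := F.mono hpIcc (hIocIcc hx) hx.1
      rwa [hfp] at this
    exact ⟨⟨h2, le_trans h1.le hx.2⟩, h1⟩
  have hmem : ∀ n, F.toFun^[n] y₀ ∈ Ioc p y₀ := by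
    intro n
    induction n with
    | zero => exact ⟨hpy, le_refl _⟩
    | succ n ih =>
      rw [Function.iterate_succ_apply']
      exact (hstep _ ih).1
  have hdecn : ∀ n, F.toFun^[n + 1] y₀ < F.toFun^[n] y₀ := by
    intro n
    rw [Function.iterate_succ_apply']
    exact (hstep _ (hmem n)).2
  refine ⟨hmem, hdecn, ?_⟩
  have hanti : Antitone (fun n => F.toFun^[n] y₀) :=
    antitone_nat_of_succ_le fun n => (hdecn n).le
  have hbdd : BddBelow (range fun n => F.toFun^[n] y₀) :=
    ⟨p, by rintro _ ⟨n, rfl⟩; exact (hmem n).1.le⟩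
  set ℓ := ⨅ n, F.toFun^[n] y₀ with hℓ
  have htend : Tendsto (fun n => F.toFun^[n] y₀) atTop (𝓝 ℓ) :=
    tendsto_atTop_ciInf hanti hbdd
  have hℓge : p ≤ ℓ := le_ciInf fun n => (hmem n).1.le
  have hℓle : ℓ ≤ y₀ := by
    have := ciInf_le hbdd 0
    simpa using this
  have hℓIcc : ℓ ∈ Icc (0:ℝ) 1 := ⟨le_trans hpIcc.1 hℓge, le_trans hℓle hy₀.2⟩
  refine ⟨ℓ, ⟨hℓge, hℓle⟩, ?_, htend⟩
  have hc : Tendsto (fun n => F.toFun (F.toFun^[n] y₀)) atTop (𝓝 (F.toFun ℓ)) := by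
    apply (F.contOn ℓ hℓIcc).tendsto.comp
    apply tendsto_nhdsWithin_of_tendsto_nhds_of_eventually_within _ htend
    exact Eventually.of_forall fun n => hIocIcc (hmem n)
  have hc' : Tendsto (fun n => F.toFun^[n + 1] y₀) atTop (𝓝 ℓ) :=
    htend.comp (tendsto_add_atTop_nat 1)
  have : (fun n => F.toFun (F.toFun^[n] y₀)) = fun n => F.toFun^[n + 1] y₀ := by
    funext n; rw [Function.iterate_succ_apply']
  rw [this] at hc
  exact tendsto_nhds_unique hc hc'

lemma iter_tendsto_up (F : C1Diffeo) {β y₀ : ℝ}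
    (hβIcc : β ∈ Icc (0:ℝ) 1) (hy₀ : y₀ ∈ Icc (0:ℝ) 1) (hpy : y₀ < β)
    (hfβ : F.toFun β = β)
    (hinc : ∀ x, x ∈ Ico y₀ β → x < F.toFun x) :
    (∀ n, F.toFun^[n] y₀ ∈ Ico y₀ β) ∧
    ∃ ℓ, ℓ ∈ Icc y₀ β ∧ F.toFun ℓ = ℓ ∧ Tendsto (fun n => F.toFun^[n] y₀) atTop (𝓝 ℓ) := by
  have hIcoIcc : Ico y₀ β ⊆ Icc (0:ℝ) 1 := fun x hx =>
    ⟨le_trans hy₀.1 hx.1, le_trans hx.2.le hβIcc.2⟩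
  have hstep : ∀ x ∈ Ico y₀ β, F.toFun x ∈ Ico y₀ β ∧ x < F.toFun x := by
    intro x hx
    have h1 : x < F.toFun x := hinc x hx
    have h2 : F.toFun x < β := by
      have := F.mono (hIcoIcc hx) hβIcc hx.2
      rwa [hfβ] at this
    exact ⟨⟨le_trans hx.1 h1.le, h2⟩, h1⟩
  have hmem : ∀ n, F.toFun^[n] y₀ ∈ Ico y₀ β := by
    intro n
    induction n with
    | zero => exact ⟨le_refl _, hpy⟩
    | succ n ih =>
      rw [Function.iterate_succ_apply']
      exact (hstep _ ih).1
  have hincn : ∀ n, F.toFun^[n] y₀ < F.toFun^[n + 1] y₀ := by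
    intro n
    rw [Function.iterate_succ_apply']
    exact (hstep _ (hmem n)).2
  refine ⟨hmem, ?_⟩
  have hmono : Monotone (fun n => F.toFun^[n] y₀) :=
    monotone_nat_of_le_succ fun n => (hincn n).le
  have hbdd : BddAbove (range fun n => F.toFun^[n] y₀) :=
    ⟨β, by rintro _ ⟨n, rfl⟩; exact (hmem n).2.le⟩
  set ℓ := ⨆ n, F.toFun^[n] y₀ with hℓ
  have htend : Tendsto (fun n => F.toFun^[n] y₀) atTop (𝓝 ℓ) :=
    tendsto_atTop_ciSup hmono hbdd
  have hℓle : ℓ ≤ β := ciSup_le fun n => (hmem n).2.le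
  have hℓge : y₀ ≤ ℓ := by
    have := le_ciSup hbdd 0
    simpa using this
  have hℓIcc : ℓ ∈ Icc (0:ℝ) 1 := ⟨le_trans hy₀.1 hℓge, le_trans hℓle hβIcc.2⟩
  refine ⟨ℓ, ⟨hℓge, hℓle⟩, ?_, htend⟩
  have hc : Tendsto (fun n => F.toFun (F.toFun^[n] y₀)) atTop (𝓝 (F.toFun ℓ)) := by
    apply (F.contOn ℓ hℓIcc).tendsto.comp
    apply tendsto_nhdsWithin_of_tendsto_nhds_of_eventually_within _ htend
    exact Eventually.of_forall fun n => hIcoIcc (hmem n)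
  have hc' : Tendsto (fun n => F.toFun^[n + 1] y₀) atTop (𝓝 ℓ) :=
    htend.comp (tendsto_add_atTop_nat 1)
  have : (fun n => F.toFun (F.toFun^[n] y₀)) = fun n => F.toFun^[n + 1] y₀ := by
    funext n; rw [Function.iterate_succ_apply']
  rw [this] at hc
  exact tendsto_nhds_unique hc hc'

end C1Diffeo

namespace ZdAction1bv

variable {d : ℕ} (ρ : ZdAction1bv d)

/-- Case (i): a commuting parabolic contraction contradicts a hyperbolic contraction. -/
lemma core_parabolic (a b : Fin d → ℤ) {p x₀ μ : ℝ} (hp : p ∈ Ioo (0:ℝ) 1)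
    (hx₀ : x₀ ∈ Ioc p 1)
    (hfp : (ρ.elt a).toFun p = p) (hgp : (ρ.elt b).toFun p = p)
    (hDg1 : (ρ.elt b).derivFun p = 1)
    (hμ : μ < 1)
    (hDfμ : ∀ x ∈ Ioc p x₀, (ρ.elt a).derivFun x ≤ μ)
    (hflt : ∀ x ∈ Ioc p x₀, (ρ.elt a).toFun x < x)
    (hglt : ∀ x ∈ Ioc p x₀, (ρ.elt b).toFun x < x) : False := by
  set F := (ρ.elt a).toC1Diffeo with hF
  set G := (ρ.elt b).toC1Diffeo with hG
  have hpIcc : p ∈ Icc (0:ℝ) 1 := Ioo_subset_Icc_self hp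
  have hx₀Icc : x₀ ∈ Icc (0:ℝ) 1 := ⟨le_trans hpIcc.1 hx₀.1.le, hx₀.2⟩
  have hIocIcc : Ioc p x₀ ⊆ Icc (0:ℝ) 1 := fun x hx =>
    ⟨le_trans hpIcc.1 hx.1.le, le_trans hx.2 hx₀.2⟩
  have hμ0 : 0 < μ := lt_of_lt_of_le (F.derivFun_pos x₀ hx₀Icc) (hDfμ x₀ ⟨hx₀.1, le_refl _⟩)
  -- the g-orbit of x₀ tends to p
  obtain ⟨hgmem, hgdec, ℓ, hℓmem, hℓfix, hℓtend⟩ :=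
    G.iter_tendsto_down hpIcc hx₀Icc hx₀.1 hgp hglt
  have hℓp : ℓ = p := by
    by_contra hne
    have h1 : ℓ ∈ Ioc p x₀ := ⟨lt_of_le_of_ne hℓmem.1 (Ne.symm hne), hℓmem.2⟩
    exact absurd hℓfix (hglt ℓ h1).ne
  rw [hℓp] at hℓtend
  have hganti : Antitone (fun n => G.toFun^[n] x₀) :=
    antitone_nat_of_succ_le fun n => (hgdec n).le
  -- the f-orbit of x₀
  obtain ⟨hfmem, _, _⟩ := F.iter_tendsto_down hpIcc hx₀Icc hx₀.1 hfp hflt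
  -- choose m ≥ 1 with g^[m] x₀ ≤ f x₀
  have hfx₀ : F.toFun x₀ ∈ Ioc p x₀ := by
    have h1 := hfmem 1
    simpa using h1
  obtain ⟨m, hm⟩ : ∃ m, G.toFun^[m] x₀ < F.toFun x₀ :=
    (hℓtend.eventually (eventually_lt_nhds hfx₀.1)).exists
  have hm0 : 0 < m := by
    rcases Nat.eq_zero_or_pos m with rfl | h
    · simp only [Function.iterate_zero_apply] at hm
      exact absurd hm (not_lt.mpr (hflt x₀ ⟨hx₀.1, le_refl _⟩).le)
    · exact h
  -- claim A : g-orbit dominated by f-orbit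
  have hA : ∀ n, G.toFun^[m * n] x₀ ≤ F.toFun^[n] x₀ := by
    intro n
    induction n with
    | zero => simp
    | succ n ih =>
      have h1 : G.toFun^[m * (n + 1)] x₀ = G.toFun^[m] (G.toFun^[m * n] x₀) := by
        rw [show m * (n + 1) = m + m * n by ring, Function.iterate_add_apply]
      have h2 : G.toFun^[m] (G.toFun^[m * n] x₀) ≤ G.toFun^[m] (F.toFun^[n] x₀) :=
        (G.iter_mono m).monotoneOn (G.iter_mapsTo (m * n) hx₀Icc)
          (F.iter_mapsTo n hx₀Icc) ih
      have h3 : G.toFun^[m] (F.toFun^[n] x₀) = F.toFun^[n] (G.toFun^[m] x₀) :=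
        (ρ.comm_iter_iter a b n m x₀).symm ▸ rfl
      have h3' : G.toFun^[m] (F.toFun^[n] x₀) = F.toFun^[n] (G.toFun^[m] x₀) := by
        have := ρ.comm_iter_iter a b n m x₀
        exact this.symm
      have h4 : F.toFun^[n] (G.toFun^[m] x₀) ≤ F.toFun^[n] (F.toFun x₀) :=
        (F.iter_mono n).monotoneOn (G.iter_mapsTo m hx₀Icc)
          (F.mapsTo hx₀Icc) hm.le
      have h5 : F.toFun^[n] (F.toFun x₀) = F.toFun^[n + 1] x₀ :=
        (Function.iterate_succ_apply F.toFun n x₀).symm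
      calc G.toFun^[m * (n + 1)] x₀ = G.toFun^[m] (G.toFun^[m * n] x₀) := h1
        _ ≤ G.toFun^[m] (F.toFun^[n] x₀) := h2
        _ = F.toFun^[n] (G.toFun^[m] x₀) := h3'
        _ ≤ F.toFun^[n] (F.toFun x₀) := h4
        _ = F.toFun^[n + 1] x₀ := h5
  -- claim B : geometric contraction of the f-orbit
  have hB : ∀ n, F.toFun^[n] x₀ - p ≤ μ ^ n * (x₀ - p) := by
    intro n
    induction n with
    | zero => simp
    | succ n ih =>
      set y := F.toFun^[n] x₀ with hy
      have hymem : y ∈ Ioc p x₀ := hfmem n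
      obtain ⟨ξ, hξmem, hξeq⟩ := mvt_aux F.hasDeriv hymem.1 hpIcc (hIocIcc hymem)
      have hξIoc : ξ ∈ Ioc p x₀ := ⟨hξmem.1, le_trans hξmem.2.le hymem.2⟩
      have h1 : F.toFun y - p ≤ μ * (y - p) := by
        rw [hfp] at hξeq
        have h2 : F.derivFun ξ ≤ μ := hDfμ ξ hξIoc
        nlinarith [hξeq, sub_pos.mpr hymem.1]
      calc F.toFun^[n + 1] x₀ - p = F.toFun y - p := by
            rw [Function.iterate_succ_apply']
        _ ≤ μ * (y - p) := h1
        _ ≤ μ * (μ ^ n * (x₀ - p)) := mul_le_mul_of_nonneg_left ih hμ0.le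
        _ = μ ^ (n + 1) * (x₀ - p) := by ring
  -- the slow lower bound for the g-orbit
  set μ₁ := μ ^ ((1:ℝ) / (2 * (m:ℝ))) with hμ₁
  have hμ₁pos : 0 < μ₁ := Real.rpow_pos_of_pos hμ0 _
  have hexppos : 0 < (1:ℝ) / (2 * (m:ℝ)) := by positivity
  have hμ₁lt : μ₁ < 1 := Real.rpow_lt_one hμ0.le hμ hexppos
  have hμ₁pow : μ₁ ^ (2 * m) = μ := by
    rw [hμ₁, ← Real.rpow_natCast (μ ^ ((1:ℝ) / (2 * (m:ℝ)))) (2 * m),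
      ← Real.rpow_mul hμ0.le]
    have : (1:ℝ) / (2 * (m:ℝ)) * ((2 * m : ℕ) : ℝ) = 1 := by
      push_cast
      field_simp
    rw [this, Real.rpow_one]
  -- continuity of Dg at p
  have hcont : Tendsto G.derivFun (𝓝[Icc (0:ℝ) 1] p) (𝓝 (G.derivFun p)) :=
    G.derivFun_cont p hpIcc
  have hev : ∀ᶠ y in 𝓝[Icc (0:ℝ) 1] p, μ₁ < G.derivFun y := by
    apply hcont.eventually
    apply eventually_gt_nhds
    rw [show G.derivFun p = 1 from hDg1]
    exact hμ₁lt
  obtain ⟨η, hη0, hηsub⟩ := Metric.mem_nhdsWithin_iff.mp hev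
  obtain ⟨N, hN⟩ : ∃ N, G.toFun^[N] x₀ < p + η :=
    (hℓtend.eventually (eventually_lt_nhds (by linarith))).exists
  have hDgζ : ∀ ζ, p < ζ → ζ ≤ G.toFun^[N] x₀ → μ₁ < G.derivFun ζ := by
    intro ζ h1 h2
    have hζIcc : ζ ∈ Icc (0:ℝ) 1 :=
      hIocIcc ⟨h1, le_trans h2 (hgmem N).2⟩
    apply hηsub
    refine ⟨Metric.mem_ball.mpr ?_, hζIcc⟩
    rw [Real.dist_eq, abs_of_pos (by linarith)]
    linarith
  have hLB : ∀ k, μ₁ ^ k * (G.toFun^[N] x₀ - p) ≤ G.toFun^[N + k] x₀ - p := by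
    intro k
    induction k with
    | zero => simp
    | succ k ih =>
      set y := G.toFun^[N + k] x₀ with hy
      have hymem : y ∈ Ioc p x₀ := hgmem (N + k)
      have hyle : y ≤ G.toFun^[N] x₀ := hganti (Nat.le_add_right N k)
      obtain ⟨ξ, hξmem, hξeq⟩ := mvt_aux G.hasDeriv hymem.1 hpIcc (hIocIcc hymem)
      have hξμ : μ₁ < G.derivFun ξ :=
        hDgζ ξ hξmem.1 (le_trans hξmem.2.le hyle)
      have h1 : μ₁ * (y - p) ≤ G.toFun y - p := by
        rw [hgp] at hξeq
        nlinarith [sub_pos.mpr hymem.1]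
      calc μ₁ ^ (k + 1) * (G.toFun^[N] x₀ - p)
          = μ₁ * (μ₁ ^ k * (G.toFun^[N] x₀ - p)) := by ring
        _ ≤ μ₁ * (y - p) := mul_le_mul_of_nonneg_left ih hμ₁pos.le
        _ ≤ G.toFun y - p := h1
        _ = G.toFun^[N + (k + 1)] x₀ - p := by
            rw [show N + (k + 1) = (N + k) + 1 by ring, Function.iterate_succ_apply']
  set C := G.toFun^[N] x₀ - p with hC
  have hC0 : 0 < C := sub_pos.mpr (hgmem N).1
  -- combine for all n ≥ N
  have hfinal : ∀ n, N ≤ n → C ≤ μ₁ ^ n * (x₀ - p) := by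
    intro n hn
    have hmn : N ≤ m * n := le_trans hn (Nat.le_mul_of_pos_left n hm0)
    have h1 : μ₁ ^ (m * n - N) * C ≤ G.toFun^[m * n] x₀ - p := by
      have := hLB (m * n - N)
      rwa [show N + (m * n - N) = m * n by omega] at this
    have h2 : G.toFun^[m * n] x₀ - p ≤ μ ^ n * (x₀ - p) :=
      le_trans (by linarith [hA n]) (hB n)
    have hnat : 2 * m * n = (m * n - N) + (m * n + N) := by
      have h2mn : 2 * m * n = 2 * (m * n) := by ring
      omega
    have h3 : μ ^ n = μ₁ ^ (m * n - N) * μ₁ ^ (m * n + N) := by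
      rw [← hμ₁pow, ← pow_mul, hnat, pow_add]
    have h4 : μ₁ ^ (m * n - N) * C ≤ μ₁ ^ (m * n - N) * (μ₁ ^ (m * n + N) * (x₀ - p)) := by
      rw [← mul_assoc, ← h3]
      linarith
    have h5 : C ≤ μ₁ ^ (m * n + N) * (x₀ - p) :=
      le_of_mul_le_mul_left h4 (pow_pos hμ₁pos _)
    have h6 : μ₁ ^ (m * n + N) ≤ μ₁ ^ n :=
      pow_le_pow_of_le_one hμ₁pos.le hμ₁lt.le
        (le_trans (Nat.le_mul_of_pos_left n hm0) (Nat.le_add_right _ _))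
    calc C ≤ μ₁ ^ (m * n + N) * (x₀ - p) := h5
      _ ≤ μ₁ ^ n * (x₀ - p) :=
          mul_le_mul_of_nonneg_right h6 (by linarith [hx₀.1])
  have htendpow : Tendsto (fun n => μ₁ ^ n * (x₀ - p)) atTop (𝓝 0) := by
    have := tendsto_pow_atTop_nhds_zero_of_lt_one hμ₁pos.le hμ₁lt
    simpa using this.mul_const (x₀ - p)
  have hev2 : ∀ᶠ n in atTop, μ₁ ^ n * (x₀ - p) < C :=
    htendpow.eventually (eventually_lt_nhds hC0)
  obtain ⟨n, hn1, hn2⟩ := ((eventually_ge_atTop N).and hev2).exists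
  exact absurd (hfinal n hn1) (not_le.mpr hn2)

end ZdAction1bv

namespace ZdAction1bv

variable {d : ℕ} (ρ : ZdAction1bv d)

/-- Case (ii): the Kopell-type gap argument. -/
lemma core_gap (a b : Fin d → ℤ) {p α β : ℝ} (hp : p ∈ Ioo (0:ℝ) 1)
    (hα : p < α) (hαβ : α < β) (hβ1 : β ≤ 1)
    (hfp : (ρ.elt a).toFun p = p)
    (hflt : ∀ x ∈ Ioc p β, (ρ.elt a).toFun x < x)
    (hgp : (ρ.elt b).toFun p = p)
    (hDg1 : (ρ.elt b).derivFun p = 1)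
    (hgα : (ρ.elt b).toFun α = α) (hgβ : (ρ.elt b).toFun β = β)
    (hggt : ∀ x ∈ Ioo α β, x < (ρ.elt b).toFun x) : False := by
  set F := (ρ.elt a).toC1Diffeo with hF
  set G := (ρ.elt b).toC1Diffeo with hG
  have hpIcc : p ∈ Icc (0:ℝ) 1 := Ioo_subset_Icc_self hp
  have hβIcc : β ∈ Icc (0:ℝ) 1 := ⟨le_trans hpIcc.1 (lt_trans hα hαβ).le, hβ1⟩
  have hαIcc : α ∈ Icc (0:ℝ) 1 := ⟨le_trans hpIcc.1 hα.le, le_trans hαβ.le hβ1⟩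
  have hsubIcc : Ioo α β ⊆ Icc (0:ℝ) 1 := fun x hx =>
    ⟨le_trans hαIcc.1 hx.1.le, le_trans hx.2.le hβ1⟩
  -- f β ≤ α
  have hfβfix : G.toFun (F.toFun β) = F.toFun β := by
    show (ρ.elt b).toFun ((ρ.elt a).toFun β) = (ρ.elt a).toFun β
    rw [← ρ.comm a b β]
    show (ρ.elt a).toFun (G.toFun β) = _
    rw [hgβ]
  have hfβltβ : F.toFun β < β := hflt β ⟨lt_trans hα hαβ, le_refl _⟩
  have hfβgtp : p < F.toFun β := by
    have h := F.mono hpIcc hβIcc (lt_trans hα hαβ)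
    rwa [hfp] at h
  have hfβα : F.toFun β ≤ α := by
    by_contra hcon
    push_neg at hcon
    exact absurd hfβfix (hggt _ ⟨hcon, hfβltβ⟩).ne'
  -- total variation
  set L : ℝ → ℝ := fun x => Real.log (F.derivFun x) with hL
  set V : ℝ := (eVariationOn L (Icc 0 1)).toReal with hV
  have hV0 : 0 ≤ V := ENNReal.toReal_nonneg
  set DF : ℕ → ℝ → ℝ := fun n x => ∏ k ∈ Finset.range n, F.derivFun (F.toFun^[k] x) with hDF
  set DG : ℕ → ℝ → ℝ := fun m x => ∏ k ∈ Finset.range m, G.derivFun (G.toFun^[k] x) with hDG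
  have hDFpos : ∀ n : ℕ, ∀ x ∈ Icc (0:ℝ) 1, 0 < DF n x := fun n x hx =>
    Finset.prod_pos fun k _ => F.derivFun_pos _ (F.iter_mapsTo k hx)
  have hDGpos : ∀ m : ℕ, ∀ x ∈ Icc (0:ℝ) 1, 0 < DG m x := fun m x hx =>
    Finset.prod_pos fun k _ => G.derivFun_pos _ (G.iter_mapsTo k hx)
  have hDGp : ∀ m : ℕ, DG m p = 1 := by
    intro m
    have h1 : ∀ k : ℕ, G.derivFun (G.toFun^[k] p) = 1 := by
      intro k
      rw [Function.iterate_fixed hgp k]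
      exact hDg1
    simp only [hDG]
    rw [Finset.prod_congr rfl fun k _ => h1 k, Finset.prod_const_one]
  have hDGcont : ∀ m : ℕ, ContinuousOn (DG m) (Icc (0:ℝ) 1) := by
    intro m
    apply continuousOn_finset_prod
    intro k _
    exact G.derivFun_cont.comp (G.iter_contOn k) (G.iter_mapsTo k)
  -- Main distortion estimate
  have hmain : ∀ m : ℕ, ∀ u₀ ∈ Ioo α β, DG m u₀ ≤ Real.exp V := by
    intro m u₀ hu₀
    have hu₀Icc : u₀ ∈ Icc (0:ℝ) 1 := hsubIcc hu₀
    obtain ⟨hupmem, -⟩ := G.iter_tendsto_up hβIcc hu₀Icc hu₀.2 hgβ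
      (fun x hx => hggt x ⟨lt_of_lt_of_le hu₀.1 hx.1, hx.2⟩)
    set w₀ := G.toFun^[m] u₀ with hw₀
    have hw₀mem : w₀ ∈ Ioo α β := ⟨lt_of_lt_of_le hu₀.1 (hupmem m).1, (hupmem m).2⟩
    have hw₀Icc : w₀ ∈ Icc (0:ℝ) 1 := hsubIcc hw₀mem
    have huw : u₀ ≤ w₀ := (hupmem m).1
    have hpu : p < u₀ := lt_trans hα hu₀.1
    have hpw : p < w₀ := lt_of_lt_of_le hpu huw
    have hfltu : ∀ x ∈ Ioc p u₀, F.toFun x < x := fun x hx =>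
      hflt x ⟨hx.1, le_trans hx.2 hu₀.2.le⟩
    -- f-orbit of u₀ tends to p
    obtain ⟨humem, -, ℓu, hℓumem, hℓufix, hℓutend⟩ :=
      F.iter_tendsto_down hpIcc hu₀Icc hpu hfp hfltu
    have hℓup : ℓu = p := by
      by_contra hne
      exact absurd hℓufix
        (hfltu ℓu ⟨lt_of_le_of_ne hℓumem.1 (Ne.symm hne), hℓumem.2⟩).ne
    rw [hℓup] at hℓutend
    -- f w₀ ≤ u₀
    have hfw₀ : F.toFun w₀ ≤ u₀ := by
      have h1 : F.toFun w₀ < F.toFun β := F.mono hw₀Icc hβIcc hw₀mem.2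
      linarith [hu₀.1]
    -- key estimate for every n
    have hkey : ∀ n : ℕ, Real.log (DG m u₀) ≤ Real.log (DG m (F.toFun^[n] u₀)) + V := by
      intro n
      have hcom := ρ.deriv_comm_iter a b n m hu₀Icc
      -- hcom : DG m (F^[n] u₀) * DF n u₀ = DF n (G^[m] u₀) * DG m u₀
      have hfnIcc : F.toFun^[n] u₀ ∈ Icc (0:ℝ) 1 := F.iter_mapsTo n hu₀Icc
      -- the variation bound
      have hsum : ∑ k ∈ Finset.range n, |L (F.toFun^[k] w₀) - L (F.toFun^[k] u₀)| ≤ V := by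
        set c : ℕ → ℝ := fun k => if k < n then F.toFun^[n - 1 - k] u₀ else w₀ with hc
        set e : ℕ → ℝ := fun k => if k < n then F.toFun^[n - 1 - k] w₀ else w₀ with he
        have hcIcc : ∀ k, c k ∈ Icc (0:ℝ) 1 := by
          intro k
          by_cases hk : k < n <;> simp only [hc, hk, if_true, if_false]
          · exact F.iter_mapsTo _ hu₀Icc
          · exact hw₀Icc
        have heIcc : ∀ k, e k ∈ Icc (0:ℝ) 1 := by
          intro k
          by_cases hk : k < n <;> simp only [he, hk, if_true, if_false]
          · exact F.iter_mapsTo _ hw₀Icc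
          · exact hw₀Icc
        have hce : ∀ k, c k ≤ e k := by
          intro k
          by_cases hk : k < n <;> simp only [hc, he, hk, if_true, if_false]
          · exact (F.iter_mono _).monotoneOn hu₀Icc hw₀Icc huw
          · exact le_refl _
        have hec : ∀ k, e k ≤ c (k + 1) := by
          intro k
          by_cases hk1 : k + 1 < n
          · have hk : k < n := by omega
            simp only [hc, he, hk, hk1, if_true]
            have hj : n - 1 - k = (n - 1 - (k + 1)) + 1 := by omega
            rw [hj, Function.iterate_succ_apply]
            exact (F.iter_mono (n - 1 - (k + 1))).monotoneOn
              (F.mapsTo hw₀Icc) hu₀Icc (le_trans hfw₀ (le_refl _))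
          · by_cases hk : k < n
            · have hkn : k = n - 1 := by omega
              have hz : n - 1 - k = 0 := by omega
              simp only [hc, he, hk, hk1, if_true, if_false, hz,
                Function.iterate_zero_apply]
              exact le_rfl
            · simp only [hc, he, hk, hk1, if_false]
              exact le_rfl
        have hVP := variation_pairs (ρ.elt a) c e hcIcc heIcc hce hec n
        have hre : ∑ k ∈ Finset.range n, |L (F.toFun^[k] w₀) - L (F.toFun^[k] u₀)|
            = ∑ k ∈ Finset.range n,
                |Real.log ((ρ.elt a).derivFun (e k)) - Real.log ((ρ.elt a).derivFun (c k))| := by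
          rw [← Finset.sum_range_reflect
            (fun k => |L (F.toFun^[k] w₀) - L (F.toFun^[k] u₀)|) n]
          apply Finset.sum_congr rfl
          intro j hj
          have hjn : j < n := Finset.mem_range.mp hj
          have h1 : n - 1 - j < n := by omega
          simp only [hc, he, h1, if_pos hjn]
          rfl
        rw [hre]
        exact hVP
      -- logs
      have hlogDFu : Real.log (DF n u₀) = ∑ k ∈ Finset.range n, L (F.toFun^[k] u₀) :=
        Real.log_prod fun k _ => (F.derivFun_pos _ (F.iter_mapsTo k hu₀Icc)).ne'
      have hlogDFw : Real.log (DF n w₀) = ∑ k ∈ Finset.range n, L (F.toFun^[k] w₀) :=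
        Real.log_prod fun k _ => (F.derivFun_pos _ (F.iter_mapsTo k hw₀Icc)).ne'
      have hlogeq : Real.log (DG m (F.toFun^[n] u₀)) + Real.log (DF n u₀)
          = Real.log (DF n w₀) + Real.log (DG m u₀) := by
        rw [← Real.log_mul (hDGpos m _ hfnIcc).ne' (hDFpos n _ hu₀Icc).ne',
          ← Real.log_mul (hDFpos n _ hw₀Icc).ne' (hDGpos m _ hu₀Icc).ne']
        exact congrArg Real.log hcom
      have hdiff : Real.log (DF n w₀) - Real.log (DF n u₀)
          = ∑ k ∈ Finset.range n, (L (F.toFun^[k] w₀) - L (F.toFun^[k] u₀)) := by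
        rw [hlogDFu, hlogDFw, Finset.sum_sub_distrib]
      have habs : |Real.log (DF n w₀) - Real.log (DF n u₀)| ≤ V := by
        rw [hdiff]
        exact le_trans (Finset.abs_sum_le_sum_abs _ _) hsum
      have h2 : Real.log (DF n w₀) - Real.log (DF n u₀) ≥ -V := by
        rcases abs_le.mp habs with ⟨h, _⟩
        linarith
      linarith [hlogeq, h2]
    -- take the limit n → ∞
    have htendDG : Tendsto (fun n => DG m (F.toFun^[n] u₀)) atTop (𝓝 1) := by
      have h1 : Tendsto (fun n => DG m (F.toFun^[n] u₀)) atTop (𝓝 (DG m p)) := by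
        apply (hDGcont m p hpIcc).tendsto.comp
        apply tendsto_nhdsWithin_of_tendsto_nhds_of_eventually_within _ hℓutend
        exact Eventually.of_forall fun n => F.iter_mapsTo n hu₀Icc
      rwa [hDGp m] at h1
    have htendlog : Tendsto (fun n => Real.log (DG m (F.toFun^[n] u₀))) atTop (𝓝 0) := by
      have h1 := (Real.continuousAt_log one_ne_zero).tendsto.comp htendDG
      simpa [Function.comp_def] using h1
    have hfinal : Real.log (DG m u₀) - V ≤ 0 := by
      apply ge_of_tendsto htendlog
      exact Eventually.of_forall fun n => by linarith [hkey n]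
    have hpos := hDGpos m u₀ hu₀Icc
    calc DG m u₀ = Real.exp (Real.log (DG m u₀)) := (Real.exp_log hpos).symm
      _ ≤ Real.exp V := Real.exp_le_exp.mpr (by linarith)
  -- conclusion: pick u close to α
  have hexpVpos : 0 < Real.exp V := Real.exp_pos V
  obtain ⟨u, hu⟩ : ∃ u : ℝ, u = α + (β - α) / (2 * Real.exp V) := ⟨_, rfl⟩
  have hβα : 0 < β - α := sub_pos.mpr hαβ
  have hu1 : α < u := by
    have : 0 < (β - α) / (2 * Real.exp V) := by positivity
    linarith
  have hu2 : u < β := by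
    have hV1 : 1 ≤ Real.exp V := Real.one_le_exp hV0
    have h1 : (β - α) / (2 * Real.exp V) ≤ (β - α) / 2 := by
      apply div_le_div_of_nonneg_left hβα.le two_pos
      linarith
    linarith
  have humem : u ∈ Ioo α β := ⟨hu1, hu2⟩
  have huIcc : u ∈ Icc (0:ℝ) 1 := hsubIcc humem
  obtain ⟨hupmem, ℓ, hℓmem, hℓfix, hℓtend⟩ := G.iter_tendsto_up hβIcc huIcc hu2 hgβ
    (fun x hx => hggt x ⟨lt_of_lt_of_le hu1 hx.1, hx.2⟩)
  have hℓβ : ℓ = β := by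
    by_contra hne
    have h1 : ℓ ∈ Ioo α β := ⟨lt_of_lt_of_le hu1 hℓmem.1, lt_of_le_of_ne hℓmem.2 hne⟩
    exact absurd hℓfix (hggt ℓ h1).ne'
  rw [hℓβ] at hℓtend
  have hmvt : ∀ m : ℕ, G.toFun^[m] u - α ≤ (β - α) / 2 := by
    intro m
    obtain ⟨ζ, hζmem, hζeq⟩ := mvt_aux (fun x hx => G.iter_hasDeriv m x hx) hu1 hαIcc huIcc
    have hζgap : ζ ∈ Ioo α β := ⟨hζmem.1, lt_trans hζmem.2 hu2⟩
    have hζbound : DG m ζ ≤ Real.exp V := hmain m ζ hζgap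
    have hgα' : G.toFun^[m] α = α := Function.iterate_fixed hgα m
    rw [hgα'] at hζeq
    have h1 : G.toFun^[m] u - α ≤ Real.exp V * (u - α) := by
      have h2 : (0:ℝ) < u - α := sub_pos.mpr hu1
      calc G.toFun^[m] u - α = DG m ζ * (u - α) := hζeq
        _ ≤ Real.exp V * (u - α) := mul_le_mul_of_nonneg_right hζbound h2.le
    have h3 : Real.exp V * (u - α) = (β - α) / 2 := by
      rw [hu]
      field_simp
      ring
    linarith
  have htendsub : Tendsto (fun m => G.toFun^[m] u - α) atTop (𝓝 (β - α)) :=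
    hℓtend.sub_const α
  have hcontra : β - α ≤ (β - α) / 2 :=
    le_of_tendsto htendsub (Eventually.of_forall hmvt)
  linarith

end ZdAction1bv

namespace C1Diffeo

lemma sign_const (G : C1Diffeo) {s t : ℝ} (hsub : Ioo s t ⊆ Icc (0:ℝ) 1)
    (hne : ∀ x ∈ Ioo s t, G.toFun x ≠ x) :
    (∀ x ∈ Ioo s t, G.toFun x < x) ∨ (∀ x ∈ Ioo s t, x < G.toFun x) := by
  by_contra hcon
  push_neg at hcon
  obtain ⟨⟨x, hx, hx2⟩, ⟨y, hy, hy2⟩⟩ := hcon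
  have hxlt : x < G.toFun x := lt_of_le_of_ne hx2 (Ne.symm (hne x hx))
  have hylt : G.toFun y < y := lt_of_le_of_ne hy2 (hne y hy)
  set φ : ℝ → ℝ := fun w => G.toFun w - w with hφ
  have hφcont : ContinuousOn φ (Icc (0:ℝ) 1) := G.contOn.sub continuousOn_id
  have hmem : ∀ w₁ w₂ : ℝ, w₁ ∈ Ioo s t → w₂ ∈ Ioo s t → Icc w₁ w₂ ⊆ Ioo s t := by
    intro w₁ w₂ h1 h2 w hw
    exact ⟨lt_of_lt_of_le h1.1 hw.1, lt_of_le_of_lt hw.2 h2.2⟩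
  have hφx : 0 < φ x := sub_pos.mpr hxlt
  have hφy : φ y < 0 := sub_neg.mpr hylt
  rcases lt_trichotomy x y with h | h | h
  · have hIcc : Icc x y ⊆ Ioo s t := hmem x y hx hy
    have := intermediate_value_Icc' h.le (hφcont.mono (hIcc.trans hsub))
    obtain ⟨w, hw, hw0⟩ := this ⟨hφy.le, hφx.le⟩
    exact hne w (hIcc hw) (by rw [← sub_eq_zero]; exact hw0)
  · rw [h] at hφx; linarith
  · have hIcc : Icc y x ⊆ Ioo s t := hmem y x hy hx
    have := intermediate_value_Icc h.le (hφcont.mono (hIcc.trans hsub))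
    obtain ⟨w, hw, hw0⟩ := this ⟨hφy.le, hφx.le⟩
    exact hne w (hIcc hw) (by rw [← sub_eq_zero]; exact hw0)

end C1Diffeo

namespace ZdAction1bv

variable {d : ℕ} (ρ : ZdAction1bv d)

/-- Right-side lemma, contracting case. -/
lemma side_right_contract (a b : Fin d → ℤ) {p : ℝ} (hp : p ∈ Ioo (0:ℝ) 1)
    (hfix : (ρ.elt a).toFun p = p) (hlam : (ρ.elt a).derivFun p < 1)
    (hgp : (ρ.elt b).toFun p = p) (hDg1 : (ρ.elt b).derivFun p = 1)
    (hmoved : ∀ ε > (0:ℝ), ∃ x, p < x ∧ x < p + ε ∧ (ρ.elt b).toFun x ≠ x) : False := by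
  set F := (ρ.elt a).toC1Diffeo with hF
  set G := (ρ.elt b).toC1Diffeo with hG
  have hpIcc : p ∈ Icc (0:ℝ) 1 := Ioo_subset_Icc_self hp
  set lam := (ρ.elt a).derivFun p with hlamdef
  have hlam0 : 0 < lam := F.derivFun_pos p hpIcc
  set μ := (1 + lam) / 2 with hμdef
  have hμ1 : μ < 1 := by rw [hμdef]; linarith
  have hlammu : lam < μ := by rw [hμdef]; linarith
  -- continuity of Df at p gives a contraction zone
  have hcont : Tendsto F.derivFun (𝓝[Icc (0:ℝ) 1] p) (𝓝 (F.derivFun p)) :=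
    F.derivFun_cont p hpIcc
  have hev : ∀ᶠ y in 𝓝[Icc (0:ℝ) 1] p, F.derivFun y < μ :=
    hcont.eventually (eventually_lt_nhds hlammu)
  obtain ⟨η, hη0, hηsub⟩ := Metric.mem_nhdsWithin_iff.mp hev
  obtain ⟨x₀, hx₀def⟩ : ∃ x₀ : ℝ, x₀ = min (p + η / 2) 1 := ⟨_, rfl⟩
  have hx₀p : p < x₀ := by
    rw [hx₀def]
    exact lt_min (by linarith) hp.2
  have hx₀1 : x₀ ≤ 1 := by rw [hx₀def]; exact min_le_right _ _
  have hx₀Icc : x₀ ∈ Icc (0:ℝ) 1 := ⟨le_trans hpIcc.1 hx₀p.le, hx₀1⟩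
  have hIocIcc : Ioc p x₀ ⊆ Icc (0:ℝ) 1 := fun x hx =>
    ⟨le_trans hpIcc.1 hx.1.le, le_trans hx.2 hx₀1⟩
  have hDfμ : ∀ x ∈ Ioc p x₀, F.derivFun x < μ := by
    intro x hx
    apply hηsub
    refine ⟨Metric.mem_ball.mpr ?_, hIocIcc hx⟩
    rw [Real.dist_eq, abs_of_pos (by linarith [hx.1])]
    have : x ≤ p + η / 2 := le_trans hx.2 (by rw [hx₀def]; exact min_le_left _ _)
    linarith
  have hflt : ∀ x ∈ Ioc p x₀, F.toFun x < x := by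
    intro x hx
    obtain ⟨ξ, hξmem, hξeq⟩ := mvt_aux F.hasDeriv hx.1 hpIcc (hIocIcc hx)
    rw [hfix] at hξeq
    have h1 : F.derivFun ξ < μ := hDfμ ξ ⟨hξmem.1, le_trans hξmem.2.le hx.2⟩
    nlinarith [sub_pos.mpr hx.1]
  -- dichotomy
  by_cases hz : ∃ z, z ∈ Ioo p x₀ ∧ (ρ.elt b).toFun z = z
  · -- Case (ii): there is a g-fixed point; build a gap and apply core_gap
    obtain ⟨z, hzmem, hgz⟩ := hz
    have hzIcc : z ∈ Icc (0:ℝ) 1 := hIocIcc ⟨hzmem.1, hzmem.2.le⟩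
    -- a moved point below z
    obtain ⟨u, hu1, hu2, hgu⟩ := hmoved (z - p) (by linarith [hzmem.1])
    have huz : u < z := by linarith
    have huIcc : u ∈ Icc (0:ℝ) 1 := hIocIcc ⟨hu1, by linarith [hzmem.2]⟩
    -- a g-fixed point below u : iterate f on z
    have hfltz : ∀ x ∈ Ioc p z, F.toFun x < x := fun x hx =>
      hflt x ⟨hx.1, le_trans hx.2 hzmem.2.le⟩
    obtain ⟨hzomem, -, ℓz, hℓzmem, hℓzfix, hℓztend⟩ :=
      F.iter_tendsto_down hpIcc hzIcc hzmem.1 hfix hfltz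
    have hℓzp : ℓz = p := by
      by_contra hne
      exact absurd hℓzfix
        (hfltz ℓz ⟨lt_of_le_of_ne hℓzmem.1 (Ne.symm hne), hℓzmem.2⟩).ne
    rw [hℓzp] at hℓztend
    obtain ⟨n, hn⟩ : ∃ n, F.toFun^[n] z < u :=
      (hℓztend.eventually (eventually_lt_nhds hu1)).exists
    obtain ⟨z', hz'def⟩ : ∃ z' : ℝ, z' = F.toFun^[n] z := ⟨_, rfl⟩
    have hz'mem : z' ∈ Ioc p z := hz'def ▸ hzomem n
    have hz'u : z' < u := hz'def ▸ hn
    have hz'Icc : z' ∈ Icc (0:ℝ) 1 := hIocIcc ⟨hz'mem.1, le_trans hz'mem.2 hzmem.2.le⟩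
    have hgz' : (ρ.elt b).toFun z' = z' := by
      rw [hz'def]
      show G.toFun (F.toFun^[n] z) = F.toFun^[n] z
      have h1 := ρ.comm_iter b a n z
      -- (elt b) ((elt a)^[n] z) = (elt a)^[n] ((elt b) z)
      show (ρ.elt b).toFun ((ρ.elt a).toFun^[n] z) = (ρ.elt a).toFun^[n] z
      rw [h1, hgz]
    -- α and β
    set S₁ : Set ℝ := Icc z' u ∩ (fun x => (ρ.elt b).toFun x - x) ⁻¹' {0} with hS₁
    set S₂ : Set ℝ := Icc u z ∩ (fun x => (ρ.elt b).toFun x - x) ⁻¹' {0} with hS₂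
    have hφcont : ContinuousOn (fun x => (ρ.elt b).toFun x - x) (Icc (0:ℝ) 1) :=
      G.contOn.sub continuousOn_id
    have hS₁closed : IsClosed S₁ :=
      (hφcont.mono (Icc_subset_Icc hz'Icc.1 huIcc.2)).preimage_isClosed_of_isClosed
        isClosed_Icc isClosed_singleton
    have hS₂closed : IsClosed S₂ :=
      (hφcont.mono (Icc_subset_Icc huIcc.1 hzIcc.2)).preimage_isClosed_of_isClosed
        isClosed_Icc isClosed_singleton
    have hS₁ne : S₁.Nonempty := ⟨z', ⟨⟨le_refl _, hz'u.le⟩, by simp [hgz']⟩⟩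
    have hS₂ne : S₂.Nonempty := ⟨z, ⟨⟨huz.le, le_refl _⟩, by simp [hgz]⟩⟩
    have hS₁bdd : BddAbove S₁ := ⟨u, fun w hw => hw.1.2⟩
    have hS₂bdd : BddBelow S₂ := ⟨u, fun w hw => hw.1.1⟩
    set α := sSup S₁ with hα
    set β := sInf S₂ with hβ
    have hαmem : α ∈ S₁ := hS₁closed.csSup_mem hS₁ne hS₁bdd
    have hβmem : β ∈ S₂ := hS₂closed.csInf_mem hS₂ne hS₂bdd
    have hgα : (ρ.elt b).toFun α = α := by
      have := hαmem.2
      simp only [mem_preimage, mem_singleton_iff] at this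
      linarith
    have hgβ : (ρ.elt b).toFun β = β := by
      have := hβmem.2
      simp only [mem_preimage, mem_singleton_iff] at this
      linarith
    have hαu : α < u := lt_of_le_of_ne hαmem.1.2 (fun h => hgu (h ▸ hgα))
    have hβu : u < β := lt_of_le_of_ne hβmem.1.1 (fun h => hgu (by rw [h]; exact hgβ))
    have hpα : p < α := lt_of_lt_of_le hz'mem.1 hαmem.1.1
    have hβz : β ≤ z := hβmem.1.2
    have hβ1 : β ≤ 1 := le_trans hβz hzIcc.2
    have hαβ : α < β := lt_trans hαu hβu
    have hnofix : ∀ x ∈ Ioo α β, (ρ.elt b).toFun x ≠ x := by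
      intro x hx hfx
      rcases lt_trichotomy x u with h | h | h
      · have hxS : x ∈ S₁ := ⟨⟨le_trans hαmem.1.1 hx.1.le, h.le⟩, by simp [hfx]⟩
        exact absurd (le_csSup hS₁bdd hxS) (not_le.mpr hx.1)
      · exact hgu (h ▸ hfx)
      · have hxS : x ∈ S₂ := ⟨⟨h.le, le_trans hx.2.le hβz⟩, by simp [hfx]⟩
        exact absurd (csInf_le hS₂bdd hxS) (not_le.mpr hx.2)
    have hIooIcc : Ioo α β ⊆ Icc (0:ℝ) 1 := fun x hx =>
      ⟨le_trans hz'Icc.1 (le_trans hαmem.1.1 hx.1.le), le_trans hx.2.le hβ1⟩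
    have hfltβ : ∀ x ∈ Ioc p β, (ρ.elt a).toFun x < x := fun x hx =>
      hflt x ⟨hx.1, le_trans hx.2 (le_trans hβz hzmem.2.le)⟩
    rcases G.sign_const hIooIcc hnofix with hneg | hpos
    · -- g < id on the gap: use -b
      have hgpminus : (ρ.elt (-b)).toFun p = p := by
        have h1 := ρ.inv_left b p
        rwa [hgp] at h1
      have hDg1minus : (ρ.elt (-b)).derivFun p = 1 := by
        have h1 := ρ.deriv_inv b hpIcc
        rw [hgp, hDg1, mul_one] at h1
        exact h1
      have hgαminus : (ρ.elt (-b)).toFun α = α := by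
        calc (ρ.elt (-b)).toFun α = (ρ.elt (-b)).toFun ((ρ.elt b).toFun α) := by rw [hgα]
          _ = α := ρ.inv_left b α
      have hgβminus : (ρ.elt (-b)).toFun β = β := by
        calc (ρ.elt (-b)).toFun β = (ρ.elt (-b)).toFun ((ρ.elt b).toFun β) := by rw [hgβ]
          _ = β := ρ.inv_left b β
      have hggtminus : ∀ x ∈ Ioo α β, x < (ρ.elt (-b)).toFun x := by
        intro x hx
        have hxIcc : x ∈ Icc (0:ℝ) 1 := hIooIcc hx
        have h1 : (ρ.elt b).toFun x ∈ Icc (0:ℝ) 1 := G.mapsTo hxIcc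
        have h2 := (ρ.elt (-b)).toC1Diffeo.mono h1 hxIcc (hneg x hx)
        rwa [show (ρ.elt (-b)).toC1Diffeo.toFun ((ρ.elt b).toFun x) = x from ρ.inv_left b x]
          at h2
      exact ρ.core_gap a (-b) hp hpα hαβ hβ1 hfix hfltβ hgpminus hDg1minus
        hgαminus hgβminus hggtminus
    · exact ρ.core_gap a b hp hpα hαβ hβ1 hfix hfltβ hgp hDg1 hgα hgβ hpos
  · -- Case (i): no g-fixed point in (p, x₀)
    push_neg at hz
    have hIooIcc : Ioo p x₀ ⊆ Icc (0:ℝ) 1 := fun x hx =>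
      ⟨le_trans hpIcc.1 hx.1.le, le_trans hx.2.le hx₀1⟩
    have hnofix : ∀ x ∈ Ioo p x₀, G.toFun x ≠ x := fun x hx => hz x hx
    obtain ⟨x₁, hx₁def⟩ : ∃ x₁ : ℝ, x₁ = (p + x₀) / 2 := ⟨_, rfl⟩
    have hx₁p : p < x₁ := by rw [hx₁def]; linarith
    have hx₁x₀ : x₁ < x₀ := by rw [hx₁def]; linarith
    have hx₁Ioc : x₁ ∈ Ioc p 1 := ⟨hx₁p, le_trans hx₁x₀.le hx₀1⟩
    have hsub2 : Ioc p x₁ ⊆ Ioo p x₀ := fun x hx => ⟨hx.1, lt_of_le_of_lt hx.2 hx₁x₀⟩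
    have hDfμ' : ∀ x ∈ Ioc p x₁, (ρ.elt a).derivFun x ≤ μ := fun x hx =>
      (hDfμ x ⟨hx.1, le_trans hx.2 hx₁x₀.le⟩).le
    have hflt' : ∀ x ∈ Ioc p x₁, (ρ.elt a).toFun x < x := fun x hx =>
      hflt x ⟨hx.1, le_trans hx.2 hx₁x₀.le⟩
    rcases G.sign_const hIooIcc hnofix with hneg | hpos
    · exact ρ.core_parabolic a b hp hx₁Ioc hfix hgp hDg1 hμ1 hDfμ' hflt'
        (fun x hx => hneg x (hsub2 hx))
    · -- g > id: use -b
      have hgpminus : (ρ.elt (-b)).toFun p = p := by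
        have h1 := ρ.inv_left b p
        rwa [hgp] at h1
      have hDg1minus : (ρ.elt (-b)).derivFun p = 1 := by
        have h1 := ρ.deriv_inv b hpIcc
        rw [hgp, hDg1, mul_one] at h1
        exact h1
      have hglt : ∀ x ∈ Ioc p x₁, (ρ.elt (-b)).toFun x < x := by
        intro x hx
        have hxIcc : x ∈ Icc (0:ℝ) 1 := hIooIcc (hsub2 hx)
        have h1 : (ρ.elt b).toFun x ∈ Icc (0:ℝ) 1 := G.mapsTo hxIcc
        have h2 := (ρ.elt (-b)).toC1Diffeo.mono hxIcc h1 (hpos x (hsub2 hx))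
        rwa [show (ρ.elt (-b)).toC1Diffeo.toFun ((ρ.elt b).toFun x) = x from ρ.inv_left b x]
          at h2
      exact ρ.core_parabolic a (-b) hp hx₁Ioc hfix hgpminus hDg1minus hμ1 hDfμ' hflt' hglt

/-- Right-side lemma. -/
lemma side_right (a b : Fin d → ℤ) {p : ℝ} (hp : p ∈ Ioo (0:ℝ) 1)
    (hfix : (ρ.elt a).toFun p = p) (hhyp : (ρ.elt a).derivFun p ≠ 1)
    (hgp : (ρ.elt b).toFun p = p) (hDg1 : (ρ.elt b).derivFun p = 1)
    (hmoved : ∀ ε > (0:ℝ), ∃ x, p < x ∧ x < p + ε ∧ (ρ.elt b).toFun x ≠ x) : False := by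
  have hpIcc : p ∈ Icc (0:ℝ) 1 := Ioo_subset_Icc_self hp
  rcases lt_or_gt_of_ne hhyp with h | h
  · exact ρ.side_right_contract a b hp hfix h hgp hDg1 hmoved
  · -- use -a
    have hfixminus : (ρ.elt (-a)).toFun p = p := by
      have h1 := ρ.inv_left a p
      rwa [hfix] at h1
    have hderivminus : (ρ.elt (-a)).derivFun p * (ρ.elt a).derivFun p = 1 := by
      have h1 := ρ.deriv_inv a hpIcc
      rwa [hfix] at h1
    have hlamminus : (ρ.elt (-a)).derivFun p < 1 := by
      have hpos : 0 < (ρ.elt a).derivFun p := (ρ.elt a).derivFun_pos p hpIcc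
      have hpos2 : 0 < (ρ.elt (-a)).derivFun p := (ρ.elt (-a)).derivFun_pos p hpIcc
      nlinarith
    exact ρ.side_right_contract (-a) b hp hfixminus hlamminus hgp hDg1 hmoved

end ZdAction1bv

lemma refl_bijOn : BijOn (fun x : ℝ => 1 - x) (Icc (0:ℝ) 1) (Icc (0:ℝ) 1) := by
  refine ⟨fun x hx => ⟨by simp only; linarith [hx.2], by simp only; linarith [hx.1]⟩, ?_, ?_⟩
  · intro x _ y _ h
    simp only at h
    linarith
  · intro y hy
    exact ⟨1 - y, ⟨by linarith [hy.2], by linarith [hy.1]⟩, by simp⟩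

def C1Diffeo.reflect (F : C1Diffeo) : C1Diffeo where
  toFun x := 1 - F.toFun (1 - x)
  derivFun x := F.derivFun (1 - x)
  map_zero := by simp [F.map_one]
  map_one := by simp [F.map_zero]
  fixes_outside := by
    intro x hx
    have h1 : (1 - x) ∉ Icc (0:ℝ) 1 := by
      intro h
      exact hx ⟨by linarith [h.2], by linarith [h.1]⟩
    show 1 - F.toFun (1 - x) = x
    rw [F.fixes_outside _ h1]
    ring
  bijOn := by
    have h := refl_bijOn.comp (F.bijOn.comp refl_bijOn)
    convert h using 1
    rfl
  hasDeriv := by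
    intro x hx
    have hx1 : (1 - x) ∈ Icc (0:ℝ) 1 := refl_bijOn.mapsTo hx
    have h1 : HasDerivWithinAt (fun y : ℝ => 1 - y) (-1) (Icc 0 1) x := by
      simpa using (hasDerivWithinAt_id x (Icc (0:ℝ) 1)).const_sub 1
    have h2 : HasDerivWithinAt (fun y : ℝ => F.toFun (1 - y))
        (F.derivFun (1 - x) * (-1)) (Icc 0 1) x :=
      HasDerivWithinAt.comp x (F.hasDeriv _ hx1) h1 refl_bijOn.mapsTo
    have h3 := h2.const_sub 1
    convert h3 using 1
    · rfl
    · rfl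
    · ring
  derivFun_cont := by
    apply F.derivFun_cont.comp
    · exact (continuous_const.sub continuous_id).continuousOn
    · exact refl_bijOn.mapsTo
  derivFun_pos := fun x hx => F.derivFun_pos _ (refl_bijOn.mapsTo hx)

lemma refl_image : (fun x : ℝ => 1 - x) '' (Icc (0:ℝ) 1) = Icc (0:ℝ) 1 :=
  refl_bijOn.image_eq

def C1bvDiffeo.reflect (F : C1bvDiffeo) : C1bvDiffeo where
  toC1Diffeo := F.toC1Diffeo.reflect
  logDeriv_bv := by
    show BoundedVariationOn (fun x => Real.log (F.derivFun (1 - x))) (Icc 0 1)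
    have hanti : AntitoneOn (fun x : ℝ => 1 - x) (Icc (0:ℝ) 1) := by
      intro x _ y _ hxy
      simp only
      linarith
    have h := eVariationOn.comp_eq_of_antitoneOn
      (fun x => Real.log (F.derivFun x)) (fun x : ℝ => 1 - x) hanti
    rw [refl_image] at h
    show eVariationOn ((fun x => Real.log (F.derivFun x)) ∘ (fun x : ℝ => 1 - x))
      (Icc 0 1) ≠ ⊤
    rw [h]
    exact F.logDeriv_bv

def ZdAction1bv.reflect {d : ℕ} (ρ : ZdAction1bv d) : ZdAction1bv d where
  elt v := (ρ.elt v).reflect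
  elt_add := by
    intro a b x
    show 1 - (ρ.elt (a + b)).toFun (1 - x)
      = 1 - (ρ.elt a).toFun (1 - (1 - (ρ.elt b).toFun (1 - x)))
    rw [sub_sub_cancel, ρ.elt_add]
  elt_zero := by
    intro x
    show 1 - (ρ.elt 0).toFun (1 - x) = x
    rw [ρ.elt_zero]
    ring

/-- If some element of (the image group of) a `C^{1+bv}` action of `ℤᵈ` on `[0,1]` has a
hyperbolic fixed point `p ∈ (0,1)`, then every element of the image group that does not
coincide with the identity on any neighborhood of `p` fixes `p` hyperbolically. -/
theorem hyperbolic_interior_fixed_point (d : ℕ) (ρ : ZdAction1bv d) (a : Fin d → ℤ) (p : ℝ)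
    (hp : p ∈ Ioo (0:ℝ) 1) (hfix : (ρ.elt a).toFun p = p)
    (hhyp : (ρ.elt a).derivFun p ≠ 1) :
    ∀ b : Fin d → ℤ,
      (¬ ∃ ε > (0:ℝ), ∀ x : ℝ, |x - p| < ε → (ρ.elt b).toFun x = x) →
      (ρ.elt b).toFun p = p ∧ (ρ.elt b).derivFun p ≠ 1 := by
  intro b hb
  have hgp : (ρ.elt b).toFun p = p := ρ.fixes_p a b hp hfix hhyp
  refine ⟨hgp, ?_⟩
  intro hDg1
  push_neg at hb
  by_cases hright : ∀ ε > (0:ℝ), ∃ x, p < x ∧ x < p + ε ∧ (ρ.elt b).toFun x ≠ x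
  · exact ρ.side_right a b hp hfix hhyp hgp hDg1 hright
  · push_neg at hright
    obtain ⟨εr, hεr0, hεr⟩ := hright
    have hleft : ∀ ε > (0:ℝ), ∃ x, p - ε < x ∧ x < p ∧ (ρ.elt b).toFun x ≠ x := by
      intro ε hε
      obtain ⟨x, hx1, hx2⟩ := hb (min ε εr) (lt_min hε hεr0)
      have hxne : x ≠ p := fun h => hx2 (h ▸ hgp)
      have habs := abs_lt.mp hx1
      rcases lt_or_gt_of_ne hxne with h | h
      · refine ⟨x, ?_, h, hx2⟩
        have h1 : min ε εr ≤ ε := min_le_left ε εr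
        linarith [habs.1]
      · exfalso
        apply hx2
        apply hεr x h
        have h1 : min ε εr ≤ εr := min_le_right ε εr
        linarith [habs.2]
    set ρ' := ρ.reflect with hρ'
    have hp' : 1 - p ∈ Ioo (0:ℝ) 1 := ⟨by linarith [hp.2], by linarith [hp.1]⟩
    have hfix' : (ρ'.elt a).toFun (1 - p) = 1 - p := by
      show 1 - (ρ.elt a).toFun (1 - (1 - p)) = 1 - p
      rw [sub_sub_cancel, hfix]
    have hhyp' : (ρ'.elt a).derivFun (1 - p) ≠ 1 := by
      show (ρ.elt a).derivFun (1 - (1 - p)) ≠ 1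
      rw [sub_sub_cancel]
      exact hhyp
    have hgp' : (ρ'.elt b).toFun (1 - p) = 1 - p := by
      show 1 - (ρ.elt b).toFun (1 - (1 - p)) = 1 - p
      rw [sub_sub_cancel, hgp]
    have hDg1' : (ρ'.elt b).derivFun (1 - p) = 1 := by
      show (ρ.elt b).derivFun (1 - (1 - p)) = 1
      rw [sub_sub_cancel]
      exact hDg1
    have hmoved' : ∀ ε > (0:ℝ), ∃ y, 1 - p < y ∧ y < 1 - p + ε ∧ (ρ'.elt b).toFun y ≠ y := by
      intro ε hε
      obtain ⟨x, hx1, hx2, hx3⟩ := hleft ε hε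
      refine ⟨1 - x, by linarith, by linarith, ?_⟩
      show 1 - (ρ.elt b).toFun (1 - (1 - x)) ≠ 1 - x
      rw [sub_sub_cancel]
      intro h
      exact hx3 (by linarith)
    exact ρ'.side_right a b hp' hfix' hhyp' hgp' hDg1' hmoved'
end
end

section
/- If a C^{1+bv} action of Z^d on [0,1] has no parabolic global fixed point in the open interval (0,1), then all the elements of its image group other than the identity have exactly the same set of fixed points. -/
open Set MeasureTheory Filter Topology

noncomputable section

namespace ZK

variable {d : ℕ}

/-- The underlying map of a group element. -/
def F (ρ : ZdAction1bv d) (a : Fin d → ℤ) : ℝ → ℝ := (ρ.elt a).toFun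

/-- The derivative of a group element. -/
def D (ρ : ZdAction1bv d) (a : Fin d → ℤ) : ℝ → ℝ := (ρ.elt a).derivFun

/-- The unit interval. -/
abbrev II : Set ℝ := Icc (0:ℝ) 1

variable {ρ : ZdAction1bv d}

lemma hasD (a : Fin d → ℤ) {x : ℝ} (hx : x ∈ II) :
    HasDerivWithinAt (F ρ a) (D ρ a x) II x := (ρ.elt a).hasDeriv x hx

lemma Dpos (a : Fin d → ℤ) {x : ℝ} (hx : x ∈ II) : 0 < D ρ a x := (ρ.elt a).derivFun_pos x hx

lemma Dcont (a : Fin d → ℤ) : ContinuousOn (D ρ a) II := (ρ.elt a).derivFun_cont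

lemma Fcont (a : Fin d → ℤ) : ContinuousOn (F ρ a) II :=
  fun x hx => ((ρ.elt a).hasDeriv x hx).continuousWithinAt

lemma FmapsTo (a : Fin d → ℤ) : MapsTo (F ρ a) II II := (ρ.elt a).bijOn.mapsTo

lemma Fmem (a : Fin d → ℤ) {x : ℝ} (hx : x ∈ II) : F ρ a x ∈ II := FmapsTo a hx

lemma Fcomp (a b : Fin d → ℤ) (x : ℝ) : F ρ a (F ρ b x) = F ρ (a + b) x :=
  (ρ.elt_add a b x).symm

lemma F0 (x : ℝ) : F ρ 0 x = x := ρ.elt_zero x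

lemma inv_cancel (a : Fin d → ℤ) (x : ℝ) : F ρ (-a) (F ρ a x) = x := by
  rw [Fcomp, neg_add_cancel, F0]

lemma inv_cancel' (a : Fin d → ℤ) (x : ℝ) : F ρ a (F ρ (-a) x) = x := by
  rw [Fcomp, add_neg_cancel, F0]

lemma hasDAt (a : Fin d → ℤ) {x : ℝ} (hx : x ∈ Ioo (0:ℝ) 1) :
    HasDerivAt (F ρ a) (D ρ a x) x :=
  (hasD a (Ioo_subset_Icc_self hx)).hasDerivAt (Icc_mem_nhds hx.1 hx.2)

lemma smono (a : Fin d → ℤ) : StrictMonoOn (F ρ a) II := by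
  apply strictMonoOn_of_deriv_pos (convex_Icc 0 1) (Fcont a)
  intro x hx
  rw [interior_Icc] at hx
  rw [(hasDAt a hx).deriv]
  exact Dpos a (Ioo_subset_Icc_self hx)

lemma Flt (a : Fin d → ℤ) {x y : ℝ} (hx : x ∈ II) (hy : y ∈ II) (h : x < y) :
    F ρ a x < F ρ a y := smono a hx hy h

lemma Flt_iff (a : Fin d → ℤ) {x y : ℝ} (hx : x ∈ II) (hy : y ∈ II) :
    F ρ a x < F ρ a y ↔ x < y := by
  constructor
  · intro h
    by_contra hc
    push_neg at hc
    rcases eq_or_lt_of_le hc with rfl | hlt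
    · exact lt_irrefl _ h
    · exact absurd (Flt a hy hx hlt) (not_lt.2 h.le)
  · exact Flt a hx hy

lemma fix_neg {a : Fin d → ℤ} {q : ℝ} (h : F ρ a q = q) : F ρ (-a) q = q := by
  conv_lhs => rw [← h, inv_cancel]

lemma fix_add {a b : Fin d → ℤ} {q : ℝ} (ha : F ρ a q = q) (hb : F ρ b q = q) :
    F ρ (a + b) q = q := by rw [← Fcomp, hb, ha]

lemma fix_nsmul {a : Fin d → ℤ} {q : ℝ} (h : F ρ a q = q) (n : ℕ) : F ρ (n • a) q = q := by
  induction n with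
  | zero => simpa using F0 q
  | succ n ih => rw [succ_nsmul]; exact fix_add ih h

lemma fix_transport {a b : Fin d → ℤ} {q : ℝ} (hb : F ρ b q = q) :
    F ρ b (F ρ a q) = F ρ a q := by
  rw [Fcomp, add_comm, ← Fcomp, hb]

lemma Fiterate (a : Fin d → ℤ) (n : ℕ) (x : ℝ) : F ρ (n • a) x = (F ρ a)^[n] x := by
  induction n with
  | zero => simpa using F0 x
  | succ n ih =>
    rw [Function.iterate_succ_apply', ← ih, succ_nsmul', Fcomp]

lemma iter_mem (a : Fin d → ℤ) {x : ℝ} (hx : x ∈ II) (n : ℕ) : (F ρ a)^[n] x ∈ II := by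
  induction n with
  | zero => simpa using hx
  | succ n ih => rw [Function.iterate_succ_apply']; exact Fmem a ih

lemma chain (a b : Fin d → ℤ) {x : ℝ} (hx : x ∈ II) :
    D ρ (a + b) x = D ρ a (F ρ b x) * D ρ b x := by
  have h1 : HasDerivWithinAt (F ρ a ∘ F ρ b) (D ρ (a + b) x) II x := by
    have : F ρ a ∘ F ρ b = F ρ (a + b) := funext fun y => Fcomp a b y
    rw [this]; exact hasD _ hx
  have h2 : HasDerivWithinAt (F ρ a ∘ F ρ b) (D ρ a (F ρ b x) * D ρ b x) II x :=
    (hasD a (Fmem b hx)).comp x (hasD b hx) (FmapsTo b)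
  have hu := uniqueDiffOn_Icc_zero_one x hx
  rw [← h1.derivWithin hu, ← h2.derivWithin hu]

lemma D0 {x : ℝ} (hx : x ∈ II) : D ρ 0 x = 1 := by
  have h1 : HasDerivWithinAt (F ρ 0) (D ρ 0 x) II x := hasD 0 hx
  have h2 : HasDerivWithinAt (F ρ 0) 1 II x := by
    have : F ρ 0 = id := funext fun y => F0 y
    rw [this]; exact hasDerivWithinAt_id x II
  have hu := uniqueDiffOn_Icc_zero_one x hx
  rw [← h1.derivWithin hu, ← h2.derivWithin hu]

lemma Dfix_add {a b : Fin d → ℤ} {p : ℝ} (hp : p ∈ II) (hb : F ρ b p = p) :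
    D ρ (a + b) p = D ρ a p * D ρ b p := by rw [chain a b hp, hb]

lemma Dfix_nsmul {a : Fin d → ℤ} {p : ℝ} (hp : p ∈ II) (ha : F ρ a p = p) (n : ℕ) :
    D ρ (n • a) p = (D ρ a p) ^ n := by
  induction n with
  | zero => simpa using D0 hp
  | succ n ih =>
    rw [succ_nsmul', pow_succ']
    rw [Dfix_add hp (fix_nsmul ha n), ih]

lemma Dfix_neg {a : Fin d → ℤ} {p : ℝ} (hp : p ∈ II) (ha : F ρ a p = p) :
    D ρ (-a) p = (D ρ a p)⁻¹ := by
  have h1 : D ρ (a + -a) p = D ρ a p * D ρ (-a) p := Dfix_add hp (fix_neg ha)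
  rw [add_neg_cancel, D0 hp] at h1
  have hpos := Dpos (ρ := ρ) a hp
  field_simp
  linarith [h1]

end ZK
namespace ZK

variable {d : ℕ} {ρ : ZdAction1bv d}

/-- If fixed points of `F ρ a` accumulate at a fixed point `p`, the derivative at `p` is 1. -/
lemma deriv_one_of_fixed_seq {a : Fin d → ℤ} {p : ℝ} (hp : p ∈ II) (hfp : F ρ a p = p)
    {z : ℕ → ℝ} (hz : ∀ n, z n ∈ II ∧ z n ≠ p ∧ F ρ a (z n) = z n)
    (hlim : Tendsto z atTop (𝓝 p)) : D ρ a p = 1 := by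
  have hs := hasDerivWithinAt_iff_tendsto_slope.1 (hasD (ρ := ρ) a hp)
  have hzt : Tendsto z atTop (𝓝[II \ {p}] p) :=
    tendsto_nhdsWithin_iff.2 ⟨hlim, Eventually.of_forall fun n => ⟨(hz n).1, (hz n).2.1⟩⟩
  have hcomp := hs.comp hzt
  have heq : slope (F ρ a) p ∘ z = fun _ => (1:ℝ) := by
    funext n
    show slope (F ρ a) p (z n) = 1
    rw [slope_def_field, hfp, (hz n).2.2]
    field_simp [sub_ne_zero.2 (hz n).2.1]
  rw [heq] at hcomp
  exact tendsto_nhds_unique hcomp tendsto_const_nhds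

/-- Sign constancy on a fixed-point free interval. -/
lemma sign_const {a : Fin d → ℤ} {u v : ℝ} (hu : 0 ≤ u) (hv : v ≤ 1)
    (hfree : ∀ y, u < y → y < v → F ρ a y ≠ y) :
    (∀ y, u < y → y < v → F ρ a y < y) ∨ (∀ y, u < y → y < v → y < F ρ a y) := by
  by_contra hc
  push_neg at hc
  obtain ⟨⟨y₁, hy₁u, hy₁v, hy₁⟩, ⟨y₂, hy₂u, hy₂v, hy₂⟩⟩ := hc
  have hgt₁ : y₁ < F ρ a y₁ := lt_of_le_of_ne hy₁ (Ne.symm (hfree y₁ hy₁u hy₁v))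
  have hlt₂ : F ρ a y₂ < y₂ := lt_of_le_of_ne hy₂ (hfree y₂ hy₂u hy₂v)
  set g : ℝ → ℝ := fun t => F ρ a t - t with hg
  have hsub : ∀ s t : ℝ, u < s → t < v → s ≤ t → Icc s t ⊆ II := fun s t hs ht _ w hw =>
    ⟨hu.trans (le_of_lt (lt_of_lt_of_le hs hw.1)), le_of_lt (lt_of_le_of_lt hw.2 (lt_of_lt_of_le ht hv))⟩
  rcases le_total y₁ y₂ with h12 | h21
  · have hcont : ContinuousOn g (Icc y₁ y₂) :=
      ((Fcont a).mono (hsub _ _ hy₁u hy₂v h12)).sub continuousOn_id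
    have h0 : (0:ℝ) ∈ Icc (g y₂) (g y₁) := ⟨by simp [hg]; linarith, by simp [hg]; linarith⟩
    obtain ⟨w, hw, hw0⟩ := intermediate_value_Icc' h12 hcont h0
    exact hfree w (lt_of_lt_of_le hy₁u hw.1) (lt_of_le_of_lt hw.2 hy₂v) (by simpa [hg, sub_eq_zero] using hw0)
  · have hcont : ContinuousOn g (Icc y₂ y₁) :=
      ((Fcont a).mono (hsub _ _ hy₂u hy₁v h21)).sub continuousOn_id
    have h0 : (0:ℝ) ∈ Icc (g y₂) (g y₁) := ⟨by simp [hg]; linarith, by simp [hg]; linarith⟩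
    obtain ⟨w, hw, hw0⟩ := intermediate_value_Icc h21 hcont h0
    exact hfree w (lt_of_lt_of_le hy₂u hw.1) (lt_of_le_of_lt hw.2 hy₁v) (by simpa [hg, sub_eq_zero] using hw0)

/-- Decreasing orbit lemma: contracting orbits converge to the fixed point below. -/
lemma orbit_down {c : Fin d → ℤ} {P x₀ : ℝ} (hP : 0 ≤ P) (hx₁ : x₀ ≤ 1) (hPx : P < x₀)
    (hfixP : F ρ c P = P) (hlt : ∀ y, P < y → y ≤ x₀ → F ρ c y < y) :
    (∀ n, (F ρ c)^[n] x₀ ∈ Ioc P x₀) ∧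
      (∀ m n, m ≤ n → (F ρ c)^[n] x₀ ≤ (F ρ c)^[m] x₀) ∧
      Tendsto (fun n => (F ρ c)^[n] x₀) atTop (𝓝 P) := by
  have hPI : P ∈ II := ⟨hP, hPx.le.trans hx₁⟩
  set s : ℕ → ℝ := fun n => (F ρ c)^[n] x₀ with hs
  have hmem : ∀ n, s n ∈ Ioc P x₀ := by
    intro n
    induction n with
    | zero => exact ⟨hPx, le_rfl⟩
    | succ n ih =>
      have hsI : s n ∈ II := ⟨hP.trans ih.1.le, ih.2.trans hx₁⟩
      have h1 : s (n+1) = F ρ c (s n) := Function.iterate_succ_apply' _ _ _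
      constructor
      · rw [h1, ← hfixP]; exact Flt c hPI hsI ih.1
      · rw [h1]; exact (hlt (s n) ih.1 ih.2).le.trans ih.2
  have hdec : ∀ n, s (n+1) ≤ s n := by
    intro n
    have h1 : s (n+1) = F ρ c (s n) := Function.iterate_succ_apply' _ _ _
    rw [h1]; exact (hlt (s n) (hmem n).1 (hmem n).2).le
  have hanti : Antitone s := antitone_nat_of_succ_le hdec
  refine ⟨hmem, fun m n h => hanti h, ?_⟩
  have hbdd : BddBelow (Set.range s) := ⟨P, by rintro _ ⟨n, rfl⟩; exact (hmem n).1.le⟩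
  have htend : Tendsto s atTop (𝓝 (⨅ n, s n)) := tendsto_atTop_ciInf hanti hbdd
  set L := ⨅ n, s n with hL
  have hLP : P ≤ L := le_ciInf fun n => (hmem n).1.le
  have hLx : L ≤ x₀ := (ciInf_le hbdd 0).trans_eq (by simp [hs])
  have hLI : L ∈ II := ⟨hP.trans hLP, hLx.trans hx₁⟩
  have hfixL : F ρ c L = L := by
    have h1 : Tendsto (fun n => s (n+1)) atTop (𝓝 L) := htend.comp (tendsto_add_atTop_nat 1)
    have h2 : Tendsto (fun n => F ρ c (s n)) atTop (𝓝 (F ρ c L)) := by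
      have hwithin : Tendsto s atTop (𝓝[II] L) :=
        tendsto_nhdsWithin_iff.2 ⟨htend, Eventually.of_forall fun n =>
          ⟨hP.trans (hmem n).1.le, (hmem n).2.trans hx₁⟩⟩
      exact ((Fcont c L hLI).tendsto).comp hwithin
    have h3 : (fun n => s (n+1)) = fun n => F ρ c (s n) := by
      funext n; exact Function.iterate_succ_apply' _ _ _
    rw [h3] at h1
    exact tendsto_nhds_unique h2 h1
  have hLeq : L = P := by
    by_contra hne
    have hPL : P < L := lt_of_le_of_ne hLP (Ne.symm hne)
    exact absurd hfixL (ne_of_lt (hlt L hPL hLx))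
  rw [← hLeq]; exact htend

/-- Increasing orbit lemma: expanding orbits converge to the fixed point above. -/
lemma orbit_up {c : Fin d → ℤ} {Q x₀ : ℝ} (hx₀ : 0 ≤ x₀) (hQ : Q ≤ 1) (hxQ : x₀ < Q)
    (hfixQ : F ρ c Q = Q) (hgt : ∀ y, x₀ ≤ y → y < Q → y < F ρ c y) :
    (∀ n, (F ρ c)^[n] x₀ ∈ Ico x₀ Q) ∧
      Tendsto (fun n => (F ρ c)^[n] x₀) atTop (𝓝 Q) := by
  have hQI : Q ∈ II := ⟨hx₀.trans hxQ.le, hQ⟩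
  set s : ℕ → ℝ := fun n => (F ρ c)^[n] x₀ with hs
  have hmem : ∀ n, s n ∈ Ico x₀ Q := by
    intro n
    induction n with
    | zero => exact ⟨le_rfl, hxQ⟩
    | succ n ih =>
      have hsI : s n ∈ II := ⟨hx₀.trans ih.1, ih.2.le.trans hQ⟩
      have h1 : s (n+1) = F ρ c (s n) := Function.iterate_succ_apply' _ _ _
      constructor
      · rw [h1]; exact ih.1.trans (hgt (s n) ih.1 ih.2).le
      · rw [h1, ← hfixQ]; exact Flt c hsI hQI ih.2
  have hinc : ∀ n, s n ≤ s (n+1) := by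
    intro n
    have h1 : s (n+1) = F ρ c (s n) := Function.iterate_succ_apply' _ _ _
    rw [h1]; exact (hgt (s n) (hmem n).1 (hmem n).2).le
  have hmono : Monotone s := monotone_nat_of_le_succ hinc
  refine ⟨hmem, ?_⟩
  have hbdd : BddAbove (Set.range s) := ⟨Q, by rintro _ ⟨n, rfl⟩; exact (hmem n).2.le⟩
  have htend : Tendsto s atTop (𝓝 (⨆ n, s n)) := tendsto_atTop_ciSup hmono hbdd
  set L := ⨆ n, s n with hL
  have hLQ : L ≤ Q := ciSup_le fun n => (hmem n).2.le
  have hxL : x₀ ≤ L := (le_ciSup hbdd 0).trans_eq' (by simp [hs])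
  have hLI : L ∈ II := ⟨hx₀.trans hxL, hLQ.trans hQ⟩
  have hfixL : F ρ c L = L := by
    have h1 : Tendsto (fun n => s (n+1)) atTop (𝓝 L) := htend.comp (tendsto_add_atTop_nat 1)
    have h2 : Tendsto (fun n => F ρ c (s n)) atTop (𝓝 (F ρ c L)) := by
      have hwithin : Tendsto s atTop (𝓝[II] L) :=
        tendsto_nhdsWithin_iff.2 ⟨htend, Eventually.of_forall fun n =>
          ⟨hx₀.trans (hmem n).1, (hmem n).2.le.trans hQ⟩⟩
      exact ((Fcont c L hLI).tendsto).comp hwithin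
    have h3 : (fun n => s (n+1)) = fun n => F ρ c (s n) := by
      funext n; exact Function.iterate_succ_apply' _ _ _
    rw [h3] at h1
    exact tendsto_nhds_unique h2 h1
  have hLeq : L = Q := by
    by_contra hne
    have hLQ' : L < Q := lt_of_le_of_ne hLQ hne
    exact absurd hfixL.symm (ne_of_lt (hgt L hxL hLQ'))
  rw [← hLeq]; exact htend

end ZK
namespace ZK

variable {d : ℕ} {ρ : ZdAction1bv d}

open ENNReal

/-- log-derivative of a group element. -/
def lg (ρ : ZdAction1bv d) (c : Fin d → ℤ) : ℝ → ℝ := fun y => Real.log (D ρ c y)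

/-- variation of the log-derivative on a subinterval. -/
def vr (ρ : ZdAction1bv d) (c : Fin d → ℤ) (s t : ℝ) : ℝ≥0∞ :=
  eVariationOn (lg ρ c) (II ∩ Icc s t)

lemma vr_ne_top {c : Fin d → ℤ} {s t : ℝ} : vr ρ c s t ≠ ⊤ :=
  ne_top_of_le_ne_top (ρ.elt c).logDeriv_bv (eVariationOn.mono _ inter_subset_left)

lemma vr_mono {c : Fin d → ℤ} {s t s' t' : ℝ} (hs : s' ≤ s) (ht : t ≤ t') :
    vr ρ c s t ≤ vr ρ c s' t' :=
  eVariationOn.mono _ (inter_subset_inter subset_rfl (Icc_subset_Icc hs ht))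

lemma vr_add {c : Fin d → ℤ} {s t u : ℝ} (hst : s ≤ t) (htu : t ≤ u) (ht : t ∈ II) :
    vr ρ c s t + vr ρ c t u = vr ρ c s u :=
  eVariationOn.Icc_add_Icc _ hst htu ht

lemma vr_self {c : Fin d → ℤ} {s : ℝ} : vr ρ c s s = 0 :=
  eVariationOn.subsingleton _ fun x hx y hy => by
    rw [mem_inter_iff, Icc_self, mem_singleton_iff] at hx hy
    rw [hx.2, hy.2]

lemma abs_lg_sub_le {c : Fin d → ℤ} {x y s t : ℝ} (hx : x ∈ II ∩ Icc s t)
    (hy : y ∈ II ∩ Icc s t) : |lg ρ c x - lg ρ c y| ≤ (vr ρ c s t).toReal := by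
  have hbv : BoundedVariationOn (lg ρ c) (II ∩ Icc s t) := vr_ne_top
  have := hbv.dist_le hx hy
  rwa [Real.dist_eq] at this

/-- product formula for the derivative of an iterate. -/
lemma D_nsmul_prod (c : Fin d → ℤ) (n : ℕ) {y : ℝ} (hy : y ∈ II) :
    D ρ (n • c) y = ∏ i ∈ Finset.range n, D ρ c ((F ρ c)^[i] y) := by
  induction n with
  | zero => simpa using D0 hy
  | succ n ih =>
    rw [Finset.prod_range_succ, ← ih, succ_nsmul', chain c (n • c) hy, Fiterate, mul_comm]

/-- commutation identity for derivatives. -/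
lemma comm_identity (e c : Fin d → ℤ) (n : ℕ) {y : ℝ} (hy : y ∈ II) :
    D ρ e ((F ρ c)^[n] y) * D ρ (n • c) y = D ρ (n • c) (F ρ e y) * D ρ e y := by
  have h1 : D ρ (n • c + e) y = D ρ e (F ρ (n • c) y) * D ρ (n • c) y := by
    rw [add_comm]; exact chain e (n • c) hy
  have h2 : D ρ (n • c + e) y = D ρ (n • c) (F ρ e y) * D ρ e y := chain (n • c) e hy
  rw [← Fiterate, ← h1, h2]

end ZK
namespace ZK

variable {d : ℕ} {ρ : ZdAction1bv d}

open ENNReal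

/-- The core distortion estimate. -/
lemma core {c e : Fin d → ℤ} {P A B : ℝ} (hP : 0 ≤ P) (hB : B ≤ 1) (hPA : P < A) (hAB : A ≤ B)
    (hcP : F ρ c P = P) (hle : ∀ y, P < y → y ≤ B → F ρ c y ≤ y)
    (hlt : ∀ y, P < y → y < B → F ρ c y < y)
    (heP : F ρ e P = P) (K : ℕ) (hK : (F ρ c)^[K] B ≤ A)
    {y : ℝ} (hyA : A ≤ y) (hyB : y < B) (heyA : A ≤ F ρ e y) (heyB : F ρ e y ≤ B) :
    |Real.log (D ρ e y) - Real.log (D ρ e P)| ≤ K * (vr ρ c P B).toReal := by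
  have hPB : P < B := hPA.trans_le hAB
  have hPI : P ∈ II := ⟨hP, hPB.le.trans hB⟩
  have hBI : B ∈ II := ⟨hP.trans hPB.le, hB⟩
  have hmemI : ∀ z ∈ Ioc P B, z ∈ II := fun z hz => ⟨hP.trans hz.1.le, hz.2.trans hB⟩
  have hinv : ∀ z, z ∈ Ioc P B → ∀ n, (F ρ c)^[n] z ∈ Ioc P B := by
    intro z hz n
    induction n with
    | zero => simpa using hz
    | succ n ih =>
      rw [Function.iterate_succ_apply']
      refine ⟨?_, (hle _ ih.1 ih.2).trans ih.2⟩
      rw [← hcP]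
      exact Flt c hPI (hmemI _ ih) ih.1
  set b : ℕ → ℝ := fun i => (F ρ c)^[i] B with hbdef
  have hbmem : ∀ i, b i ∈ Ioc P B := hinv B ⟨hPB, le_rfl⟩
  have hbI : ∀ i, b i ∈ II := fun i => hmemI _ (hbmem i)
  have hbdec : ∀ i, b (i+1) ≤ b i := fun i => by
    have : b (i+1) = F ρ c (b i) := Function.iterate_succ_apply' _ _ _
    rw [this]; exact hle _ (hbmem i).1 (hbmem i).2
  have hbanti : Antitone b := antitone_nat_of_succ_le hbdec
  have hitmono : ∀ (i : ℕ) {w z : ℝ}, w ∈ II → z ∈ II → w ≤ z →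
      (F ρ c)^[i] w ≤ (F ρ c)^[i] z := by
    intro i w z hw hz hwz
    rw [← Fiterate, ← Fiterate]
    rcases eq_or_lt_of_le hwz with rfl | h
    · exact le_rfl
    · exact (Flt _ hw hz h).le
  have htel : ∀ j n, (∑ i ∈ Finset.range n, vr ρ c (b (j+i+1)) (b (j+i)))
      = vr ρ c (b (j+n)) (b j) := by
    intro j n
    induction n with
    | zero => simp [vr_self]
    | succ n ih =>
      rw [Finset.sum_range_succ, ih, add_comm (vr ρ c (b (j+n)) (b j))]
      have h1 : b (j+n+1) ≤ b (j+n) := hbdec _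
      have h2 : b (j+n) ≤ b j := hbanti (Nat.le_add_right j n)
      have := vr_add (ρ := ρ) (c := c) h1 h2 (hbI (j+n))
      rw [this]
      exact congrArg (fun t => vr ρ c (b t) (b j)) (by omega : j+n+1 = j+(n+1))
  have hcol : ∀ j n, (∑ i ∈ Finset.range n, vr ρ c (b (j+i+1)) (b (j+i))) ≤ vr ρ c P B := by
    intro j n
    rw [htel j n]
    exact vr_mono (hbmem _).1.le (hbmem j).2
  have htot : ∀ n, (∑ i ∈ Finset.range n, vr ρ c (b (i+K)) (b i)) ≤ K • vr ρ c P B := by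
    intro n
    have h1 : ∀ i, vr ρ c (b (i+K)) (b i) = ∑ j ∈ Finset.range K, vr ρ c (b (i+j+1)) (b (i+j)) :=
      fun i => (htel i K).symm
    calc (∑ i ∈ Finset.range n, vr ρ c (b (i+K)) (b i))
        = ∑ i ∈ Finset.range n, ∑ j ∈ Finset.range K, vr ρ c (b (i+j+1)) (b (i+j)) := by
          exact Finset.sum_congr rfl fun i _ => h1 i
      _ = ∑ j ∈ Finset.range K, ∑ i ∈ Finset.range n, vr ρ c (b (i+j+1)) (b (i+j)) :=
          Finset.sum_comm
      _ ≤ ∑ _j ∈ Finset.range K, vr ρ c P B := by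
          refine Finset.sum_le_sum fun j _ => ?_
          have : ∀ i, vr ρ c (b (i+j+1)) (b (i+j)) = vr ρ c (b (j+i+1)) (b (j+i)) := by
            intro i; rw [Nat.add_comm i j]
          rw [Finset.sum_congr rfl fun i _ => this i]
          exact hcol j n
      _ = K • vr ρ c P B := by rw [Finset.sum_const, Finset.card_range]
  have hKV_ne : (K • vr ρ c P B) ≠ ⊤ := by
    rw [nsmul_eq_mul]
    exact ENNReal.mul_ne_top (natCast_ne_top K) vr_ne_top
  have hKV_toReal : (K • vr ρ c P B).toReal = K * (vr ρ c P B).toReal := by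
    rw [nsmul_eq_mul, ENNReal.toReal_mul]
    simp
  have hyIoc : y ∈ Ioc P B := ⟨hPA.trans_le hyA, hyB.le⟩
  have heyIoc : F ρ e y ∈ Ioc P B := ⟨hPA.trans_le heyA, heyB⟩
  have hyI : y ∈ II := hmemI _ hyIoc
  have heyI : F ρ e y ∈ II := hmemI _ heyIoc
  have key : ∀ n, |Real.log (D ρ e ((F ρ c)^[n] y)) - Real.log (D ρ e y)|
      ≤ K * (vr ρ c P B).toReal := by
    intro n
    have hid := comm_identity (ρ := ρ) e c n hyI
    rw [D_nsmul_prod c n hyI, D_nsmul_prod c n heyI] at hid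
    have hyiI : ∀ i, (F ρ c)^[i] y ∈ II := fun i => hmemI _ (hinv y hyIoc i)
    have heyiI : ∀ i, (F ρ c)^[i] (F ρ e y) ∈ II := fun i => hmemI _ (hinv _ heyIoc i)
    have hlog : Real.log (D ρ e ((F ρ c)^[n] y)) + ∑ i ∈ Finset.range n, lg ρ c ((F ρ c)^[i] y)
        = (∑ i ∈ Finset.range n, lg ρ c ((F ρ c)^[i] (F ρ e y))) + Real.log (D ρ e y) := by
      have l1 := congrArg Real.log hid
      rw [Real.log_mul (ne_of_gt (Dpos e (hyiI n)))
          (ne_of_gt (Finset.prod_pos fun i _ => Dpos c (hyiI i))),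
        Real.log_mul (ne_of_gt (Finset.prod_pos fun i _ => Dpos c (heyiI i)))
          (ne_of_gt (Dpos e hyI)),
        Real.log_prod (fun i _ => ne_of_gt (Dpos c (hyiI i))),
        Real.log_prod (fun i _ => ne_of_gt (Dpos c (heyiI i)))] at l1
      exact l1
    have hdiff : Real.log (D ρ e ((F ρ c)^[n] y)) - Real.log (D ρ e y)
        = ∑ i ∈ Finset.range n, (lg ρ c ((F ρ c)^[i] (F ρ e y)) - lg ρ c ((F ρ c)^[i] y)) := by
      rw [Finset.sum_sub_distrib]
      linarith [hlog]
    rw [hdiff]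
    have hterm : ∀ i ∈ Finset.range n,
        |lg ρ c ((F ρ c)^[i] (F ρ e y)) - lg ρ c ((F ρ c)^[i] y)|
          ≤ (vr ρ c (b (i+K)) (b i)).toReal := by
      intro i _
      have hbK : (F ρ c)^[K] B ∈ II := hbI K
      have hlow1 : b (i+K) ≤ (F ρ c)^[i] ((F ρ c)^[K] B) := by
        have : b (i+K) = (F ρ c)^[i] ((F ρ c)^[K] B) := Function.iterate_add_apply _ i K B
        rw [this]
      apply abs_lg_sub_le
      · refine ⟨heyiI i, ?_, ?_⟩
        · calc b (i+K) = (F ρ c)^[i] ((F ρ c)^[K] B) := Function.iterate_add_apply _ i K B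
            _ ≤ (F ρ c)^[i] (F ρ e y) := hitmono i hbK heyI (hK.trans heyA)
        · exact hitmono i heyI hBI heyB
      · refine ⟨hyiI i, ?_, ?_⟩
        · calc b (i+K) = (F ρ c)^[i] ((F ρ c)^[K] B) := Function.iterate_add_apply _ i K B
            _ ≤ (F ρ c)^[i] y := hitmono i hbK hyI (hK.trans hyA)
        · exact hitmono i hyI hBI hyB.le
    calc |∑ i ∈ Finset.range n, (lg ρ c ((F ρ c)^[i] (F ρ e y)) - lg ρ c ((F ρ c)^[i] y))|
        ≤ ∑ i ∈ Finset.range n,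
            |lg ρ c ((F ρ c)^[i] (F ρ e y)) - lg ρ c ((F ρ c)^[i] y)| :=
          Finset.abs_sum_le_sum_abs _ _
      _ ≤ ∑ i ∈ Finset.range n, (vr ρ c (b (i+K)) (b i)).toReal := Finset.sum_le_sum hterm
      _ = (∑ i ∈ Finset.range n, vr ρ c (b (i+K)) (b i)).toReal :=
          (ENNReal.toReal_sum fun i _ => vr_ne_top).symm
      _ ≤ (K • vr ρ c P B).toReal := ENNReal.toReal_mono hKV_ne (htot n)
      _ = K * (vr ρ c P B).toReal := hKV_toReal
  have horb := orbit_down (ρ := ρ) (c := c) hP (hyB.le.trans hB) hyIoc.1 hcP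
    (fun z hz1 hz2 => hlt z hz1 (lt_of_le_of_lt hz2 hyB))
  have hwithin : Tendsto (fun n => (F ρ c)^[n] y) atTop (𝓝[II] P) :=
    tendsto_nhdsWithin_iff.2 ⟨horb.2.2, Eventually.of_forall fun n =>
      ⟨hP.trans (horb.1 n).1.le, ((horb.1 n).2.trans hyB.le).trans hB⟩⟩
  have htendD : Tendsto (fun n => Real.log (D ρ e ((F ρ c)^[n] y))) atTop
      (𝓝 (Real.log (D ρ e P))) :=
    ((Real.continuousAt_log (ne_of_gt (Dpos e hPI))).tendsto).comp
      (((Dcont e) P hPI).tendsto.comp hwithin)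
  have habs : Tendsto (fun n => |Real.log (D ρ e ((F ρ c)^[n] y)) - Real.log (D ρ e y)|)
      atTop (𝓝 |Real.log (D ρ e P) - Real.log (D ρ e y)|) :=
    (htendD.sub tendsto_const_nhds).abs
  have hfin := le_of_tendsto habs (Eventually.of_forall key)
  rwa [abs_sub_comm] at hfin

end ZK
namespace ZK

variable {d : ℕ} {ρ : ZdAction1bv d}

/-- The set of fixed points in a closed subinterval of `[0,1]` is compact. -/
lemma fix_compact (a : Fin d → ℤ) {α β : ℝ} (hα : 0 ≤ α) (hβ : β ≤ 1) :
    IsCompact {t : ℝ | t ∈ Icc α β ∧ F ρ a t = t} := by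
  rcases le_or_gt α β with hαβ | hαβ
  · have hsub : Icc α β ⊆ II := Icc_subset_Icc hα hβ
    have hcont : ContinuousOn (fun t => F ρ a t - t) (Icc α β) :=
      ((Fcont a).mono hsub).sub continuousOn_id
    have hclosed : IsClosed (Icc α β ∩ (fun t => F ρ a t - t) ⁻¹' {0}) :=
      hcont.preimage_isClosed_of_isClosed isClosed_Icc isClosed_singleton
    have heq : {t : ℝ | t ∈ Icc α β ∧ F ρ a t = t}
        = Icc α β ∩ (fun t => F ρ a t - t) ⁻¹' {0} := by
      ext t
      simp [sub_eq_zero]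
    rw [heq]
    exact isCompact_Icc.of_isClosed_subset hclosed inter_subset_left
  · have : {t : ℝ | t ∈ Icc α β ∧ F ρ a t = t} = ∅ := by
      ext t; simp only [mem_setOf_eq, mem_empty_iff_false, iff_false]
      rintro ⟨ht, -⟩
      exact absurd (ht.1.trans ht.2) (not_le.2 hαβ)
    rw [this]
    exact isCompact_empty

/-- Component of the complement of the fixed-point set around a non-fixed point. -/
lemma component {b : Fin d → ℤ} {x : ℝ} (hx : x ∈ Ioo (0:ℝ) 1) (hbx : F ρ b x ≠ x) :
    ∃ u v : ℝ, 0 ≤ u ∧ u < x ∧ x < v ∧ v ≤ 1 ∧ F ρ b u = u ∧ F ρ b v = v ∧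
      ∀ y, u < y → y < v → F ρ b y ≠ y := by
  set S1 : Set ℝ := {t : ℝ | t ∈ Icc 0 x ∧ F ρ b t = t} with hS1
  set S2 : Set ℝ := {t : ℝ | t ∈ Icc x 1 ∧ F ρ b t = t} with hS2
  have hS1c : IsCompact S1 := fix_compact b le_rfl hx.2.le
  have hS2c : IsCompact S2 := fix_compact b hx.1.le le_rfl
  have hS1ne : S1.Nonempty := ⟨0, ⟨le_rfl, hx.1.le⟩, (ρ.elt b).map_zero⟩
  have hS2ne : S2.Nonempty := ⟨1, ⟨hx.2.le, le_rfl⟩, (ρ.elt b).map_one⟩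
  obtain ⟨hu_mem, hufix⟩ := hS1c.sSup_mem hS1ne
  obtain ⟨hv_mem, hvfix⟩ := hS2c.sInf_mem hS2ne
  refine ⟨sSup S1, sInf S2, hu_mem.1, ?_, ?_, hv_mem.2, hufix, hvfix, ?_⟩
  · exact lt_of_le_of_ne hu_mem.2 (fun h => hbx (h ▸ hufix))
  · refine lt_of_le_of_ne hv_mem.1 (fun h => hbx ?_)
    rw [h]; exact hvfix
  · intro y hy1 hy2 hyfix
    rcases le_total y x with hyx | hxy
    · have : y ∈ S1 := ⟨⟨(hu_mem.1.trans hy1.le), hyx⟩, hyfix⟩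
      exact absurd (le_csSup hS1c.bddAbove this) (not_le.2 hy1)
    · have : y ∈ S2 := ⟨⟨hxy, hy2.le.trans hv_mem.2⟩, hyfix⟩
      exact absurd (csInf_le hS2c.bddBelow this) (not_le.2 hy2)

end ZK
namespace ZK

variable {d : ℕ} {ρ : ZdAction1bv d}

lemma Fle (g : Fin d → ℤ) {w z : ℝ} (hw : w ∈ II) (hz : z ∈ II) (hwz : w ≤ z) :
    F ρ g w ≤ F ρ g z := by
  rcases eq_or_lt_of_le hwz with rfl | h
  · exact le_rfl
  · exact (Flt g hw hz h).le

/-- Kopell's lemma. -/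
lemma kopell {a b : Fin d → ℤ} {u v x₀ : ℝ} (hu : 0 ≤ u) (hv : v ≤ 1) (huv : u < v)
    (hbu : F ρ b u = u) (hbv : F ρ b v = v) (hfree : ∀ y, u < y → y < v → F ρ b y ≠ y)
    (hx₀u : u < x₀) (hx₀v : x₀ < v) (hax : F ρ a x₀ = x₀) :
    ∀ y, u ≤ y → y ≤ v → F ρ a y = y := by
  have huI : u ∈ II := ⟨hu, huv.le.trans hv⟩
  have hvI : v ∈ II := ⟨hu.trans huv.le, hv⟩
  have hxI : x₀ ∈ II := ⟨hu.trans hx₀u.le, hx₀v.le.trans hv⟩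
  -- endpoints are fixed by `a`
  have hau : F ρ a u = u := by
    have htfix : F ρ b (F ρ a u) = F ρ a u := fix_transport hbu
    have htI : F ρ a u ∈ II := Fmem a huI
    have htlt : F ρ a u < x₀ := by
      conv_rhs => rw [← hax]
      exact Flt a huI hxI hx₀u
    rcases lt_trichotomy (F ρ a u) u with hlt | heq | hgt
    · exfalso
      have ht' : F ρ (-a) (F ρ a u) < F ρ (-a) u := Flt (-a) htI huI hlt
      rw [inv_cancel] at ht'
      have ht'fix : F ρ b (F ρ (-a) u) = F ρ (-a) u := fix_transport hbu
      have ht'lt : F ρ (-a) u < x₀ := by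
        conv_rhs => rw [← (fix_neg hax : F ρ (-a) x₀ = x₀)]
        exact Flt (-a) huI hxI hx₀u
      exact hfree _ ht' (ht'lt.trans hx₀v) ht'fix
    · exact heq
    · exact absurd htfix (hfree _ hgt (htlt.trans hx₀v))
  have hav : F ρ a v = v := by
    have htfix : F ρ b (F ρ a v) = F ρ a v := fix_transport hbv
    have htI : F ρ a v ∈ II := Fmem a hvI
    have htgt : x₀ < F ρ a v := by
      conv_lhs => rw [← hax]
      exact Flt a hxI hvI hx₀v
    rcases lt_trichotomy (F ρ a v) v with hlt | heq | hgt
    · exact absurd htfix (hfree _ (hx₀u.trans htgt) hlt)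
    · exact heq
    · exfalso
      have ht' : F ρ (-a) v < F ρ (-a) (F ρ a v) := Flt (-a) hvI htI hgt
      rw [inv_cancel] at ht'
      have ht'fix : F ρ b (F ρ (-a) v) = F ρ (-a) v := fix_transport hbv
      have ht'gt : x₀ < F ρ (-a) v := by
        conv_lhs => rw [← (fix_neg hax : F ρ (-a) x₀ = x₀)]
        exact Flt (-a) hxI hvI hx₀v
      exact hfree _ (hx₀u.trans ht'gt) ht' ht'fix
  intro y₀ hy₀u hy₀v
  by_contra hz₀
  -- a point strictly inside moved by `a`
  obtain ⟨z, hzu, hzv, hza⟩ : ∃ z, u < z ∧ z < v ∧ F ρ a z ≠ z := by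
    rcases eq_or_lt_of_le hy₀u with rfl | h1
    · exact absurd hau hz₀
    · rcases eq_or_lt_of_le hy₀v with rfl | h2
      · exact absurd hav hz₀
      · exact ⟨y₀, h1, h2, hz₀⟩
  -- direction of `b`: choose `c` contracting towards `u`
  obtain ⟨c, hcu, hcv, hcfree, hclt⟩ : ∃ c, F ρ c u = u ∧ F ρ c v = v ∧
      (∀ y, u < y → y < v → F ρ c y ≠ y) ∧ (∀ y, u < y → y < v → F ρ c y < y) := by
    rcases sign_const hu hv hfree with hdir | hdir
    · exact ⟨b, hbu, hbv, hfree, hdir⟩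
    · refine ⟨-b, fix_neg hbu, fix_neg hbv, ?_, ?_⟩
      · intro y hy1 hy2 hfx
        apply hfree y hy1 hy2
        conv_lhs => rw [← hfx, inv_cancel']
      · intro y hy1 hy2
        have hyI : y ∈ II := ⟨hu.trans hy1.le, hy2.le.trans hv⟩
        have := Flt (ρ := ρ) (-b) hyI (Fmem b hyI) (hdir y hy1 hy2)
        rwa [inv_cancel] at this
  -- the component of the complement of Fix(a) containing z, inside [u,v]
  set S1 : Set ℝ := {t : ℝ | t ∈ Icc u z ∧ F ρ a t = t} with hS1d
  set S2 : Set ℝ := {t : ℝ | t ∈ Icc z v ∧ F ρ a t = t} with hS2d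
  have hS1c : IsCompact S1 := fix_compact a hu ((hzv.le).trans hv)
  have hS2c : IsCompact S2 := fix_compact a (hu.trans hzu.le) hv
  obtain ⟨⟨hc0u, hc0z⟩, hc0fix⟩ := hS1c.sSup_mem ⟨u, ⟨le_rfl, hzu.le⟩, hau⟩
  obtain ⟨⟨hd0z, hd0v⟩, hd0fix⟩ := hS2c.sInf_mem ⟨v, ⟨hzv.le, le_rfl⟩, hav⟩
  set c₀ := sSup S1 with hc₀d
  set d₀ := sInf S2 with hd₀d
  have hc0z' : c₀ < z := lt_of_le_of_ne hc0z fun h => hza (h ▸ hc0fix)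
  have hd0z' : z < d₀ := by
    refine lt_of_le_of_ne hd0z fun h => hza ?_
    rw [h]; exact hd0fix
  have hfree_a : ∀ t, c₀ < t → t < d₀ → F ρ a t ≠ t := by
    intro t h1 h2 hfix
    rcases le_total t z with h | h
    · exact absurd (le_csSup hS1c.bddAbove ⟨⟨hc0u.trans (le_of_lt h1), h⟩, hfix⟩) (not_le.2 h1)
    · exact absurd (csInf_le hS2c.bddBelow ⟨⟨h, h2.le.trans hd0v⟩, hfix⟩) (not_le.2 h2)
  have hzvI : z ∈ II := ⟨hu.trans hzu.le, hzv.le.trans hv⟩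
  have hc0I : c₀ ∈ II := ⟨hu.trans hc0u, (hc0z.trans hzv.le).trans hv⟩
  have hd0I : d₀ ∈ II := ⟨hu.trans (hzu.le.trans hd0z), hd0v.trans hv⟩
  have hud0 : u < d₀ := hzu.trans hd0z'
  -- u < c₀
  have hc0gt : u < c₀ := by
    by_contra hcon
    have hc0e : c₀ = u := le_antisymm (not_lt.1 hcon) hc0u
    rcases eq_or_lt_of_le hd0v with hd0e | hd0lt
    · exact hfree_a x₀ (by rw [hc0e]; exact hx₀u) (by rw [hd0e]; exact hx₀v) hax
    · have htfix : F ρ a (F ρ c d₀) = F ρ c d₀ := fix_transport hd0fix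
      have h1 : F ρ c d₀ < d₀ := hclt d₀ hud0 hd0lt
      have h2 : u < F ρ c d₀ := by
        conv_lhs => rw [← hcu]
        exact Flt c huI hd0I hud0
      exact hfree_a _ (by rw [hc0e]; exact h2) h1 htfix
  have hc0v : c₀ < v := hc0z'.trans hzv
  -- d₀ < v
  have hd0v' : d₀ < v := by
    rcases eq_or_lt_of_le hd0v with hd0e | h
    · exfalso
      have h1 : F ρ c c₀ < c₀ := hclt c₀ hc0gt hc0v
      have h2 : c₀ < F ρ (-c) c₀ := by
        have := Flt (ρ := ρ) (-c) (Fmem c hc0I) hc0I h1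
        rwa [inv_cancel] at this
      have h3 : F ρ (-c) c₀ < v := by
        conv_rhs => rw [← (fix_neg hcv : F ρ (-c) v = v)]
        exact Flt (-c) hc0I hvI hc0v
      have hwfix : F ρ a (F ρ (-c) c₀) = F ρ (-c) c₀ := fix_transport hc0fix
      exact hfree_a _ h2 (by rw [hd0e]; exact h3) hwfix
    · exact h
  -- h(d₀) ≤ c₀
  have hcd : F ρ c d₀ ≤ c₀ := by
    by_contra hcon
    have h1 : F ρ c d₀ < d₀ := hclt d₀ hud0 hd0v'
    exact hfree_a _ (not_le.1 hcon) h1 (fix_transport hd0fix)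
  -- choose a' with a' > id on (c₀, d₀)
  obtain ⟨a', ha'c0, ha'd0, ha'u, ha'gt⟩ : ∃ a', F ρ a' c₀ = c₀ ∧ F ρ a' d₀ = d₀ ∧
      F ρ a' u = u ∧ ∀ y, c₀ < y → y < d₀ → y < F ρ a' y := by
    rcases sign_const (a := a) hc0I.1 hd0I.2 hfree_a with hdir | hdir
    · refine ⟨-a, fix_neg hc0fix, fix_neg hd0fix, fix_neg hau, ?_⟩
      intro y hy1 hy2
      have hyI : y ∈ II := ⟨hc0I.1.trans hy1.le, hy2.le.trans hd0I.2⟩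
      have := Flt (ρ := ρ) (-a) (Fmem a hyI) hyI (hdir y hy1 hy2)
      rwa [inv_cancel] at this
    · exact ⟨a, hc0fix, hd0fix, hau, hdir⟩
  -- derivative of a' at u is 1
  have horb1 := orbit_down (ρ := ρ) (c := c) hu hc0I.2 hc0gt hcu
    (fun y h1 h2 => hclt y h1 (lt_of_le_of_lt h2 hc0v))
  have hfix_seq : ∀ n, F ρ a' ((F ρ c)^[n] c₀) = (F ρ c)^[n] c₀ := by
    intro n
    induction n with
    | zero => simpa using ha'c0
    | succ n ih => rw [Function.iterate_succ_apply']; exact fix_transport ih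
  have hDa'u : D ρ a' u = 1 := by
    refine deriv_one_of_fixed_seq huI ha'u (z := fun n => (F ρ c)^[n] c₀) ?_ horb1.2.2
    intro n
    exact ⟨⟨hu.trans (horb1.1 n).1.le, (((horb1.1 n).2.trans hc0z).trans hzv.le).trans hv⟩,
      ne_of_gt (horb1.1 n).1, hfix_seq n⟩
  -- the orbit of z under a' increases to d₀
  have horb2 := orbit_up (ρ := ρ) (c := a') hzvI.1 hd0I.2 hd0z' ha'd0
    (fun y h1 h2 => ha'gt y (hc0z'.trans_le h1) h2)
  -- choose m with small slope
  set V : ℝ := (vr ρ c u d₀).toReal with hVd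
  have htendslope : Tendsto (fun m => (d₀ - (F ρ a')^[m] z) / (d₀ - z)) atTop (𝓝 0) := by
    have h1 : Tendsto (fun m => d₀ - (F ρ a')^[m] z) atTop (𝓝 (d₀ - d₀)) :=
      tendsto_const_nhds.sub horb2.2
    rw [sub_self] at h1
    simpa using h1.div_const (d₀ - z)
  obtain ⟨m, hm⟩ := (htendslope.eventually (eventually_lt_nhds (Real.exp_pos (-V)))).exists
  -- mean value theorem
  have hzd : z < d₀ := hd0z'
  have hIccsub : Icc z d₀ ⊆ II := Icc_subset_Icc hzvI.1 hd0I.2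
  obtain ⟨ξ, hξ, hξd⟩ := exists_hasDerivAt_eq_slope (F ρ (m • a')) (D ρ (m • a')) hzd
    ((Fcont (m • a')).mono hIccsub)
    (fun w hw => hasDAt (m • a') ⟨lt_of_lt_of_le (lt_of_le_of_lt hu (hzu.trans_le hw.1.le)) le_rfl,
      lt_of_lt_of_le (hw.2.trans hd0v') hv⟩)
  rw [fix_nsmul ha'd0 m, Fiterate] at hξd
  -- iterates of a' preserve [c₀, d₀]
  have hitin : ∀ w, c₀ ≤ w → w ≤ d₀ → ∀ n, c₀ ≤ (F ρ a')^[n] w ∧ (F ρ a')^[n] w ≤ d₀ := by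
    intro w hw1 hw2 n
    induction n with
    | zero => exact ⟨hw1, hw2⟩
    | succ n ih =>
      have hwI : (F ρ a')^[n] w ∈ II := ⟨hc0I.1.trans ih.1, ih.2.trans hd0I.2⟩
      rw [Function.iterate_succ_apply']
      constructor
      · conv_lhs => rw [← ha'c0]
        exact Fle a' hc0I hwI ih.1
      · conv_rhs => rw [← ha'd0]
        exact Fle a' hwI hd0I ih.2
  have hξI : c₀ ≤ ξ := (hc0z'.trans hξ.1).le
  -- core estimate
  have hcore := core (ρ := ρ) (c := c) (e := m • a') (P := u) (A := c₀) (B := d₀)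
    hu hd0I.2 hc0gt (hc0z.trans hd0z) hcu
    (fun y h1 h2 => (hclt y h1 (lt_of_le_of_lt h2 hd0v')).le)
    (fun y h1 h2 => hclt y h1 (h2.trans hd0v'))
    (fix_nsmul ha'u m) 1 (by simpa using hcd)
    hξI hξ.2
    (by rw [Fiterate]; exact (hitin ξ hξI hξ.2.le m).1)
    (by rw [Fiterate]; exact (hitin ξ hξI hξ.2.le m).2)
  have hD1 : D ρ (m • a') u = 1 := by rw [Dfix_nsmul huI ha'u m, hDa'u, one_pow]
  rw [hD1, Real.log_one, sub_zero] at hcore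
  have hcore2 : |Real.log (D ρ (m • a') ξ)| ≤ V := by rw [hVd]; simpa using hcore
  -- lower bound on the derivative at ξ
  have hξpos : 0 < D ρ (m • a') ξ := Dpos (m • a')
    ⟨hc0I.1.trans hξI, hξ.2.le.trans hd0I.2⟩
  have hlow : Real.exp (-V) ≤ D ρ (m • a') ξ := by
    have h1 : -V ≤ Real.log (D ρ (m • a') ξ) := neg_le_of_abs_le hcore2
    calc Real.exp (-V) ≤ Real.exp (Real.log (D ρ (m • a') ξ)) := Real.exp_le_exp.2 h1
      _ = D ρ (m • a') ξ := Real.exp_log hξpos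
  rw [hξd] at hlow
  exact absurd hm (not_lt.2 hlow)

end ZK
namespace ZK

variable {d : ℕ} {ρ : ZdAction1bv d}

lemma inv_iterate (c : Fin d → ℤ) (k : ℕ) (w : ℝ) :
    (F ρ (-c))^[k] ((F ρ c)^[k] w) = w := by
  induction k generalizing w with
  | zero => simp
  | succ k ih =>
    rw [Function.iterate_succ_apply' (F ρ c), Function.iterate_succ_apply (F ρ (-c)),
      inv_cancel, ih]

/-- Kopell's hyperbolic-centralizer estimate: a commuting map with derivative 1 at a
hyperbolic fixed point cannot move points towards it on one side. -/
lemma hyperbolic {a c : Fin d → ℤ} {p r : ℝ} (hp : 0 ≤ p) (hr : r ≤ 1) (hpr : p < r)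
    (hap : F ρ a p = p) (hcp : F ρ c p = p) (hDa : D ρ a p = 1) (hDc : D ρ c p < 1)
    (hsign : ∀ y, p < y → y < r → F ρ a y < y) : False := by
  have hpI : p ∈ II := ⟨hp, hpr.le.trans hr⟩
  have hlam0 : 0 < D ρ c p := Dpos c hpI
  obtain ⟨s, hs1, hlams, hs0⟩ : ∃ s : ℝ, s < 1 ∧ D ρ c p < s ∧ 0 < s :=
    ⟨(1 + D ρ c p)/2, by linarith, by linarith, by linarith⟩
  -- slope bounds near p
  have hsa := hasDerivWithinAt_iff_tendsto_slope.1 (hasD (ρ := ρ) a hpI)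
  have hsc := hasDerivWithinAt_iff_tendsto_slope.1 (hasD (ρ := ρ) c hpI)
  rw [hDa] at hsa
  have heva : ∀ᶠ t in 𝓝[II \ {p}] p, s < slope (F ρ a) p t :=
    hsa.eventually (eventually_gt_nhds hs1)
  have hevc : ∀ᶠ t in 𝓝[II \ {p}] p, slope (F ρ c) p t < s :=
    hsc.eventually (eventually_lt_nhds hlams)
  have hev := heva.and hevc
  rw [eventually_nhdsWithin_iff, Metric.eventually_nhds_iff] at hev
  obtain ⟨ε, hε, hball⟩ := hev
  -- the reference point x
  obtain ⟨x, hpx, hxr, hslopes⟩ : ∃ x, p < x ∧ x < r ∧ ∀ y, p < y → y ≤ x →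
      s * (y - p) < F ρ a y - p ∧ F ρ c y - p < s * (y - p) := by
    refine ⟨min (p + ε/2) ((p+r)/2), lt_min (by linarith) (by linarith),
      lt_of_le_of_lt (min_le_right _ _) (by linarith), ?_⟩
    intro y h1 h2
    have h2a : y ≤ p + ε/2 := h2.trans (min_le_left _ _)
    have h2b : y ≤ (p+r)/2 := h2.trans (min_le_right _ _)
    have hyI : y ∈ II := ⟨hp.trans h1.le, by linarith⟩
    have hdist : dist y p < ε := by
      rw [Real.dist_eq, abs_of_pos (sub_pos.2 h1)]
      linarith
    have hmem : y ∈ II \ {p} := ⟨hyI, by simp [ne_of_gt h1]⟩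
    obtain ⟨hA, hC⟩ := hball hdist hmem
    have hyp : 0 < y - p := sub_pos.2 h1
    constructor
    · have := (lt_div_iff₀ hyp).1 (by rwa [slope_def_field, hap] at hA)
      linarith
    · have := (div_lt_iff₀ hyp).1 (by rwa [slope_def_field, hcp] at hC)
      linarith
  have hx1 : x ≤ 1 := hxr.le.trans hr
  have hxI : x ∈ II := ⟨hp.trans hpx.le, hx1⟩
  have hfacts : ∀ y, p < y → y ≤ x →
      p < F ρ c y ∧ F ρ c y < F ρ a y ∧ F ρ a y < y ∧ F ρ c y < y := by
    intro y h1 h2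
    have hyI : y ∈ II := ⟨hp.trans h1.le, h2.trans hx1⟩
    have h3 : p < F ρ c y := by
      conv_lhs => rw [← hcp]
      exact Flt c hpI hyI h1
    have hslp := hslopes y h1 h2
    have h4 : F ρ c y < F ρ a y := by linarith [hslp.1, hslp.2]
    have h5 : F ρ a y < y := hsign y h1 (lt_of_le_of_lt h2 hxr)
    exact ⟨h3, h4, h5, h4.trans h5⟩
  -- orbits of x under c and under a
  have horbh := orbit_down (ρ := ρ) (c := c) hp hx1 hpx hcp
    (fun y h1 h2 => (hfacts y h1 h2).2.2.2)
  have horbf := orbit_down (ρ := ρ) (c := a) hp hx1 hpx hap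
    (fun y h1 h2 => (hfacts y h1 h2).2.2.1)
  have hXI : ∀ i, (F ρ c)^[i] x ∈ II :=
    fun i => ⟨hp.trans (horbh.1 i).1.le, (horbh.1 i).2.trans hx1⟩
  have hZI : ∀ i, (F ρ a)^[i] x ∈ II :=
    fun i => ⟨hp.trans (horbf.1 i).1.le, (horbf.1 i).2.trans hx1⟩
  -- maximum of the derivative of c on [p, x]
  obtain ⟨M, hM0, hMbound⟩ : ∃ M : ℝ, 0 < M ∧ ∀ y ∈ Icc p x, D ρ c y ≤ M := by
    obtain ⟨w₀, hw₀mem, hw₀max⟩ := isCompact_Icc.exists_isMaxOn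
      ⟨p, left_mem_Icc.2 hpx.le⟩ ((Dcont c).mono (Icc_subset_Icc hp hx1))
    exact ⟨D ρ c w₀, Dpos c ⟨hp.trans hw₀mem.1, hw₀mem.2.trans hx1⟩, hw₀max⟩
  set V : ℝ := (vr ρ c p x).toReal with hVd
  have hV0 : 0 ≤ V := ENNReal.toReal_nonneg
  -- choice of k
  have hloglam : 0 < Real.log (D ρ c p)⁻¹ := Real.log_pos (one_lt_inv₀ hlam0 |>.2 hDc)
  obtain ⟨k, hk1, hkbig⟩ : ∃ k : ℕ, 1 ≤ k ∧
      2*V + Real.log (1 + M) < k * Real.log (D ρ c p)⁻¹ := by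
    obtain ⟨k₀, hk₀⟩ := exists_nat_gt ((2*V + Real.log (1 + M)) / Real.log (D ρ c p)⁻¹)
    refine ⟨k₀ + 1, Nat.succ_le_succ (Nat.zero_le _), ?_⟩
    have h1 : (2*V + Real.log (1 + M)) / Real.log (D ρ c p)⁻¹ < ((k₀+1 : ℕ):ℝ) := by
      refine hk₀.trans_le ?_
      exact_mod_cast Nat.le_succ k₀
    calc 2*V + Real.log (1 + M)
        = ((2*V + Real.log (1 + M)) / Real.log (D ρ c p)⁻¹) * Real.log (D ρ c p)⁻¹ :=
          (div_mul_cancel₀ _ (ne_of_gt hloglam)).symm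
      _ < ((k₀+1 : ℕ):ℝ) * Real.log (D ρ c p)⁻¹ := mul_lt_mul_of_pos_right h1 hloglam
  -- first crossing time m
  have hexm : ∃ m, (F ρ a)^[m] x ≤ (F ρ c)^[k] x := by
    have hev2 := horbf.2.2.eventually (eventually_lt_nhds (horbh.1 k).1)
    obtain ⟨m, hm⟩ := hev2.exists
    exact ⟨m, hm.le⟩
  have hdecp : DecidablePred fun m => (F ρ a)^[m] x ≤ (F ρ c)^[k] x :=
    fun _ => Classical.dec _
  obtain ⟨m, hm_le, hm_min⟩ : ∃ m, (F ρ a)^[m] x ≤ (F ρ c)^[k] x ∧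
      ∀ j, j < m → ¬((F ρ a)^[j] x ≤ (F ρ c)^[k] x) :=
    ⟨@Nat.find _ hdecp hexm, @Nat.find_spec _ hdecp hexm,
      fun j hj => @Nat.find_min _ hdecp hexm _ hj⟩
  have hXk_lt_x : (F ρ c)^[k] x < x := by
    have h1 : (F ρ c)^[1] x < x := by
      simpa using (hfacts x hpx le_rfl).2.2.2
    rcases eq_or_lt_of_le hk1 with h | h
    · rw [← h]; exact h1
    · exact lt_of_le_of_lt (horbh.2.1 1 k hk1) h1
  have hm_pos : 0 < m := by
    rcases Nat.eq_zero_or_pos m with h | h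
    · exfalso
      rw [h] at hm_le
      simp only [Function.iterate_zero_apply] at hm_le
      exact absurd hm_le (not_le.2 hXk_lt_x)
    · exact h
  have hlower : (F ρ c)^[k+1] x < (F ρ a)^[m] x := by
    have hprev : (F ρ c)^[k] x < (F ρ a)^[m-1] x := not_le.1 (hm_min (m-1) (by omega))
    have hprevIoc := horbf.1 (m-1)
    have hstep : (F ρ a)^[m] x = F ρ a ((F ρ a)^[m-1] x) := by
      conv_lhs => rw [show m = (m-1)+1 by omega]
      exact Function.iterate_succ_apply' _ _ _
    have h1 : (F ρ c)^[k+1] x = F ρ c ((F ρ c)^[k] x) := Function.iterate_succ_apply' _ _ _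
    have h2 : F ρ c ((F ρ c)^[k] x) < F ρ c ((F ρ a)^[m-1] x) :=
      Flt c (hXI k) (hZI (m-1)) hprev
    have h3 : F ρ c ((F ρ a)^[m-1] x) < F ρ a ((F ρ a)^[m-1] x) :=
      (hfacts _ hprevIoc.1 hprevIoc.2).2.1
    rw [hstep, h1]
    exact h2.trans h3
  -- the element w = h⁻ᵏ ∘ fᵐ
  set e : Fin d → ℤ := m • a + k • (-c) with hed
  have hep : F ρ e p = p := fix_add (fix_nsmul hap m) (fix_nsmul (fix_neg hcp) k)
  have hDep : D ρ e p = (D ρ c p)⁻¹ ^ k := by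
    rw [hed, Dfix_add hpI (fix_nsmul (fix_neg hcp) k), Dfix_nsmul hpI hap,
      Dfix_nsmul hpI (fix_neg hcp), hDa, one_pow, one_mul, Dfix_neg hpI hcp]
  have hGh1 : F ρ (k • (-c)) ((F ρ c)^[k+1] x) = F ρ c x := by
    rw [Fiterate (-c) k, Function.iterate_succ_apply (F ρ c), inv_iterate]
  have hGh2 : F ρ (k • (-c)) ((F ρ c)^[k] x) = x := by
    rw [Fiterate (-c) k, inv_iterate]
  have hFex : F ρ e x = F ρ (k • (-c)) ((F ρ a)^[m] x) := by
    rw [← Fiterate a m x, Fcomp, hed, add_comm (m • a) (k • (-c))]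
  -- W x ∈ (X 1, x]
  have hWx1 : F ρ c x < F ρ e x := by
    rw [hFex]
    conv_lhs => rw [← hGh1]
    exact Flt (k • (-c)) (hXI (k+1)) (hZI m) hlower
  have hWx2 : F ρ e x ≤ x := by
    rw [hFex]
    conv_rhs => rw [← hGh2]
    exact Fle (k • (-c)) (hZI m) (hXI k) hm_le
  have hWxI : F ρ e x ∈ II := by rw [hFex]; exact Fmem _ (hZI m)
  -- first two orbit points
  have hX1x : F ρ c x < x := (hfacts x hpx le_rfl).2.2.2
  have hX1p : p < F ρ c x := (hfacts x hpx le_rfl).1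
  have hX1I : F ρ c x ∈ II := Fmem c hxI
  have hX2lt : F ρ c (F ρ c x) < F ρ c x := (hfacts _ hX1p hX1x.le).2.2.2
  have hX2p : p < F ρ c (F ρ c x) := (hfacts _ hX1p hX1x.le).1
  -- W (X 1) ∈ (X 2, X 1]
  have hWX1eq : F ρ e (F ρ c x) = F ρ c (F ρ e x) := by
    rw [Fcomp, Fcomp, add_comm]
  have hWX1gt : F ρ c (F ρ c x) < F ρ e (F ρ c x) := by
    rw [hWX1eq]
    exact Flt c hX1I hWxI hWx1
  have hWX1le : F ρ e (F ρ c x) ≤ F ρ c x := by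
    rw [hWX1eq]
    exact Fle c hWxI hxI hWx2
  -- mean value theorems on [X 1, x]
  have hIoosub : Ioo (F ρ c x) x ⊆ Ioo (0:ℝ) 1 :=
    fun w hw => ⟨lt_of_le_of_lt hp (hX1p.trans hw.1), lt_of_lt_of_le (hw.2.trans hxr) hr⟩
  obtain ⟨ξ, hξ, hξd⟩ := exists_hasDerivAt_eq_slope (F ρ e) (D ρ e) hX1x
    ((Fcont e).mono (Icc_subset_Icc hX1I.1 hx1))
    (fun w hw => hasDAt e (hIoosub hw))
  have hξI : ξ ∈ II := ⟨hX1I.1.trans hξ.1.le, hξ.2.le.trans hx1⟩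
  obtain ⟨η, hη, hηd⟩ := exists_hasDerivAt_eq_slope (F ρ c) (D ρ c) hX1x
    ((Fcont c).mono (Icc_subset_Icc hX1I.1 hx1))
    (fun w hw => hasDAt c (hIoosub hw))
  have hηM : D ρ c η ≤ M := hMbound η ⟨(hX1p.trans hη.1).le, hη.2.le⟩
  have hdenpos : 0 < x - F ρ c x := sub_pos.2 hX1x
  have hX1X2 : F ρ c x - F ρ c (F ρ c x) = D ρ c η * (x - F ρ c x) := by
    rw [hηd]; field_simp
  have hupper : D ρ e ξ < 1 + M := by
    rw [hξd, div_lt_iff₀ hdenpos]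
    nlinarith [mul_nonneg (sub_nonneg.2 hηM) hdenpos.le]
  -- lower bound via the core estimate
  have hX2A : (F ρ c)^[2] x = F ρ c (F ρ c x) := by
    rw [show (2:ℕ) = 1 + 1 from rfl, Function.iterate_add_apply]
    simp
  have hWX1ltWξ : F ρ e (F ρ c x) < F ρ e ξ := Flt e hX1I hξI hξ.1
  have hWξltWx : F ρ e ξ < F ρ e x := Flt e hξI hxI hξ.2
  have hcore := core (ρ := ρ) (c := c) (e := e) (P := p) (A := F ρ c (F ρ c x)) (B := x)
    hp hx1 hX2p (hX2lt.le.trans hX1x.le) hcp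
    (fun y h1 h2 => (hfacts y h1 h2).2.2.2.le)
    (fun y h1 h2 => (hfacts y h1 h2.le).2.2.2)
    hep 2 (le_of_eq hX2A)
    (hX2lt.trans hξ.1).le hξ.2
    (hWX1gt.trans hWX1ltWξ).le
    (hWξltWx.le.trans hWx2)
  have hlogDep : Real.log (D ρ e p) = k * Real.log (D ρ c p)⁻¹ := by
    rw [hDep, Real.log_pow]
  have hcoreV : |Real.log (D ρ e ξ) - (k:ℝ) * Real.log (D ρ c p)⁻¹| ≤ 2 * V := by
    rw [hVd, ← hlogDep]
    simpa using hcore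
  have hlb : Real.log (1 + M) < Real.log (D ρ e ξ) := by
    have h1 : -(2*V) ≤ Real.log (D ρ e ξ) - (k:ℝ) * Real.log (D ρ c p)⁻¹ :=
      neg_le_of_abs_le hcoreV
    linarith [hkbig]
  have hDeξpos : 0 < D ρ e ξ := Dpos e hξI
  have hfin : 1 + M < D ρ e ξ := by
    have h2 := Real.exp_lt_exp.2 hlb
    rwa [Real.exp_log (by linarith : (0:ℝ) < 1 + M), Real.exp_log hDeξpos] at h2
  linarith [hupper]

end ZK
namespace ZK

variable {d : ℕ} {ρ : ZdAction1bv d}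

/-- One-sided rigidity: under the no-parabolic-fixed-point hypothesis, an element fixing `x`
but not everywhere to its right would produce a contradiction. -/
lemma onesided
    (hnp : ∀ p : ℝ, 0 < p → p < 1 →
      ¬ ((∀ e : Fin d → ℤ, F ρ e p = p) ∧ (∀ e : Fin d → ℤ, D ρ e p = 1)))
    (a b : Fin d → ℤ) {x : ℝ} (hx0 : 0 < x) (hx1 : x < 1)
    (hax : F ρ a x = x) (hbx : F ρ b x ≠ x) :
    ∀ y, x ≤ y → y ≤ 1 → F ρ a y = y := by
  obtain ⟨u, v, hu0, hux, hxv, hv1, hbu, hbv, hbfree⟩ :=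
    component (ρ := ρ) ⟨hx0, hx1⟩ hbx
  have hav : ∀ y, u ≤ y → y ≤ v → F ρ a y = y :=
    kopell hu0 hv1 (hux.trans hxv) hbu hbv hbfree hux hxv hax
  by_contra hcon
  push_neg at hcon
  obtain ⟨y, hxy, hy1, hay⟩ := hcon
  have hy1' : y < 1 := lt_of_le_of_ne hy1 fun h => hay (by rw [h]; exact (ρ.elt a).map_one)
  set T : Set ℝ := {t : ℝ | t ∈ Icc x 1 ∧ ∀ s, x ≤ s → s ≤ t → F ρ a s = s} with hTd
  have hvT : v ∈ T := ⟨⟨hxv.le, hv1⟩, fun s h1 h2 => hav s ((hux.trans_le h1).le) h2⟩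
  have hTne : T.Nonempty := ⟨v, hvT⟩
  have hbddT : BddAbove T := ⟨1, fun t ht => ht.1.2⟩
  set p := sSup T with hpd
  have hvp : v ≤ p := le_csSup hbddT hvT
  have hxp : x < p := hxv.trans_le hvp
  have hpy : p ≤ y := by
    refine csSup_le hTne fun t ht => ?_
    by_contra h
    exact hay (ht.2 y hxy (not_le.1 h).le)
  have hp1 : p < 1 := lt_of_le_of_lt hpy hy1'
  have hp0 : 0 < p := hx0.trans hxp
  have hpI : p ∈ II := ⟨hp0.le, hp1.le⟩
  have hid : ∀ s, x ≤ s → s < p → F ρ a s = s := by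
    intro s h1 h2
    obtain ⟨t, htT, hst⟩ := exists_lt_of_lt_csSup hTne h2
    exact htT.2 s h1 hst.le
  -- an increasing sequence approaching p from the left
  obtain ⟨z, hz, hztendz⟩ : ∃ z : ℕ → ℝ,
      (∀ n, x ≤ z n ∧ z n < p) ∧ Tendsto z atTop (𝓝 p) := by
    refine ⟨fun n => p - (p-x)/(n+2), fun n => ⟨?_, ?_⟩, ?_⟩
    · have h1 : (p-x)/((n:ℝ)+2) ≤ (p-x) := by
        apply div_le_self (by linarith)
        have := Nat.cast_nonneg (α := ℝ) n
        linarith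
      linarith
    · have h1 : 0 < (p-x)/((n:ℝ)+2) := div_pos (by linarith) (by positivity)
      linarith
    · have h2 : Tendsto (fun n : ℕ => ((n:ℝ)+2)) atTop atTop :=
        tendsto_atTop_add_const_right atTop 2 tendsto_natCast_atTop_atTop
      have h3 : Tendsto (fun n : ℕ => (p-x)/((n:ℝ)+2)) atTop (𝓝 0) :=
        Tendsto.div_atTop tendsto_const_nhds h2
      have h4 := (tendsto_const_nhds : Tendsto (fun _ : ℕ => p) atTop (𝓝 p)).sub h3
      simpa using h4
  have hzI : ∀ n, z n ∈ II := fun n => ⟨hx0.le.trans (hz n).1, (hz n).2.le.trans hp1.le⟩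
  have hap : F ρ a p = p := by
    have hwithin : Tendsto z atTop (𝓝[II] p) :=
      tendsto_nhdsWithin_iff.2 ⟨hztendz, Eventually.of_forall hzI⟩
    have h1 : Tendsto (fun n => F ρ a (z n)) atTop (𝓝 (F ρ a p)) :=
      (Fcont a p hpI).tendsto.comp hwithin
    have h2 : (fun n => F ρ a (z n)) = z := funext fun n => hid _ (hz n).1 (hz n).2
    rw [h2] at h1
    exact tendsto_nhds_unique h1 hztendz
  have hDap : D ρ a p = 1 :=
    deriv_one_of_fixed_seq hpI hap
      (fun n => ⟨hzI n, ne_of_lt (hz n).2, hid _ (hz n).1 (hz n).2⟩) hztendz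
  -- points moved by a arbitrarily close to the right of p
  have hstar : ∀ ε, 0 < ε → ∃ t, p < t ∧ t < p + ε ∧ t < 1 ∧ F ρ a t ≠ t := by
    intro ε hεp
    by_contra hcon2
    push_neg at hcon2
    have ht'T : min (p + ε/2) ((p+1)/2) ∈ T := by
      have hmin1 : min (p + ε/2) ((p+1)/2) ≤ p + ε/2 := min_le_left _ _
      have hmin2 : min (p + ε/2) ((p+1)/2) ≤ (p+1)/2 := min_le_right _ _
      have hminp : p < min (p + ε/2) ((p+1)/2) := lt_min (by linarith) (by linarith)
      refine ⟨⟨(hxp.trans hminp).le, by linarith⟩, fun s h1 h2 => ?_⟩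
      rcases lt_or_ge s p with h | h
      · exact hid s h1 h
      · rcases eq_or_lt_of_le h with heq | hps
        · rw [← heq]; exact hap
        · have hs1 : s < 1 := by linarith [h2.trans hmin2]
          have hsε : s < p + ε := by linarith [h2.trans hmin1]
          exact hcon2 s hps hsε hs1
    have h1 := le_csSup hbddT ht'T
    have h2 : p < min (p + ε/2) ((p+1)/2) := lt_min (by linarith) (by linarith)
    rw [← hpd] at h1
    linarith
  -- apply the no-parabolic hypothesis at p
  by_cases hA : ∀ e : Fin d → ℤ, F ρ e p = p
  · -- all elements fix p, so some has derivative ≠ 1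
    have hB : ∃ e : Fin d → ℤ, D ρ e p ≠ 1 := by
      by_contra hBB
      push_neg at hBB
      exact hnp p hp0 hp1 ⟨hA, hBB⟩
    obtain ⟨c₀, hc₀⟩ := hB
    have hc₀p : F ρ c₀ p = p := hA c₀
    have hDc₀pos : 0 < D ρ c₀ p := Dpos c₀ hpI
    -- p is isolated from the right in Fix(c₀)
    obtain ⟨δ, hδ0, hδfree⟩ : ∃ δ, 0 < δ ∧
        ∀ w, p < w → w < p + δ → w ≤ 1 → F ρ c₀ w ≠ w := by
      by_contra hco
      push_neg at hco
      have hseq : ∀ n : ℕ, ∃ w, p < w ∧ w < p + 1/(n+1) ∧ w ≤ 1 ∧ F ρ c₀ w = w :=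
        fun n => hco (1/(n+1)) (by positivity)
      choose w hw1 hw2 hw3 hw4 using hseq
      have hwtend : Tendsto w atTop (𝓝 p) := by
        have hub : Tendsto (fun n : ℕ => p + 1/((n:ℝ)+1)) atTop (𝓝 p) := by
          have h2 : Tendsto (fun n : ℕ => ((n:ℝ)+1)) atTop atTop :=
            tendsto_atTop_add_const_right atTop 1 tendsto_natCast_atTop_atTop
          have h3 : Tendsto (fun n : ℕ => (1:ℝ)/((n:ℝ)+1)) atTop (𝓝 0) :=
            Tendsto.div_atTop tendsto_const_nhds h2
          simpa using tendsto_const_nhds.add h3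
        exact tendsto_of_tendsto_of_tendsto_of_le_of_le tendsto_const_nhds hub
          (fun n => (hw1 n).le) (fun n => (hw2 n).le)
      exact hc₀ (deriv_one_of_fixed_seq hpI hc₀p
        (fun n => ⟨⟨hp0.le.trans (hw1 n).le, hw3 n⟩, ne_of_gt (hw1 n), hw4 n⟩) hwtend)
    set r := min (p + δ) 1 with hrd
    have hpr : p < r := lt_min (by linarith) hp1
    have hr1 : r ≤ 1 := min_le_right _ _
    have hrfree : ∀ w, p < w → w < r → F ρ c₀ w ≠ w := fun w h1 h2 =>
      hδfree w h1 (h2.trans_le (min_le_left _ _)) (h2.le.trans (min_le_right _ _))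
    by_cases hfixa : ∃ w, p < w ∧ w < r ∧ F ρ a w = w
    · -- Kopell applies on the right of p, contradicting hstar
      obtain ⟨w, hw1, hw2, hw3⟩ := hfixa
      have hS : IsCompact {t : ℝ | t ∈ Icc r 1 ∧ F ρ c₀ t = t} :=
        fix_compact c₀ (hp0.le.trans hpr.le) le_rfl
      obtain ⟨⟨hr'1, hr'2⟩, hr'fix⟩ := hS.sInf_mem ⟨1, ⟨hr1, le_rfl⟩, (ρ.elt c₀).map_one⟩
      set r' := sInf {t : ℝ | t ∈ Icc r 1 ∧ F ρ c₀ t = t} with hr'd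
      have hfree' : ∀ w, p < w → w < r' → F ρ c₀ w ≠ w := by
        intro w h1 h2 hfix
        rcases lt_or_ge w r with h | h
        · exact hrfree w h1 h hfix
        · exact absurd (csInf_le hS.bddBelow ⟨⟨h, h2.le.trans hr'2⟩, hfix⟩) (not_le.2 h2)
      have hall := kopell (u := p) (v := r') hp0.le hr'2 (hpr.trans_le hr'1) hc₀p hr'fix
        hfree' hw1 (hw2.trans_le hr'1) hw3
      obtain ⟨t, ht1, ht2, ht3, ht4⟩ := hstar (r - p) (by linarith)
      exact ht4 (hall t ht1.le (by linarith [hr'1]))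
    · -- the hyperbolic-centralizer estimate gives a contradiction
      push_neg at hfixa
      obtain ⟨a', ha'p, hDa', ha'sign⟩ : ∃ a', F ρ a' p = p ∧ D ρ a' p = 1 ∧
          ∀ w, p < w → w < r → F ρ a' w < w := by
        rcases sign_const (a := a) hp0.le hr1 hfixa with hdir | hdir
        · exact ⟨a, hap, hDap, hdir⟩
        · refine ⟨-a, fix_neg hap, by rw [Dfix_neg hpI hap, hDap]; norm_num, ?_⟩
          intro w h1 h2
          have hwI : w ∈ II := ⟨hp0.le.trans h1.le, h2.le.trans hr1⟩
          have := Flt (ρ := ρ) (-a) hwI (Fmem a hwI) (hdir w h1 h2)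
          rwa [inv_cancel] at this
      obtain ⟨c', hc'p, hDc'⟩ : ∃ c', F ρ c' p = p ∧ D ρ c' p < 1 := by
        rcases lt_trichotomy (D ρ c₀ p) 1 with h | h | h
        · exact ⟨c₀, hc₀p, h⟩
        · exact absurd h hc₀
        · refine ⟨-c₀, fix_neg hc₀p, ?_⟩
          rw [Dfix_neg hpI hc₀p]
          exact inv_lt_one_of_one_lt₀ h
      exact hyperbolic hp0.le hr1 hpr ha'p hc'p hDa' hDc' ha'sign
  · -- some element moves p: its component around p gives a contradiction via Kopell
    push_neg at hA
    obtain ⟨e, hep⟩ := hA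
    obtain ⟨u₂, v₂, hu₂0, hu₂p, hpv₂, hv₂1, heu₂, hev₂, hefree⟩ :=
      component (ρ := ρ) ⟨hp0, hp1⟩ hep
    have hallfix := kopell hu₂0 hv₂1 (hu₂p.trans hpv₂) heu₂ hev₂ hefree hu₂p hpv₂ hap
    obtain ⟨t, ht1, ht2, ht3, ht4⟩ := hstar (v₂ - p) (by linarith)
    exact ht4 (hallfix t (hu₂p.le.trans ht1.le) (by linarith))

end ZK
namespace ZK

lemma sigma_mem {x : ℝ} (hx : x ∈ Icc (0:ℝ) 1) : (1 - x) ∈ Icc (0:ℝ) 1 := by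
  simp only [mem_Icc] at hx ⊢
  constructor <;> linarith

lemma sigma_mapsTo : MapsTo (fun x : ℝ => 1 - x) (Icc (0:ℝ) 1) (Icc (0:ℝ) 1) :=
  fun _ hx => sigma_mem hx

lemma sigma_anti : AntitoneOn (fun x : ℝ => 1 - x) (Icc (0:ℝ) 1) := by
  intro x _ y _ h
  simp only
  linarith

lemma sigma_bijOn : BijOn (fun x : ℝ => 1 - x) (Icc (0:ℝ) 1) (Icc (0:ℝ) 1) := by
  refine ⟨sigma_mapsTo, ?_, ?_⟩
  · intro x _ y _ h
    simp only at h
    linarith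
  · intro y hy
    refine ⟨1 - y, sigma_mem hy, ?_⟩
    simp only
    ring

/-- Reflection of a `C^{1+bv}` diffeomorphism about the midpoint of `[0,1]`. -/
def reflD (φ : C1bvDiffeo) : C1bvDiffeo where
  toFun := fun x => 1 - φ.toFun (1 - x)
  derivFun := fun x => φ.derivFun (1 - x)
  map_zero := by simp [φ.map_one]
  map_one := by simp [φ.map_zero]
  fixes_outside := by
    intro x hx
    have h1 : (1 - x) ∉ Icc (0:ℝ) 1 := by
      simp only [mem_Icc, not_and_or, not_le] at hx ⊢
      rcases hx with h | h
      · right; linarith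
      · left; linarith
    show 1 - φ.toFun (1 - x) = x
    rw [φ.fixes_outside _ h1]; ring
  bijOn := by
    have h1 := (sigma_bijOn.comp φ.bijOn).comp sigma_bijOn
    exact h1
  hasDeriv := by
    intro x hx
    have h1x : (1 - x) ∈ Icc (0:ℝ) 1 := sigma_mem hx
    have hσd : HasDerivWithinAt (fun y : ℝ => 1 - y) (-1) (Icc 0 1) x :=
      (hasDerivWithinAt_id x (Icc 0 1)).const_sub 1
    have hφd := φ.hasDeriv (1 - x) h1x
    have hcomp := hφd.comp x hσd sigma_mapsTo
    have hfin := hcomp.const_sub 1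
    have h2 : -(φ.derivFun (1 - x) * (-1)) = φ.derivFun (1 - x) := by ring
    rw [h2] at hfin
    exact hfin
  derivFun_cont := by
    have hσc : ContinuousOn (fun x : ℝ => 1 - x) (Icc (0:ℝ) 1) :=
      (continuous_const.sub continuous_id).continuousOn
    exact φ.derivFun_cont.comp hσc sigma_mapsTo
  derivFun_pos := fun x hx => φ.derivFun_pos _ (sigma_mem hx)
  logDeriv_bv := by
    have hle := eVariationOn.comp_le_of_antitoneOn (fun y => Real.log (φ.derivFun y))
      (fun x : ℝ => 1 - x) sigma_anti sigma_mapsTo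
    exact ne_top_of_le_ne_top φ.logDeriv_bv hle

variable {d : ℕ}

/-- Reflection of a whole action. -/
def reflA (ρ : ZdAction1bv d) : ZdAction1bv d where
  elt a := reflD (ρ.elt a)
  elt_add a b x := by
    show 1 - (ρ.elt (a+b)).toFun (1 - x)
      = 1 - (ρ.elt a).toFun (1 - (1 - (ρ.elt b).toFun (1 - x)))
    rw [sub_sub_cancel, ρ.elt_add]
  elt_zero x := by
    show 1 - (ρ.elt 0).toFun (1 - x) = x
    rw [ρ.elt_zero]; ring

variable {ρ : ZdAction1bv d}

/-- The main inclusion of fixed-point sets. -/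
lemma subset_fix
    (hnp : ∀ p : ℝ, 0 < p → p < 1 →
      ¬ ((∀ e : Fin d → ℤ, F ρ e p = p) ∧ (∀ e : Fin d → ℤ, D ρ e p = 1)))
    (a b : Fin d → ℤ) (ha : ∃ w, F ρ a w ≠ w) :
    ∀ x, F ρ a x = x → F ρ b x = x := by
  have hint : ∀ (g : Fin d → ℤ) (t : ℝ), F ρ g t ≠ t → 0 < t ∧ t < 1 := by
    intro g t hgt
    rcases lt_trichotomy t 0 with h | h | h
    · exact absurd ((ρ.elt g).fixes_outside t (fun hh => absurd hh.1 (not_le.2 h))) hgt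
    · exact absurd (h ▸ (ρ.elt g).map_zero) hgt
    · rcases lt_trichotomy t 1 with h' | h' | h'
      · exact ⟨h, h'⟩
      · exact absurd (h' ▸ (ρ.elt g).map_one) hgt
      · exact absurd ((ρ.elt g).fixes_outside t (fun hh => absurd hh.2 (not_le.2 h'))) hgt
  intro x hax
  by_contra hbx
  obtain ⟨hx0, hx1⟩ := hint b x hbx
  obtain ⟨w, hw⟩ := ha
  obtain ⟨hw0, hw1⟩ := hint a w hw
  have hwx : w ≠ x := fun h => hw (by rw [h]; exact hax)
  rcases lt_or_gt_of_ne hwx with hlt | hgt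
  · -- w < x : work with the reflected action
    have hnp' : ∀ p : ℝ, 0 < p → p < 1 →
        ¬ ((∀ e : Fin d → ℤ, F (reflA ρ) e p = p) ∧
           (∀ e : Fin d → ℤ, D (reflA ρ) e p = 1)) := by
      rintro p h0 h1 ⟨hfix, hder⟩
      refine hnp (1 - p) (by linarith) (by linarith) ⟨?_, ?_⟩
      · intro e
        have h2 : (1 : ℝ) - F ρ e (1 - p) = p := hfix e
        linarith
      · intro e
        exact hder e
    have hax' : F (reflA ρ) a (1 - x) = 1 - x := by
      show 1 - F ρ a (1 - (1 - x)) = 1 - x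
      rw [sub_sub_cancel, hax]
    have hbx' : F (reflA ρ) b (1 - x) ≠ 1 - x := by
      intro h
      apply hbx
      have h3 : (1 : ℝ) - F ρ b (1 - (1 - x)) = 1 - x := h
      rw [sub_sub_cancel] at h3
      linarith
    have hres := onesided (ρ := reflA ρ) hnp' a b (x := 1 - x)
      (by linarith) (by linarith) hax' hbx' (1 - w) (by linarith) (by linarith)
    apply hw
    have h3 : (1 : ℝ) - F ρ a (1 - (1 - w)) = 1 - w := hres
    rw [sub_sub_cancel] at h3
    linarith
  · exact hw (onesided hnp a b hx0 hx1 hax hbx w hgt.le hw1.le)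

end ZK
/-- If a `C^{1+bv}` action of `ℤᵈ` on `[0,1]` has no parabolic global fixed point in the open
interval `(0,1)`, then all the elements of its image group other than the identity have
exactly the same set of fixed points. -/
theorem same_fixed_points_of_no_interior_parabolic_global_fixed_point (d : ℕ)
    (ρ : ZdAction1bv d)
    (hnp : ∀ p ∈ Ioo (0:ℝ) 1,
      ¬ ((∀ a : Fin d → ℤ, (ρ.elt a).toFun p = p) ∧
         (∀ a : Fin d → ℤ, (ρ.elt a).derivFun p = 1))) :
    ∀ a b : Fin d → ℤ,
      (∃ x : ℝ, (ρ.elt a).toFun x ≠ x) → (∃ x : ℝ, (ρ.elt b).toFun x ≠ x) →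
      {x : ℝ | (ρ.elt a).toFun x = x} = {x : ℝ | (ρ.elt b).toFun x = x} := by
  intro a b ha hb
  have hnp' : ∀ p : ℝ, 0 < p → p < 1 →
      ¬ ((∀ e : Fin d → ℤ, ZK.F ρ e p = p) ∧ (∀ e : Fin d → ℤ, ZK.D ρ e p = 1)) :=
    fun p h0 h1 h => hnp p ⟨h0, h1⟩ h
  ext x
  simp only [mem_setOf_eq]
  constructor
  · intro h
    exact ZK.subset_fix hnp' a b ha x h
  · intro h
    exact ZK.subset_fix hnp' b a hb x h
end
end
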